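/- arXiv:1709.08696 — 7 statements merged into one kernel-verified Lean document; each statement's English description precedes it below -/
import Mathlib

section
/- If L ⊆ Σ* is an antichain, then its Kleene star L* (the set of all finite concatenations of words of L) is a quasiantichain. -/
open Filter
open scoped ENNReal

/-- The lexicographic partial order on words induced by a strict order `r` on letters:
`ε R w` for all `w`, and `(x :: w) R (y :: w')` iff `r x y`, or `x = y` and `w R w'`. -/
inductive LexR {α : Type*} (r : α → α → Prop) : List α → List α → Prop
  | nil (w : List α) : LexR r [] w
  | head {x y : α} (w w' : List α) (h : r x y) : LexR r (x :: w) (y :: w')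
  | cons (x : α) {w w' : List α} (h : LexR r w w') : LexR r (x :: w) (x :: w')

/-- Two words are comparable (`u ∼ v`) if `u R v` or `v R u`. -/
def LexComp {α : Type*} (r : α → α → Prop) (u v : List α) : Prop :=
  LexR r u v ∨ LexR r v u

/-- A language is an antichain if any two distinct words of it are incomparable. -/
def IsAntichainLang {α : Type*} (r : α → α → Prop) (L : Set (List α)) : Prop :=
  ∀ u ∈ L, ∀ v ∈ L, u ≠ v → ¬ LexComp r u v

/-- A language is a quasiantichain if any two words of it are incomparable or one is a
prefix of the other. -/
def IsQuasiantichainLang {α : Type*} (r : α → α → Prop) (L : Set (List α)) : Prop :=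
  ∀ u ∈ L, ∀ v ∈ L, u <+: v ∨ v <+: u ∨ ¬ LexComp r u v

/-- A language is a chain if any two words of it are comparable. -/
def IsChainLang {α : Type*} (r : α → α → Prop) (L : Set (List α)) : Prop :=
  ∀ u ∈ L, ∀ v ∈ L, LexComp r u v

/-- `|L|_{=n}`: the number of words of length `n` in `L`. -/
noncomputable def countLen {α : Type*} (L : Set (List α)) (n : ℕ) : ℕ :=
  {w ∈ L | w.length = n}.ncard

/-- `L` has exponential growth of order `ε` if `limsup |L|_{=n} / 2^(εn) > 0`. -/
def ExpGrowthOrder {α : Type*} (L : Set (List α)) (ε : ℝ) : Prop :=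
  0 < Filter.limsup (fun n : ℕ => (countLen L n : ℝ≥0∞) / (2 : ℝ≥0∞) ^ (ε * n)) Filter.atTop

/-- `L` has exponential growth if it has exponential growth of some order `ε > 0`. -/
def ExpGrowth {α : Type*} (L : Set (List α)) : Prop :=
  ∃ ε : ℝ, 0 < ε ∧ ExpGrowthOrder L ε

/-- `L` has polynomial growth if `limsup |L|_{=n} / n^k < ∞` for some `k`. -/
def PolyGrowth {α : Type*} (L : Set (List α)) : Prop :=
  ∃ k : ℕ, Filter.limsup (fun n : ℕ => (countLen L n : ℝ≥0∞) / (n : ℝ≥0∞) ^ k) Filter.atTop < ⊤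

/-- `L` is an antichain family if the set of words of length `n` in `L` is an antichain
for every `n`. -/
def AntichainFamily {α : Type*} (r : α → α → Prop) (L : Set (List α)) : Prop :=
  ∀ n : ℕ, IsAntichainLang r {w ∈ L | w.length = n}

/-- `L` has exponential antichain growth if some subset of `L` is an antichain family
with exponential growth. -/
def ExpAntichainGrowth {α : Type*} (r : α → α → Prop) (L : Set (List α)) : Prop :=
  ∃ L' ⊆ L, AntichainFamily r L' ∧ ExpGrowth L'

/-- `L` has polynomial antichain growth if every antichain family contained in `L`
has polynomial growth. -/
def PolyAntichainGrowth {α : Type*} (r : α → α → Prop) (L : Set (List α)) : Prop :=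
  ∀ L' ⊆ L, AntichainFamily r L' → PolyGrowth L'

/-- The Kleene star of a language: all finite concatenations of words of `L`. -/
def KStarLang {α : Type*} (L : Set (List α)) : Set (List α) :=
  {w | ∃ S : List (List α), (∀ u ∈ S, u ∈ L) ∧ w = S.flatten}


private lemma lexA {α : Type*} {r : α → α → Prop} :
    ∀ {u v : List α}, ¬ LexComp r u v → ∀ x y, ¬ LexComp r (u ++ x) (v ++ y) := by
  intro u
  induction u with
  | nil => intro v h; exact absurd (Or.inl (LexR.nil v)) h
  | cons a u' ih =>
    intro v h x y
    cases v with
    | nil => exact absurd (Or.inr (LexR.nil _)) h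
    | cons b v' =>
      by_cases hab : a = b
      · subst hab
        have h' : ¬ LexComp r u' v' := fun hc =>
          h (hc.elim (fun g => Or.inl (LexR.cons a g)) (fun g => Or.inr (LexR.cons a g)))
        intro hc
        apply ih h' x y
        rcases hc with hc | hc
        · cases hc with
          | head _ _ hr => exact absurd (Or.inl (LexR.head u' v' hr)) h
          | cons _ g => exact Or.inl g
        · cases hc with
          | head _ _ hr => exact absurd (Or.inr (LexR.head v' u' hr)) h
          | cons _ g => exact Or.inr g
      · intro hc
        rcases hc with hc | hc
        · cases hc with
          | head _ _ hr => exact h (Or.inl (LexR.head u' v' hr))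
          | cons _ g => exact hab rfl
        · cases hc with
          | head _ _ hr => exact h (Or.inr (LexR.head v' u' hr))
          | cons _ g => exact hab rfl

private lemma lexB {α : Type*} {r : α → α → Prop} (hirr : ∀ a, ¬ r a a) :
    ∀ (s : List α) {u v : List α}, ¬ LexComp r u v → ¬ LexComp r (s ++ u) (s ++ v) := by
  intro s
  induction s with
  | nil => intro u v h; simpa using h
  | cons a s' ih =>
    intro u v h hc
    apply ih h
    rcases hc with hc | hc
    · cases hc with
      | head _ _ hr => exact absurd hr (hirr a)
      | cons _ g => exact Or.inl g
    · cases hc with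
      | head _ _ hr => exact absurd hr (hirr a)
      | cons _ g => exact Or.inr g

private lemma key {α : Type*} {r : α → α → Prop} (hirr : ∀ a, ¬ r a a)
    {L : Set (List α)} (hL : IsAntichainLang r L) :
    ∀ n (S T : List (List α)), S.length + T.length ≤ n →
      (∀ w ∈ S, w ∈ L) → (∀ w ∈ T, w ∈ L) →
      S.flatten <+: T.flatten ∨ T.flatten <+: S.flatten ∨ ¬ LexComp r S.flatten T.flatten := by
  intro n
  induction n with
  | zero =>
    intro S T hlen _ _
    have hS : S = [] := List.length_eq_zero_iff.mp (Nat.le_zero.mp (le_trans (Nat.le_add_right _ _) hlen))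
    subst hS
    exact Or.inl (List.nil_prefix)
  | succ n ih =>
    intro S T hlen hS hT
    cases S with
    | nil => exact Or.inl (List.nil_prefix)
    | cons s S' =>
      cases T with
      | nil => exact Or.inr (Or.inl (List.nil_prefix))
      | cons t T' =>
        rcases eq_or_ne s [] with rfl | hs
        · have := ih S' (t :: T') (by simp at hlen ⊢; omega) 
            (fun w hw => hS w (List.mem_cons_of_mem _ hw)) hT
          simpa using this
        · rcases eq_or_ne t [] with rfl | ht
          · have := ih (s :: S') T' (by simp at hlen ⊢; omega) 
              hS (fun w hw => hT w (List.mem_cons_of_mem _ hw))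
            simpa using this
          · by_cases hst : s = t
            · subst hst
              have := ih S' T' (by simp at hlen ⊢; omega)
                (fun w hw => hS w (List.mem_cons_of_mem _ hw))
                (fun w hw => hT w (List.mem_cons_of_mem _ hw))
              simp only [List.flatten_cons]
              rcases this with h | h | h
              · obtain ⟨c, hc⟩ := h
                exact Or.inl ⟨c, by simp [← hc]⟩
              · obtain ⟨c, hc⟩ := h
                exact Or.inr (Or.inl ⟨c, by simp [← hc]⟩)
              · exact Or.inr (Or.inr (lexB hirr s h))
            · have hsL := hS s List.mem_cons_self
              have htL := hT t List.mem_cons_self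
              have hnc := hL s hsL t htL hst
              simp only [List.flatten_cons]
              exact Or.inr (Or.inr (lexA hnc _ _))

/-- Kleene star: if `L` is an antichain then `L*` is a quasiantichain. -/
theorem kleene_star_quasiantichain {Sigma : Type*} [Fintype Sigma] [PartialOrder Sigma]
    (L : Set (List Sigma)) (hL : IsAntichainLang (· < ·) L) :
    IsQuasiantichainLang (· < ·) (KStarLang L) := by
  intro u hu v hv
  obtain ⟨S, hS, rfl⟩ := hu
  obtain ⟨T, hT, rfl⟩ := hv
  exact key (fun a => lt_irrefl a) hL (S.length + T.length) S T le_rfl hS hT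
end

section
/- Let Σ = {a, b, 0, 1} be partially ordered so that the only strict relation is a < b (all other pairs of distinct letters are incomparable). Then the language L = ⋃_{n≥1} a^{n−1} b {0,1}^n (where {0,1}^n denotes all words of length n over {0,1}) is context-free, has exponential antichain growth, and every antichain contained in L is finite. -/
open Filter
open scoped ENNReal

/-- The partial order on the four-letter alphabet `{a, b, 0, 1}` (encoded as
`Fin 4` with `a = 0`, `b = 1`, `0 = 2`, `1 = 3`): the only strict relation is `a < b`. -/
def abRel (x y : Fin 4) : Prop := x = 0 ∧ y = 1

/-- The language `⋃_{n ≥ 1} a^{n-1} b {0,1}^n`. -/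
def specialLang : Set (List (Fin 4)) :=
  {w | ∃ n : ℕ, 1 ≤ n ∧ ∃ v : List (Fin 4), v.length = n ∧ (∀ x ∈ v, x = 2 ∨ x = 3) ∧
    w = List.replicate (n - 1) 0 ++ 1 :: v}


open ContextFreeGrammar

attribute [local instance] Classical.propDecidable

abbrev Sym4 := Symbol (Fin 4) (Fin 2)

def rS : ContextFreeRule (Fin 4) (Fin 2) := ⟨0, [.terminal 0, .nonterminal 0, .nonterminal 1]⟩
def rB : ContextFreeRule (Fin 4) (Fin 2) := ⟨0, [.terminal 1, .nonterminal 1]⟩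
def r0 : ContextFreeRule (Fin 4) (Fin 2) := ⟨1, [.terminal 2]⟩
def r1 : ContextFreeRule (Fin 4) (Fin 2) := ⟨1, [.terminal 3]⟩

@[reducible] noncomputable def myG : ContextFreeGrammar (Fin 4) := ⟨Fin 2, 0, {rS, rB, r0, r1}⟩

def GoodS (x : Sym4) : Prop := x = .nonterminal 1 ∨ x = .terminal 2 ∨ x = .terminal 3

def MyInv (s : List Sym4) : Prop :=
  (∃ k t, (∀ x ∈ t, GoodS x) ∧ t.length = k ∧
    s = List.replicate k (.terminal 0) ++ .nonterminal 0 :: t) ∨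
  (∃ k t, (∀ x ∈ t, GoodS x) ∧ t.length = k + 1 ∧
    s = List.replicate k (.terminal 0) ++ .terminal 1 :: t)

lemma split_mem {α : Type*} {c : α} :
    ∀ (u p q v : List α), p ++ c :: q = u ++ v → c ∉ u →
      ∃ w, p = u ++ w ∧ v = w ++ c :: q := by
  intro u
  induction u with
  | nil => intro p q v h _; exact ⟨p, by simp, by simpa using h.symm⟩
  | cons a u ih =>
    intro p q v h hc
    cases p with
    | nil =>
      simp at h
      exact absurd (h.1 ▸ (List.mem_cons_self : a ∈ a :: u)) hc
    | cons b p' =>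
      simp at h
      obtain ⟨rfl, h2⟩ := h
      obtain ⟨w, hw1, hw2⟩ := ih p' q v h2 (fun hm => hc (List.mem_cons_of_mem _ hm))
      exact ⟨w, by simp [hw1], hw2⟩

lemma uniq_mid {α : Type*} {c : α} :
    ∀ (u p q v : List α), p ++ c :: q = u ++ c :: v → c ∉ u → c ∉ v →
      p = u ∧ q = v := by
  intro u
  induction u with
  | nil =>
    intro p q v h _ hv
    cases p with
    | nil => simpa using h
    | cons b p' =>
      simp at h
      refine absurd ?_ hv
      rw [← h.2]
      exact List.mem_append_right p' (List.mem_cons_self : _ ∈ _ :: q)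
  | cons a u ih =>
    intro p q v h hc hv
    cases p with
    | nil =>
      simp at h
      exact absurd (h.1 ▸ (List.mem_cons_self : a ∈ a :: u)) hc
    | cons b p' =>
      simp at h
      obtain ⟨rfl, h2⟩ := h
      obtain ⟨h3, h4⟩ := ih p' q v h2 (fun hm => hc (List.mem_cons_of_mem _ hm)) hv
      exact ⟨by simp [h3], h4⟩

lemma nt_notmem_rep (x : Fin 2) (k : ℕ) :
    Symbol.nonterminal x ∉ List.replicate k (Symbol.terminal (0 : Fin 4)) := by
  simp [List.mem_replicate]

lemma nt0_notmem_good {t : List Sym4} (hgood : ∀ x ∈ t, GoodS x) :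
    Symbol.nonterminal (0 : Fin 2) ∉ t := by
  intro hm
  rcases hgood _ hm with h | h | h <;> simp_all [GoodS]

lemma produces_inv {s s' : List Sym4} (hs : MyInv s) (h : myG.Produces s s') : MyInv s' := by
  obtain ⟨r, hr, hrw⟩ := h
  obtain ⟨p, q, hu, hv⟩ := hrw.exists_parts
  have hr' : r = rS ∨ r = rB ∨ r = r0 ∨ r = r1 := by
    simpa [myG] using hr
  rcases hr' with rfl | rfl | rfl | rfl
  · -- rS : S → a S B
    simp only [rS, List.append_assoc, List.singleton_append] at hu hv
    rcases hs with ⟨k, t, hgood, hlen, hform⟩ | ⟨k, t, hgood, hlen, hform⟩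
    · rw [hform] at hu
      obtain ⟨hp, hq⟩ := uniq_mid _ _ _ _ hu.symm (nt_notmem_rep 0 k) (nt0_notmem_good hgood)
      rw [hp, hq] at hv
      left
      refine ⟨k + 1, Symbol.nonterminal 1 :: t, ?_, by simp [hlen], ?_⟩
      · intro x hx
        rcases List.mem_cons.1 hx with rfl | hx'
        · exact Or.inl rfl
        · exact hgood _ hx' 
      · rw [hv, List.replicate_succ']
        simp
    · exfalso
      have : Symbol.nonterminal (0 : Fin 2) ∈ s := by
        rw [hu]; exact List.mem_append_right _ (List.mem_cons_self)
      rw [hform] at this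
      rcases List.mem_append.1 this with h' | h'
      · exact nt_notmem_rep 0 k h'
      · rcases List.mem_cons.1 h' with h'' | h''
        · simp at h''
        · exact nt0_notmem_good hgood h''
  · -- rB : S → b B
    simp only [rB, List.append_assoc, List.singleton_append] at hu hv
    rcases hs with ⟨k, t, hgood, hlen, hform⟩ | ⟨k, t, hgood, hlen, hform⟩
    · rw [hform] at hu
      obtain ⟨hp, hq⟩ := uniq_mid _ _ _ _ hu.symm (nt_notmem_rep 0 k) (nt0_notmem_good hgood)
      rw [hp, hq] at hv
      right
      refine ⟨k, Symbol.nonterminal 1 :: t, ?_, by simp [hlen], by rw [hv]; simp⟩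
      intro x hx
      rcases List.mem_cons.1 hx with rfl | hx'
      · exact Or.inl rfl
      · exact hgood _ hx' 
    · exfalso
      have : Symbol.nonterminal (0 : Fin 2) ∈ s := by
        rw [hu]; exact List.mem_append_right _ (List.mem_cons_self)
      rw [hform] at this
      rcases List.mem_append.1 this with h' | h'
      · exact nt_notmem_rep 0 k h'
      · rcases List.mem_cons.1 h' with h'' | h''
        · simp at h''
        · exact nt0_notmem_good hgood h''
  · -- r0 : B → 0
    simp only [r0, List.append_assoc, List.singleton_append] at hu hv
    rcases hs with ⟨k, t, hgood, hlen, hform⟩ | ⟨k, t, hgood, hlen, hform⟩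
    · rw [hform] at hu
      have hsplit : p ++ Symbol.nonterminal (1:Fin 2) :: q =
          (List.replicate k (Symbol.terminal (0:Fin 4)) ++ [Symbol.nonterminal (0:Fin 2)]) ++ t := by
        rw [← hu]; simp
      obtain ⟨w, hw1, hw2⟩ := split_mem _ _ _ _ hsplit (by
        intro hm
        rcases List.mem_append.1 hm with h' | h'
        · exact nt_notmem_rep 1 k h'
        · simp at h')
      rw [hw1] at hv
      left
      refine ⟨k, w ++ Symbol.terminal 2 :: q, ?_, ?_, ?_⟩
      · intro x hx
        rcases List.mem_append.1 hx with h' | h'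
        · exact hgood _ (hw2 ▸ List.mem_append_left _ h')
        · rcases List.mem_cons.1 h' with rfl | h''
          · right; left; rfl
          · exact hgood _ (hw2 ▸ List.mem_append_right _ (List.mem_cons_of_mem _ h''))
      · have := hlen
        rw [hw2] at this
        simpa using this
      · rw [hv]; simp
    · rw [hform] at hu
      have hsplit : p ++ Symbol.nonterminal (1:Fin 2) :: q =
          (List.replicate k (Symbol.terminal (0:Fin 4)) ++ [Symbol.terminal (1:Fin 4)]) ++ t := by
        rw [← hu]; simp
      obtain ⟨w, hw1, hw2⟩ := split_mem _ _ _ _ hsplit (by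
        intro hm
        rcases List.mem_append.1 hm with h' | h'
        · exact nt_notmem_rep 1 k h'
        · simp at h')
      rw [hw1] at hv
      right
      refine ⟨k, w ++ Symbol.terminal 2 :: q, ?_, ?_, ?_⟩
      · intro x hx
        rcases List.mem_append.1 hx with h' | h'
        · exact hgood _ (hw2 ▸ List.mem_append_left _ h')
        · rcases List.mem_cons.1 h' with rfl | h''
          · right; left; rfl
          · exact hgood _ (hw2 ▸ List.mem_append_right _ (List.mem_cons_of_mem _ h''))
      · have := hlen
        rw [hw2] at this
        simpa using this
      · rw [hv]; simp
  · -- r1 : B → 1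
    simp only [r1, List.append_assoc, List.singleton_append] at hu hv
    rcases hs with ⟨k, t, hgood, hlen, hform⟩ | ⟨k, t, hgood, hlen, hform⟩
    · rw [hform] at hu
      have hsplit : p ++ Symbol.nonterminal (1:Fin 2) :: q =
          (List.replicate k (Symbol.terminal (0:Fin 4)) ++ [Symbol.nonterminal (0:Fin 2)]) ++ t := by
        rw [← hu]; simp
      obtain ⟨w, hw1, hw2⟩ := split_mem _ _ _ _ hsplit (by
        intro hm
        rcases List.mem_append.1 hm with h' | h'
        · exact nt_notmem_rep 1 k h'
        · simp at h')
      rw [hw1] at hv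
      left
      refine ⟨k, w ++ Symbol.terminal 3 :: q, ?_, ?_, ?_⟩
      · intro x hx
        rcases List.mem_append.1 hx with h' | h'
        · exact hgood _ (hw2 ▸ List.mem_append_left _ h')
        · rcases List.mem_cons.1 h' with rfl | h''
          · right; right; rfl
          · exact hgood _ (hw2 ▸ List.mem_append_right _ (List.mem_cons_of_mem _ h''))
      · have := hlen
        rw [hw2] at this
        simpa using this
      · rw [hv]; simp
    · rw [hform] at hu
      have hsplit : p ++ Symbol.nonterminal (1:Fin 2) :: q =
          (List.replicate k (Symbol.terminal (0:Fin 4)) ++ [Symbol.terminal (1:Fin 4)]) ++ t := by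
        rw [← hu]; simp
      obtain ⟨w, hw1, hw2⟩ := split_mem _ _ _ _ hsplit (by
        intro hm
        rcases List.mem_append.1 hm with h' | h'
        · exact nt_notmem_rep 1 k h'
        · simp at h')
      rw [hw1] at hv
      right
      refine ⟨k, w ++ Symbol.terminal 3 :: q, ?_, ?_, ?_⟩
      · intro x hx
        rcases List.mem_append.1 hx with h' | h'
        · exact hgood _ (hw2 ▸ List.mem_append_left _ h')
        · rcases List.mem_cons.1 h' with rfl | h''
          · right; right; rfl
          · exact hgood _ (hw2 ▸ List.mem_append_right _ (List.mem_cons_of_mem _ h''))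
      · have := hlen
        rw [hw2] at this
        simpa using this
      · rw [hv]; simp


lemma derives_inv {s s' : List Sym4} (h : myG.Derives s s') (hs : MyInv s) : MyInv s' := by
  induction h with
  | refl => exact hs
  | tail _ hp ih => exact produces_inv ih hp

lemma der1 (k : ℕ) : myG.Derives [Symbol.nonterminal 0]
    (List.replicate k (Symbol.terminal 0) ++
      Symbol.nonterminal 0 :: List.replicate k (Symbol.nonterminal 1)) := by
  induction k with
  | zero => simpa using ContextFreeGrammar.Derives.refl _
  | succ k ih =>
    refine ih.trans_produces ⟨rS, by simp [myG], ?_⟩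
    have h := ContextFreeRule.rewrites_of_exists_parts rS
      (List.replicate k (Symbol.terminal 0)) (List.replicate k (Symbol.nonterminal 1))
    have h1 : List.replicate k (Symbol.terminal (0:Fin 4)) ++ [Symbol.nonterminal rS.input]
        ++ List.replicate k (Symbol.nonterminal (1:Fin 2)) =
        List.replicate k (Symbol.terminal 0) ++
          Symbol.nonterminal 0 :: List.replicate k (Symbol.nonterminal 1) := by
      simp [rS]
    have h2 : List.replicate k (Symbol.terminal (0:Fin 4)) ++ rS.output
        ++ List.replicate k (Symbol.nonterminal (1:Fin 2)) =
        List.replicate (k+1) (Symbol.terminal 0) ++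
          Symbol.nonterminal 0 :: List.replicate (k+1) (Symbol.nonterminal 1) := by
      simp [rS, List.replicate_succ', List.replicate_succ]
      exact (List.replicate_succ ..).symm.trans (List.replicate_succ' ..)
    rw [h1, h2] at h
    exact h

lemma der2 (k : ℕ) : myG.Derives [Symbol.nonterminal 0]
    (List.replicate k (Symbol.terminal 0) ++
      Symbol.terminal 1 :: List.replicate (k+1) (Symbol.nonterminal 1)) := by
  refine (der1 k).trans_produces ⟨rB, by simp [myG], ?_⟩
  have h := ContextFreeRule.rewrites_of_exists_parts rB
    (List.replicate k (Symbol.terminal 0)) (List.replicate k (Symbol.nonterminal 1))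
  have h1 : List.replicate k (Symbol.terminal (0:Fin 4)) ++ [Symbol.nonterminal rB.input]
      ++ List.replicate k (Symbol.nonterminal (1:Fin 2)) =
      List.replicate k (Symbol.terminal 0) ++
        Symbol.nonterminal 0 :: List.replicate k (Symbol.nonterminal 1) := by
    simp [rB]
  have h2 : List.replicate k (Symbol.terminal (0:Fin 4)) ++ rB.output
      ++ List.replicate k (Symbol.nonterminal (1:Fin 2)) =
      List.replicate k (Symbol.terminal 0) ++
        Symbol.terminal 1 :: List.replicate (k+1) (Symbol.nonterminal 1) := by
    simp [rB, List.replicate_succ]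
  rw [h1, h2] at h
  exact h

lemma der3 : ∀ v : List (Fin 4), (∀ y ∈ v, y = 2 ∨ y = 3) →
    myG.Derives (List.replicate v.length (Symbol.nonterminal 1)) (v.map Symbol.terminal) := by
  intro v
  induction v with
  | nil => intro _; simpa using ContextFreeGrammar.Derives.refl _
  | cons y v ih =>
    intro hy
    have step : myG.Produces
        (Symbol.nonterminal 1 :: List.replicate v.length (Symbol.nonterminal 1))
        (Symbol.terminal y :: List.replicate v.length (Symbol.nonterminal 1)) := by
      rcases hy y (List.mem_cons_self) with rfl | rfl
      · exact ⟨r0, by simp [myG], ContextFreeRule.Rewrites.head _⟩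
      · exact ⟨r1, by simp [myG], ContextFreeRule.Rewrites.head _⟩
    have rest := (ih (fun z hz => hy z (List.mem_cons_of_mem _ hz))).append_left
      [Symbol.terminal y]
    simp only [List.length_cons, List.replicate_succ, List.map_cons]
    exact step.trans_derives (by simpa using rest)

lemma extract_bits : ∀ t : List Sym4,
    (∀ x ∈ t, x = Symbol.terminal 2 ∨ x = Symbol.terminal 3) →
    ∃ v : List (Fin 4), (∀ y ∈ v, y = 2 ∨ y = 3) ∧ t = v.map Symbol.terminal := by
  intro t
  induction t with
  | nil => exact fun _ => ⟨[], by simp, by simp⟩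
  | cons x t ih =>
    intro hx
    obtain ⟨v, hv1, hv2⟩ := ih (fun z hz => hx z (List.mem_cons_of_mem _ hz))
    rcases hx x (List.mem_cons_self) with rfl | rfl
    · exact ⟨2 :: v, fun y hy => (List.mem_cons.1 hy).elim Or.inl (hv1 y), by simp [hv2]⟩
    · exact ⟨3 :: v, fun y hy => (List.mem_cons.1 hy).elim Or.inr (hv1 y), by simp [hv2]⟩

lemma myG_lang : myG.language = specialLang := by
  ext w
  constructor
  · intro hw
    have hinv : MyInv (w.map Symbol.terminal) := by
      refine derives_inv hw ?_
      left
      exact ⟨0, [], by simp, by simp, by simp⟩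
    rcases hinv with ⟨k, t, hgood, hlen, hform⟩ | ⟨k, t, hgood, hlen, hform⟩
    · exfalso
      have : Symbol.nonterminal (0:Fin 2) ∈ w.map Symbol.terminal := by
        rw [hform]; exact List.mem_append_right _ (List.mem_cons_self)
      rcases List.mem_map.1 this with ⟨y, _, hy⟩
      simp at hy
    · have hterms : ∀ x ∈ t, x = Symbol.terminal 2 ∨ x = Symbol.terminal 3 := by
        intro x hxt
        have hxw : x ∈ w.map Symbol.terminal := by
          rw [hform]
          exact List.mem_append_right _ (List.mem_cons_of_mem _ hxt)
        rcases List.mem_map.1 hxw with ⟨y, _, rfl⟩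
        rcases hgood _ hxt with h | h | h
        · simp at h
        · left; exact h
        · right; exact h
      obtain ⟨v, hv1, rfl⟩ := extract_bits t hterms
      have : w.map (Symbol.terminal : Fin 4 → Sym4) =
          (List.replicate k (0:Fin 4) ++ 1 :: v).map (Symbol.terminal : Fin 4 → Sym4) := by
        rw [hform]; simp
      have hw' : w = List.replicate k 0 ++ 1 :: v :=
        List.map_injective_iff.2 (fun a b hab => Symbol.terminal.inj hab) this
      refine ⟨k + 1, by omega, v, ?_, hv1, by simpa using hw'⟩
      simpa using hlen
  · rintro ⟨n, hn, v, hvl, hvg, rfl⟩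
    show myG.Derives _ _
    have d2 := der2 (n - 1)
    have hn1 : n - 1 + 1 = n := by omega
    rw [hn1] at d2
    have d3 := ((der3 v hvg).append_left
      (List.replicate (n-1) (Symbol.terminal 0) ++ [Symbol.terminal 1]))
    rw [hvl] at d3
    refine d2.trans ?_
    simpa using d3

/-! ### Order lemmas -/

lemma lexr_append_left {α : Type*} {r : α → α → Prop} (p : List α) {w w' : List α}
    (h : LexR r w w') : LexR r (p ++ w) (p ++ w') := by
  induction p with
  | nil => exact h
  | cons a p ih => exact LexR.cons a ih

lemma lexr_of_append_left {α : Type*} {r : α → α → Prop} (hirr : ∀ x, ¬ r x x) :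
    ∀ (p : List α) {w w' : List α}, LexR r (p ++ w) (p ++ w') → LexR r w w' := by
  intro p
  induction p with
  | nil => exact fun h => h
  | cons a p ih =>
    intro w w' h
    cases h with
    | head _ _ hr => exact absurd hr (hirr a)
    | cons _ h' => exact ih h'

lemma abRel_irrefl : ∀ x, ¬ abRel x x := by
  rintro x ⟨rfl, h⟩
  exact absurd h (by decide)

lemma bits_eq : ∀ (v v' : List (Fin 4)), (∀ x ∈ v, x = 2 ∨ x = 3) →
    v.length = v'.length → LexR abRel v v' → v = v' := by
  intro v
  induction v with
  | nil =>
    intro v' _ hlen _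
    exact (List.eq_nil_of_length_eq_zero hlen.symm).symm
  | cons x u ih =>
    intro v' hgood hlen h
    cases v' with
    | nil => simp at hlen
    | cons y u' =>
      cases h with
      | head _ _ hr =>
        rcases hgood x (List.mem_cons_self) with rfl | rfl <;>
          · obtain ⟨h1, -⟩ := hr; exact absurd h1 (by decide)
      | cons _ h' =>
        have := ih u' (fun z hz => hgood z (List.mem_cons_of_mem _ hz))
          (by simpa using hlen) h'
        rw [this]

lemma spec_len {n : ℕ} {v : List (Fin 4)} (hn : 1 ≤ n) (hv : v.length = n) :
    (List.replicate (n-1) (0:Fin 4) ++ 1 :: v).length = 2 * n := by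
  simp [hv]
  omega

lemma comparable_of_len_lt {u w : List (Fin 4)} (hu : u ∈ specialLang) (hw : w ∈ specialLang)
    (hlt : u.length < w.length) : LexR abRel w u := by
  obtain ⟨n, hn, v, hvl, hvg, rfl⟩ := hu
  obtain ⟨m, hm, v', hvl', hvg', rfl⟩ := hw
  rw [spec_len hn hvl, spec_len hm hvl'] at hlt
  have hnm : n < m := by omega
  have hm1 : m - 1 = (n - 1) + ((m - n - 1) + 1) := by omega
  rw [hm1, List.replicate_add, List.replicate_succ, List.append_assoc, List.cons_append]
  exact lexr_append_left _ (LexR.head _ _ ⟨rfl, rfl⟩)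

lemma antichain_same_length {L' : Set (List (Fin 4))} (hsub : L' ⊆ specialLang)
    (hac : IsAntichainLang abRel L') {u w : List (Fin 4)} (hu : u ∈ L') (hw : w ∈ L') :
    u.length = w.length := by
  by_contra hne
  rcases Nat.lt_or_ge u.length w.length with hlt | hge
  · exact hac u hu w hw (fun h => hne (h ▸ rfl))
      (Or.inr (comparable_of_len_lt (hsub hu) (hsub hw) hlt))
  · have hlt : w.length < u.length := by omega
    exact hac u hu w hw (fun h => hne (h ▸ rfl))
      (Or.inl (comparable_of_len_lt (hsub hw) (hsub hu) hlt))

lemma spec_antichain_family : AntichainFamily abRel specialLang := by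
  intro n u hu w hw hne hcomp
  obtain ⟨⟨n₁, hn₁, v₁, hvl₁, hvg₁, rfl⟩, hul⟩ := hu
  obtain ⟨⟨n₂, hn₂, v₂, hvl₂, hvg₂, rfl⟩, hwl⟩ := hw
  rw [spec_len hn₁ hvl₁] at hul
  rw [spec_len hn₂ hvl₂] at hwl
  have hn12 : n₁ = n₂ := by omega
  subst hn12
  have hpre : ∀ x : List (Fin 4),
      List.replicate (n₁-1) (0:Fin 4) ++ 1 :: x =
      (List.replicate (n₁-1) (0:Fin 4) ++ [1]) ++ x := by
    intro x; simp
  rw [hpre v₁, hpre v₂] at hcomp hne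
  have hlen : v₁.length = v₂.length := by rw [hvl₁, hvl₂]
  rcases hcomp with h | h
  · have := bits_eq v₁ v₂ hvg₁ hlen (lexr_of_append_left abRel_irrefl _ h)
    exact hne (by rw [this])
  · have := bits_eq v₂ v₁ hvg₂ hlen.symm (lexr_of_append_left abRel_irrefl _ h)
    exact hne (by rw [this])

/-! ### Counting -/

noncomputable def bitWord (m : ℕ) (f : Fin m → Bool) : List (Fin 4) :=
  List.replicate (m-1) 0 ++ 1 :: List.ofFn (fun i => if f i then 3 else 2)

lemma bitWord_injective (m : ℕ) : Function.Injective (bitWord m) := by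
  intro f f' h
  unfold bitWord at h
  have h1 := List.append_cancel_left h
  have h2 := List.ofFn_injective (List.cons_injective h1)
  funext i
  have := congrFun h2 i
  by_cases hf : f i <;> by_cases hf' : f' i <;> simp_all

lemma spec_count (m : ℕ) (hm : 1 ≤ m) : countLen specialLang (2*m) = 2^m := by
  have hset : {w ∈ specialLang | w.length = 2*m} = bitWord m '' Set.univ := by
    ext w
    constructor
    · rintro ⟨⟨n, hn, v, hvl, hvg, rfl⟩, hlen⟩
      rw [spec_len hn hvl] at hlen
      have hnm : n = m := by omega
      subst hnm
      refine ⟨fun i => decide (v.getD i 0 = 3), Set.mem_univ _, ?_⟩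
      unfold bitWord
      congr 1
      congr 1
      apply List.ext_getElem
      · simp [hvl]
      · intro i h1 h2
        simp only [List.getElem_ofFn]
        have hi : i < v.length := h2
        have hgd : v.getD i 0 = v[i] := List.getD_eq_getElem v 0 hi
        rcases hvg v[i] (List.getElem_mem hi) with h3 | h3 <;>
          simp [List.getD, List.getElem?_eq_getElem hi, h3]
    · rintro ⟨f, -, rfl⟩
      constructor
      · refine ⟨m, hm, List.ofFn (fun i => if f i then 3 else 2), by simp, ?_, rfl⟩
        intro y hy
        rcases List.mem_ofFn.1 hy with ⟨i, hi⟩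
        by_cases hf : f i <;> simp [hf] at hi <;> [right; left] <;> exact hi.symm
      · exact spec_len hm (by simp)
  rw [countLen, hset, Set.ncard_image_of_injective _ (bitWord_injective m),
    Set.ncard_univ, Nat.card_eq_fintype_card, Fintype.card_fun]
  simp

lemma spec_expGrowth : ExpGrowth specialLang := by
  refine ⟨1/2, by norm_num, ?_⟩
  unfold ExpGrowthOrder
  have hfreq : ∃ᶠ n : ℕ in Filter.atTop,
      (1 : ℝ≥0∞) ≤ (countLen specialLang n : ℝ≥0∞) / (2 : ℝ≥0∞) ^ ((1/2 : ℝ) * n) := by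
    rw [Filter.frequently_atTop]
    intro a
    refine ⟨2 * max a 1, by omega, ?_⟩
    set m := max a 1 with hm
    have hm1 : 1 ≤ m := le_max_right a 1
    have hcount : countLen specialLang (2*m) = 2^m := spec_count m hm1
    have hpow : (2 : ℝ≥0∞) ^ ((1/2 : ℝ) * (2*m : ℕ)) = (2 : ℝ≥0∞) ^ m := by
      have : ((1:ℝ)/2) * ((2*m : ℕ) : ℝ) = (m : ℕ) := by push_cast; ring
      rw [this, ENNReal.rpow_natCast]
    rw [hcount, hpow]
    have h2 : ((2^m : ℕ) : ℝ≥0∞) = (2:ℝ≥0∞)^m := by push_cast; rfl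
    rw [h2, ENNReal.div_self (pow_ne_zero m (by norm_num)) (ENNReal.pow_ne_top (by norm_num))]
  have hb := Filter.le_limsup_of_frequently_le hfreq
  exact lt_of_lt_of_le zero_lt_one hb

/-- There is a context-free language with exponential antichain growth in which every
antichain is finite. -/
theorem cf_exp_growth_all_antichains_finite :
    Language.IsContextFree (specialLang : Language (Fin 4)) ∧
    ExpAntichainGrowth abRel specialLang ∧
    ∀ L' ⊆ specialLang, IsAntichainLang abRel L' → L'.Finite := by
  refine ⟨⟨myG, myG_lang⟩, ⟨specialLang, le_refl _, spec_antichain_family, spec_expGrowth⟩, ?_⟩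
  intro L' hsub hac
  rcases Set.eq_empty_or_nonempty L' with rfl | ⟨u0, hu0⟩
  · exact Set.finite_empty
  · refine Set.Finite.subset (List.finite_length_eq (Fin 4) u0.length) ?_
    intro w hw
    exact antichain_same_length hsub hac hw hu0
end

section
/- Let L ⊆ Σ* be a quasiantichain with exponential growth. Then there exists an antichain L′ ⊆ L with exponential growth. -/
open Filter
open scoped ENNReal

open Topology

namespace EQCA


variable {Sigma : Type*} [Fintype Sigma]

lemma lvl_fin (L : Set (List Sigma)) (n : ℕ) : {w ∈ L | w.length = n}.Finite :=
  (List.finite_length_eq Sigma n).subset fun _ hw => hw.2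

noncomputable def lvl (L : Set (List Sigma)) (n : ℕ) : Finset (List Sigma) :=
  (lvl_fin L n).toFinset

lemma mem_lvl {L : Set (List Sigma)} {n : ℕ} {w : List Sigma} :
    w ∈ lvl L n ↔ w ∈ L ∧ w.length = n := by simp [lvl]

lemma countLen_eq (L : Set (List Sigma)) (n : ℕ) : countLen L n = (lvl L n).card := by
  rw [countLen, Set.ncard_eq_toFinset_card _ (lvl_fin L n)]; rfl

/-- pairwise prefix-free -/
def PF (A : Finset (List Sigma)) : Prop := ∀ u ∈ A, ∀ v ∈ A, u ≠ v → ¬ u <+: v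

noncomputable def EXT (L : Set (List Sigma)) (u : List Sigma) (m : ℕ) : Finset (List Sigma) :=
  @Finset.filter _ (fun v => u <+: v) (Classical.decPred _) (lvl L m)

lemma mem_EXT {L : Set (List Sigma)} {u w : List Sigma} {m : ℕ} :
    w ∈ EXT L u m ↔ (w ∈ L ∧ w.length = m) ∧ u <+: w := by
  rw [EXT, @Finset.mem_filter _ _ (Classical.decPred _), mem_lvl]

noncomputable def aF (L : Set (List Sigma)) (u : List Sigma) (m : ℕ) : ℝ≥0∞ :=
  ((EXT L u m).card : ℝ≥0∞) / (countLen L m : ℝ≥0∞)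

lemma EXT_subset_lvl (L : Set (List Sigma)) (u : List Sigma) (m : ℕ) :
    EXT L u m ⊆ lvl L m := @Finset.filter_subset _ _ (Classical.decPred _) _

lemma sum_card_EXT_le (L : Set (List Sigma)) (m : ℕ) (U : Finset (List Sigma)) (hPF : PF U) :
    ∑ u ∈ U, (EXT L u m).card ≤ countLen L m := by
  classical
  rw [countLen_eq]
  have hdisj : ∀ u ∈ U, ∀ v ∈ U, u ≠ v → Disjoint (EXT L u m) (EXT L v m) := by
    intro u hu v hv huv
    rw [Finset.disjoint_left]
    intro w hwu hwv
    have h1 : u <+: w := (mem_EXT.mp hwu).2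
    have h2 : v <+: w := (mem_EXT.mp hwv).2
    rcases List.prefix_or_prefix_of_prefix h1 h2 with h | h
    · exact hPF u hu v hv huv h
    · exact hPF v hv u hu (Ne.symm huv) h
  rw [← Finset.card_biUnion hdisj]
  exact Finset.card_le_card (Finset.biUnion_subset.mpr fun u _ => EXT_subset_lvl L u m)

lemma sum_aF_le_one (L : Set (List Sigma)) (m : ℕ) (U : Finset (List Sigma)) (hPF : PF U) :
    ∑ u ∈ U, aF L u m ≤ 1 := by
  have hsum : ∑ u ∈ U, aF L u m
      = (∑ u ∈ U, ((EXT L u m).card : ℝ≥0∞)) / (countLen L m : ℝ≥0∞) := by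
    simp [aF, div_eq_mul_inv, Finset.sum_mul]
  rw [hsum]
  refine ENNReal.div_le_of_le_mul ?_
  rw [one_mul]
  exact_mod_cast sum_card_EXT_le L m U hPF

lemma PF_lvl (L : Set (List Sigma)) (n : ℕ) : PF (lvl L n) := by
  intro u hu v hv huv hpre
  exact huv (hpre.eq_of_length ((mem_lvl.mp hu).2.trans (mem_lvl.mp hv).2.symm))

lemma step_ex [DecidableEq (List Sigma)] (L : Set (List Sigma)) (ε : ℝ) (c : ℝ≥0∞) (N : Set ℕ) (𝒰 : Ultrafilter ℕ)
    (t : List Sigma → ℝ≥0∞) (q : ℕ)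
    (hε : 0 < ε) (hc0 : c ≠ 0) (hct : c ≠ ⊤) (hcq : (2 : ℝ≥0∞)⁻¹ ^ q ≤ c)
    (hcN : ∀ n ∈ N, c * (2 : ℝ≥0∞) ^ (ε * n) ≤ (countLen L n : ℝ≥0∞))
    (hN : N ∈ 𝒰) (hUtop : (𝒰 : Filter ℕ) ≤ atTop)
    (ht : ∀ u : List Sigma, Tendsto (aF L u) 𝒰 (𝓝 (t u)))
    (k B : ℕ) (U : Finset (List Sigma))
    (hUPF : PF U) (hUlen : ∀ w ∈ U, w.length ≤ B)
    (hUm : ∑ u ∈ U, t u ≤ 8⁻¹) :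
    ∃ (n : ℕ) (S : Finset (List Sigma)), B < n ∧ ↑S ⊆ L ∧ (∀ w ∈ S, w.length = n) ∧
      PF (U ∪ S) ∧ (∑ u ∈ S, t u ≤ 2⁻¹ ^ k * 16⁻¹) ∧
      c * (2 : ℝ≥0∞) ^ ((ε/2) * (n:ℝ)) ≤ (S.card : ℝ≥0∞) := by
  classical
  -- Choose the level n via the ultrafilter
  have hA3 : ∀ᶠ m in (𝒰 : Filter ℕ), ∑ u ∈ U, aF L u m < 4⁻¹ := by
    have h := tendsto_finset_sum U (fun u (_ : u ∈ U) => ht u)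
    exact h.eventually_lt_const (lt_of_le_of_lt hUm (by norm_num))
  have hA2 : ∀ᶠ m in (𝒰 : Filter ℕ), B < m := hUtop (eventually_gt_atTop B)
  have hA4 : ∀ᶠ (m : ℕ) in (𝒰 : Filter ℕ), ((k : ℝ) + q + 9) ≤ (ε/2) * (m:ℝ) := by
    refine hUtop ?_
    have h2 : (0:ℝ) < ε/2 := by positivity
    refine eventually_atTop.mpr ⟨⌈((k : ℝ) + q + 9) / (ε/2)⌉₊, fun m hm => ?_⟩
    have hm' : ((k : ℝ) + q + 9) / (ε/2) ≤ m := le_trans (Nat.le_ceil _) (by exact_mod_cast hm)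
    calc ((k : ℝ) + q + 9) = ((k : ℝ) + q + 9) / (ε/2) * (ε/2) := by field_simp
      _ ≤ m * (ε/2) := mul_le_mul_of_nonneg_right hm' h2.le
      _ = (ε/2) * (m:ℝ) := mul_comm _ _
  have hNall : ∀ᶠ m in (𝒰 : Filter ℕ), m ∈ N := hN
  obtain ⟨n, hnN, hnB, hn3, hn4⟩ :
      ∃ n, n ∈ N ∧ B < n ∧ (∑ u ∈ U, aF L u n < 4⁻¹) ∧ ((k : ℝ) + q + 9) ≤ (ε/2) * (n:ℝ) := by
    rcases (((hNall.and hA2).and hA3).and hA4).exists with ⟨n, ⟨⟨h1, h2⟩, h3⟩, h4⟩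
    exact ⟨n, h1, h2, h3, h4⟩

  -- Basic quantities at level n
  set F : ℕ := countLen L n with hFdef
  have hF : c * (2 : ℝ≥0∞) ^ (ε * (n:ℝ)) ≤ (F : ℝ≥0∞) := hcN n hnN
  set D : ℝ≥0∞ := (2 : ℝ≥0∞) ^ ((ε/2) * (n:ℝ)) with hDdef
  have hD0 : D ≠ 0 := (ENNReal.rpow_pos (by norm_num) (by norm_num)).ne'
  have hDt : D ≠ ⊤ := ENNReal.rpow_ne_top_of_nonneg (by positivity) (by norm_num)
  have hDD : D * D = (2 : ℝ≥0∞) ^ (ε * (n:ℝ)) := by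
    rw [hDdef, ← ENNReal.rpow_add _ _ (by norm_num) (by norm_num)]
    ring_nf
  have hDbig : (2 : ℝ≥0∞) ^ (k + q + 9) ≤ D := by
    rw [hDdef, ← ENNReal.rpow_natCast]
    refine ENNReal.rpow_le_rpow_of_exponent_le (by norm_num) ?_
    push_cast
    linarith
  have h2t : (2 : ℝ≥0∞) ≠ ⊤ := by norm_num
  have hq2 : (1 : ℝ≥0∞) ≤ c * 2 ^ q := by
    rw [← ENNReal.inv_pow] at hcq
    calc (1 : ℝ≥0∞) = ((2:ℝ≥0∞) ^ q)⁻¹ * 2 ^ q :=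
          (ENNReal.inv_mul_cancel (pow_ne_zero q two_ne_zero) (ENNReal.pow_ne_top h2t)).symm
      _ ≤ c * 2 ^ q := mul_le_mul_left hcq _
  have hFt : (F : ℝ≥0∞) ≠ ⊤ := ENNReal.natCast_ne_top F
  have hF0 : (F : ℝ≥0∞) ≠ 0 := by
    intro h0
    rw [h0, nonpos_iff_eq_zero, mul_eq_zero] at hF
    rcases hF with h | h
    · exact hc0 h
    · exact (ENNReal.rpow_pos (by norm_num) (by norm_num)).ne' h
  have hd2 : ∀ a b : ℝ≥0∞, a * 2 ≤ b → a ≤ b / 2 := fun a b hab =>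
    (ENNReal.le_div_iff_mul_le (Or.inl two_ne_zero) (Or.inl h2t)).mpr hab
  have key1 : c * D * 2 ^ (k + 7) ≤ (F : ℝ≥0∞) := by
    calc c * D * 2 ^ (k + 7) ≤ c * D * D :=
          mul_le_mul_right (le_trans (pow_le_pow_right₀ (by norm_num) (by omega)) hDbig) _
      _ = c * (2 : ℝ≥0∞) ^ (ε * (n:ℝ)) := by rw [mul_assoc, hDD]
      _ ≤ (F : ℝ≥0∞) := hF
  have hD1 : (1 : ℝ≥0∞) ≤ D := le_trans (one_le_pow_of_one_le' (by norm_num) _) hDbig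
  have key2 : (2 : ℝ≥0∞) ^ (k + 7) ≤ (F : ℝ≥0∞) := by
    calc (2 : ℝ≥0∞) ^ (k + 7) = 1 * 2 ^ (k + 7) := (one_mul _).symm
      _ ≤ (c * 2 ^ q) * 2 ^ (k + 7) := mul_le_mul_left hq2 _
      _ = c * 2 ^ (q + (k + 7)) := by rw [mul_assoc, ← pow_add]
      _ ≤ c * (D * D) := by
          refine mul_le_mul_right ?_ _
          calc (2:ℝ≥0∞) ^ (q + (k + 7)) ≤ 2 ^ (k + q + 9) :=
                pow_le_pow_right₀ (by norm_num) (by omega)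
            _ ≤ D := hDbig
            _ ≤ D * D := le_mul_of_one_le_right' hD1
      _ = c * (2 : ℝ≥0∞) ^ (ε * (n:ℝ)) := by rw [hDD]
      _ ≤ (F : ℝ≥0∞) := hF
  set x := c * D with hxdef
  have hxt : x ≠ ⊤ := ENNReal.mul_ne_top hct hDt
  set s : ℕ := ⌈x.toReal⌉₊ with hsdef
  have hsx : x ≤ (s : ℝ≥0∞) := by
    calc x = ENNReal.ofReal x.toReal := (ENNReal.ofReal_toReal hxt).symm
      _ ≤ (s : ℝ≥0∞) := by
          rw [← ENNReal.ofReal_natCast]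
          exact ENNReal.ofReal_le_ofReal (Nat.le_ceil _)
  have hsx1 : (s : ℝ≥0∞) ≤ x + 1 := by
    have h0 : (0:ℝ) ≤ x.toReal := ENNReal.toReal_nonneg
    calc (s : ℝ≥0∞) = ENNReal.ofReal (s : ℝ) := by rw [ENNReal.ofReal_natCast]
      _ ≤ ENNReal.ofReal (x.toReal + 1) := ENNReal.ofReal_le_ofReal (Nat.ceil_lt_add_one h0).le
      _ = x + 1 := by
          rw [ENNReal.ofReal_add h0 zero_le_one, ENNReal.ofReal_toReal hxt, ENNReal.ofReal_one]
  have key : (x + 1) * 2 ^ (k + 6) ≤ (F : ℝ≥0∞) := by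
    have h1 : x * 2 ^ (k + 6) ≤ (F : ℝ≥0∞) / 2 := by
      refine hd2 _ _ ?_
      calc x * 2 ^ (k + 6) * 2 = x * 2 ^ (k + 7) := by rw [mul_assoc, ← pow_succ]
        _ ≤ (F : ℝ≥0∞) := key1
    have h1' : (2:ℝ≥0∞) ^ (k + 6) ≤ (F : ℝ≥0∞) / 2 := by
      refine hd2 _ _ ?_
      calc (2:ℝ≥0∞) ^ (k + 6) * 2 = 2 ^ (k + 7) := by rw [← pow_succ]
        _ ≤ (F : ℝ≥0∞) := key2
    calc (x + 1) * 2 ^ (k + 6) = x * 2 ^ (k + 6) + 2 ^ (k + 6) := by rw [add_mul, one_mul]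
      _ ≤ (F : ℝ≥0∞) / 2 + (F : ℝ≥0∞) / 2 := add_le_add h1 h1'
      _ = (F : ℝ≥0∞) := ENNReal.add_halves _

  -- the level set and the bad subsets
  set lvlF := lvl L n with hlvldef
  have hlvlcard : lvlF.card = F := (countLen_eq L n).symm
  set bad1 := lvlF.filter (fun w => ∃ u ∈ U, u <+: w) with hbad1def
  set bad2 := lvlF.filter (fun w => ¬ t w ≤ 4 / (F : ℝ≥0∞)) with hbad2def
  have hd4 : ∀ a : ℝ≥0∞, a * 4 ≤ (F : ℝ≥0∞) → a ≤ (F : ℝ≥0∞) / 2 / 2 := by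
    intro a ha
    refine hd2 _ _ (hd2 _ _ ?_)
    calc a * 2 * 2 = a * 4 := by rw [mul_assoc]; norm_num
      _ ≤ (F : ℝ≥0∞) := ha
  have hbad1card : (bad1.card : ℝ≥0∞) ≤ (F : ℝ≥0∞) / 2 / 2 := by
    have hsub : bad1 ⊆ U.biUnion (fun u => EXT L u n) := by
      intro w hw
      rw [hbad1def, Finset.mem_filter] at hw
      obtain ⟨hwl, u, hu, hupre⟩ := hw
      exact Finset.mem_biUnion.mpr ⟨u, hu, mem_EXT.mpr ⟨mem_lvl.mp hwl, hupre⟩⟩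
    have hcard1 : (bad1.card : ℝ≥0∞) ≤ ∑ u ∈ U, ((EXT L u n).card : ℝ≥0∞) := by
      calc (bad1.card : ℝ≥0∞) ≤ ((U.biUnion (fun u => EXT L u n)).card : ℝ≥0∞) := by
            exact_mod_cast Finset.card_le_card hsub
        _ ≤ ∑ u ∈ U, ((EXT L u n).card : ℝ≥0∞) := by exact_mod_cast Finset.card_biUnion_le
    have hsumaf : (∑ u ∈ U, ((EXT L u n).card : ℝ≥0∞)) / (F : ℝ≥0∞) < 4⁻¹ := by
      have : ∑ u ∈ U, aF L u n = (∑ u ∈ U, ((EXT L u n).card : ℝ≥0∞)) / (F : ℝ≥0∞) := by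
        simp [aF, div_eq_mul_inv, Finset.sum_mul, hFdef]
      rw [← this]
      exact hn3
    have hE4 : (∑ u ∈ U, ((EXT L u n).card : ℝ≥0∞)) * 4 ≤ (F : ℝ≥0∞) := by
      set E := ∑ u ∈ U, ((EXT L u n).card : ℝ≥0∞) with hEdef
      have hEF : E ≤ 4⁻¹ * (F : ℝ≥0∞) := by
        calc E = E / (F : ℝ≥0∞) * (F : ℝ≥0∞) := (ENNReal.div_mul_cancel hF0 hFt).symm
          _ ≤ 4⁻¹ * (F : ℝ≥0∞) := mul_le_mul_left hsumaf.le _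
      calc E * 4 ≤ 4⁻¹ * (F : ℝ≥0∞) * 4 := mul_le_mul_left hEF _
        _ = (F : ℝ≥0∞) := by
            rw [mul_comm (4⁻¹ : ℝ≥0∞) _, mul_assoc, ENNReal.inv_mul_cancel (by norm_num) (by norm_num),
              mul_one]
    exact hd4 _ (le_trans (mul_le_mul_left hcard1 _) hE4)
  have hsumlvl : ∑ w ∈ lvlF, t w ≤ 1 :=
    le_of_tendsto (tendsto_finset_sum lvlF (fun u (_ : u ∈ lvlF) => ht u))
      (Eventually.of_forall fun m => sum_aF_le_one L m lvlF (PF_lvl L n))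
  have hbad2card : (bad2.card : ℝ≥0∞) ≤ (F : ℝ≥0∞) / 2 / 2 := by
    have hM : (bad2.card : ℝ≥0∞) * (4 / (F : ℝ≥0∞)) ≤ 1 := by
      have h1 : bad2.card • (4 / (F : ℝ≥0∞)) ≤ ∑ w ∈ bad2, t w :=
        Finset.card_nsmul_le_sum bad2 t _
          (fun w hw => (not_le.mp (Finset.mem_filter.mp hw).2).le)
      have h2 : ∑ w ∈ bad2, t w ≤ ∑ w ∈ lvlF, t w :=
        Finset.sum_le_sum_of_subset (Finset.filter_subset _ _)
      calc (bad2.card : ℝ≥0∞) * (4 / (F : ℝ≥0∞)) = bad2.card • (4 / (F : ℝ≥0∞)) := by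
            rw [nsmul_eq_mul]
        _ ≤ 1 := le_trans h1 (le_trans h2 hsumlvl)
    refine hd4 _ ?_
    have : (bad2.card : ℝ≥0∞) * 4 / (F : ℝ≥0∞) ≤ 1 := by
      rw [mul_div_assoc]; exact hM
    calc (bad2.card : ℝ≥0∞) * 4 = (bad2.card : ℝ≥0∞) * 4 / (F : ℝ≥0∞) * (F : ℝ≥0∞) :=
          (ENNReal.div_mul_cancel hF0 hFt).symm
      _ ≤ 1 * (F : ℝ≥0∞) := mul_le_mul_left this _
      _ = (F : ℝ≥0∞) := one_mul _
  set good := lvlF \ (bad1 ∪ bad2) with hgooddef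
  have hgood : (F : ℝ≥0∞) / 2 ≤ (good.card : ℝ≥0∞) := by
    have hFle : (F : ℝ≥0∞) ≤ (good.card : ℝ≥0∞) + ((bad1 ∪ bad2).card : ℝ≥0∞) := by
      have := Finset.card_le_card_sdiff_add_card (s := lvlF) (t := bad1 ∪ bad2)
      rw [hlvlcard] at this
      exact_mod_cast this
    have hbu : ((bad1 ∪ bad2).card : ℝ≥0∞) ≤ (F : ℝ≥0∞) / 2 := by
      calc ((bad1 ∪ bad2).card : ℝ≥0∞) ≤ (bad1.card : ℝ≥0∞) + (bad2.card : ℝ≥0∞) := by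
            exact_mod_cast Finset.card_union_le bad1 bad2
        _ ≤ (F : ℝ≥0∞) / 2 / 2 + (F : ℝ≥0∞) / 2 / 2 := add_le_add hbad1card hbad2card
        _ = (F : ℝ≥0∞) / 2 := ENNReal.add_halves _
    have h' : (F : ℝ≥0∞) / 2 + (F : ℝ≥0∞) / 2 ≤ (good.card : ℝ≥0∞) + (F : ℝ≥0∞) / 2 := by
      rw [ENNReal.add_halves]
      exact hFle.trans (add_le_add_right hbu _)
    exact (ENNReal.add_le_add_iff_right
      (ENNReal.div_lt_top hFt two_ne_zero).ne).mp h'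
  have hx12 : x + 1 ≤ (F : ℝ≥0∞) / 2 := by
    refine hd2 _ _ ?_
    have h26 : (2:ℝ≥0∞) ≤ 2 ^ (k + 6) := by
      calc (2:ℝ≥0∞) = 2 ^ 1 := (pow_one _).symm
        _ ≤ 2 ^ (k + 6) := pow_le_pow_right₀ (by norm_num) (by omega)
    calc (x + 1) * 2 ≤ (x + 1) * 2 ^ (k + 6) := mul_le_mul_right h26 _
      _ ≤ (F : ℝ≥0∞) := key
  have hsgood : s ≤ good.card := by
    have : (s : ℝ≥0∞) ≤ (good.card : ℝ≥0∞) := hsx1.trans (hx12.trans hgood)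
    exact_mod_cast this
  obtain ⟨S, hSgood, hScard⟩ := Finset.exists_subset_card_eq hsgood
  have hSlvl : S ⊆ lvlF := hSgood.trans (Finset.sdiff_subset)
  have hSlen : ∀ w ∈ S, w.length = n := fun w hw => (mem_lvl.mp (hSlvl hw)).2
  have hSnotbad : ∀ w ∈ S, w ∈ lvlF ∧ w ∉ bad1 ∧ w ∉ bad2 := by
    intro w hw
    have := Finset.mem_sdiff.mp (hSgood hw)
    exact ⟨this.1, fun h => this.2 (Finset.mem_union_left _ h),
      fun h => this.2 (Finset.mem_union_right _ h)⟩
  have hSnoU : ∀ w ∈ S, ∀ u ∈ U, ¬ u <+: w := by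
    intro w hw u hu hpre
    exact (hSnotbad w hw).2.1 (Finset.mem_filter.mpr ⟨(hSnotbad w hw).1, u, hu, hpre⟩)
  refine ⟨n, S, hnB, ?_, hSlen, ?_, ?_, ?_⟩
  · intro w hw
    exact (mem_lvl.mp (hSlvl hw)).1
  · -- PF (U ∪ S)
    intro u hu v hv huv hpre
    rcases Finset.mem_union.mp hu with huU | huS
    · rcases Finset.mem_union.mp hv with hvU | hvS
      · exact hUPF u huU v hvU huv hpre
      · exact hSnoU v hvS u huU hpre
    · rcases Finset.mem_union.mp hv with hvU | hvS
      · have h1 : u.length ≤ v.length := hpre.length_le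
        rw [hSlen u huS] at h1
        exact absurd (le_trans h1 (hUlen v hvU)) (Nat.not_le.mpr hnB)
      · exact huv (hpre.eq_of_length ((hSlen u huS).trans (hSlen v hvS).symm))
  · -- mass bound
    have hsm : ∑ u ∈ S, t u ≤ S.card • (4 / (F : ℝ≥0∞)) :=
      Finset.sum_le_card_nsmul S t _ (fun w hw => by
        by_contra h
        exact (hSnotbad w hw).2.2 (Finset.mem_filter.mpr ⟨(hSnotbad w hw).1, h⟩))
    have hG : (2⁻¹ : ℝ≥0∞) ^ k * 16⁻¹ * 2 ^ (k + 6) = 4 := by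
      rw [← ENNReal.inv_pow, pow_add]
      rw [show ((2:ℝ≥0∞) ^ k)⁻¹ * 16⁻¹ * (2 ^ k * 2 ^ 6) =
        (((2:ℝ≥0∞) ^ k)⁻¹ * 2 ^ k) * (16⁻¹ * 2 ^ 6) by ring]
      rw [ENNReal.inv_mul_cancel (pow_ne_zero k two_ne_zero) (ENNReal.pow_ne_top h2t), one_mul]
      rw [show (2:ℝ≥0∞) ^ 6 = 16 * 4 by norm_num, ← mul_assoc,
        ENNReal.inv_mul_cancel (by norm_num) (by norm_num), one_mul]
    calc ∑ u ∈ S, t u ≤ S.card • (4 / (F : ℝ≥0∞)) := hsm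
      _ = (s : ℝ≥0∞) * (4 / (F : ℝ≥0∞)) := by rw [nsmul_eq_mul, hScard]
      _ ≤ (x + 1) * (4 / (F : ℝ≥0∞)) := mul_le_mul_left hsx1 _
      _ = (x + 1) * 4 / (F : ℝ≥0∞) := by rw [mul_div_assoc]
      _ ≤ 2⁻¹ ^ k * 16⁻¹ := by
          refine ENNReal.div_le_of_le_mul ?_
          calc (x + 1) * 4 = (x + 1) * ((2⁻¹ : ℝ≥0∞) ^ k * 16⁻¹ * 2 ^ (k + 6)) := by rw [hG]
            _ = (2⁻¹ : ℝ≥0∞) ^ k * 16⁻¹ * ((x + 1) * 2 ^ (k + 6)) := by ring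
            _ ≤ 2⁻¹ ^ k * 16⁻¹ * (F : ℝ≥0∞) := mul_le_mul_right key _
  · -- cardinality bound
    calc c * (2 : ℝ≥0∞) ^ ((ε/2) * (n:ℝ)) = x := by rw [hxdef, hDdef]
      _ ≤ (s : ℝ≥0∞) := hsx
      _ = (S.card : ℝ≥0∞) := by rw [hScard]




lemma chain_ex [DecidableEq (List Sigma)] (L : Set (List Sigma)) (ε : ℝ) (c : ℝ≥0∞) (N : Set ℕ)
    (𝒰 : Ultrafilter ℕ) (t : List Sigma → ℝ≥0∞) (q : ℕ)
    (hε : 0 < ε) (hc0 : c ≠ 0) (hct : c ≠ ⊤) (hcq : (2 : ℝ≥0∞)⁻¹ ^ q ≤ c)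
    (hcN : ∀ n ∈ N, c * (2 : ℝ≥0∞) ^ (ε * n) ≤ (countLen L n : ℝ≥0∞))
    (hN : N ∈ 𝒰) (hUtop : (𝒰 : Filter ℕ) ≤ atTop)
    (ht : ∀ u : List Sigma, Tendsto (aF L u) 𝒰 (𝓝 (t u))) :
    ∃ (nk : ℕ → ℕ) (Sk Uc : ℕ → Finset (List Sigma)),
      (∀ k, nk k < nk (k+1)) ∧ (∀ k, ↑(Sk k) ⊆ L) ∧
      (∀ k, ∀ w ∈ Sk k, w.length = nk k) ∧ (∀ k, PF (Uc k)) ∧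
      (∀ k, Sk k ⊆ Uc k) ∧ (∀ k, Uc k ⊆ Uc (k+1)) ∧
      (∀ k, c * (2 : ℝ≥0∞) ^ ((ε/2) * (nk k : ℝ)) ≤ ((Sk k).card : ℝ≥0∞)) := by
  classical
  have h16 : (16 : ℝ≥0∞)⁻¹ + 16⁻¹ = 8⁻¹ := by
    rw [← two_mul, show (16:ℝ≥0∞) = 2 * 8 by norm_num,
      ENNReal.mul_inv (Or.inl two_ne_zero) (Or.inl (by norm_num)), ← mul_assoc,
      ENNReal.mul_inv_cancel two_ne_zero (by norm_num), one_mul]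
  set St := ℕ × Finset (List Sigma) × Finset (List Sigma)
  set Inv : ℕ → St → Prop := fun k p =>
    ↑p.2.2 ⊆ L ∧ PF p.2.2 ∧ (∀ w ∈ p.2.2, w.length ≤ p.1) ∧
    (∀ w ∈ p.2.1, w.length = p.1) ∧ p.2.1 ⊆ p.2.2 ∧
    ((∑ u ∈ p.2.2, t u) + 2⁻¹ ^ k * 16⁻¹ ≤ 8⁻¹) ∧
    c * (2 : ℝ≥0∞) ^ ((ε/2) * (p.1 : ℝ)) ≤ (p.2.1.card : ℝ≥0∞) with hInvdef
  have hstep : ∀ (k : ℕ) (p : St), Inv k p →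
      ∃ p' : St, Inv (k+1) p' ∧ p.1 < p'.1 ∧ p.2.2 ⊆ p'.2.2 ∧ p'.2.1 ⊆ p'.2.2 := by
    intro k p hp
    obtain ⟨hUL, hUPF, hUlen, hSlen, hSU, hmass, hcard⟩ := hp
    obtain ⟨n', S', hB, hSL', hlen', hPF', hmass', hcard'⟩ :=
      step_ex L ε c N 𝒰 t q hε hc0 hct hcq hcN hN hUtop ht (k+1) p.1 p.2.2 hUPF hUlen
        (le_trans le_self_add hmass)
    have hdisj : Disjoint p.2.2 S' := by
      rw [Finset.disjoint_left]
      intro w hwU hwS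
      have h1 : w.length ≤ p.1 := hUlen w hwU
      have h2 : w.length = n' := hlen' w hwS
      omega
    have hxx : (2⁻¹ : ℝ≥0∞) ^ (k+1) * 16⁻¹ + 2⁻¹ ^ (k+1) * 16⁻¹ = 2⁻¹ ^ k * 16⁻¹ := by
      rw [← two_mul, pow_succ,
        show (2:ℝ≥0∞) * (2⁻¹ ^ k * 2⁻¹ * 16⁻¹) = (2 * 2⁻¹) * (2⁻¹ ^ k * 16⁻¹) by ring,
        ENNReal.mul_inv_cancel two_ne_zero (by norm_num), one_mul]
    refine ⟨(n', S', p.2.2 ∪ S'), ⟨?_, hPF', ?_, hlen', Finset.subset_union_right, ?_, hcard'⟩,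
      hB, Finset.subset_union_left, Finset.subset_union_right⟩
    · rw [Finset.coe_union]
      exact Set.union_subset hUL hSL'
    · intro w hw
      rcases Finset.mem_union.mp hw with h | h
      · exact le_trans (hUlen w h) hB.le
      · exact (hlen' w h).le
    · rw [Finset.sum_union hdisj]
      calc (∑ u ∈ p.2.2, t u + ∑ u ∈ S', t u) + 2⁻¹ ^ (k+1) * 16⁻¹
          ≤ ∑ u ∈ p.2.2, t u + (2⁻¹ ^ (k+1) * 16⁻¹ + 2⁻¹ ^ (k+1) * 16⁻¹) := by
            rw [← add_assoc]
            exact add_le_add (add_le_add_right hmass' _) le_rfl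
        _ = ∑ u ∈ p.2.2, t u + 2⁻¹ ^ k * 16⁻¹ := by rw [hxx]
        _ ≤ 8⁻¹ := hmass
  have hbase : ∃ p0 : St, Inv 0 p0 := by
    obtain ⟨n0, S0, hB0, hSL0, hlen0, hPF0, hmass0, hcard0⟩ :=
      step_ex L ε c N 𝒰 t q hε hc0 hct hcq hcN hN hUtop ht 0 0 ∅
        (by intro u hu; simp at hu) (by intro w hw; simp at hw) (by simp)
    refine ⟨(n0, S0, S0), ?_, ?_, fun w hw => (hlen0 w hw).le, hlen0,
      Finset.Subset.refl _, ?_, hcard0⟩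
    · exact hSL0
    · have := hPF0
      rwa [Finset.empty_union] at this
    · rw [pow_zero, one_mul]

      calc (∑ u ∈ S0, t u) + 16⁻¹ ≤ 16⁻¹ + 16⁻¹ := by
            refine add_le_add ?_ le_rfl
            calc ∑ u ∈ S0, t u ≤ 2⁻¹ ^ 0 * 16⁻¹ := hmass0
              _ = 16⁻¹ := by rw [pow_zero, one_mul]
        _ = 8⁻¹ := h16
  obtain ⟨p0, hp0⟩ := hbase
  set next : ℕ → St → St := fun k p => if h : Inv k p then (hstep k p h).choose else p
    with hnextdef
  set g : ℕ → St := fun k => Nat.rec p0 next k with hgdef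
  have hgs : ∀ k, g (k+1) = next k (g k) := fun k => rfl
  have hInvg : ∀ k, Inv k (g k) := by
    intro k
    induction k with
    | zero => exact hp0
    | succ k ih =>
      rw [hgs k, hnextdef]
      simp only [dif_pos ih]
      exact (hstep k (g k) ih).choose_spec.1
  have hRel : ∀ k, (g k).1 < (g (k+1)).1 ∧ (g k).2.2 ⊆ (g (k+1)).2.2 := by
    intro k
    have h1 := hgs k
    rw [hnextdef] at h1
    simp only [dif_pos (hInvg k)] at h1
    rw [h1]
    exact ⟨(hstep k (g k) (hInvg k)).choose_spec.2.1,
      (hstep k (g k) (hInvg k)).choose_spec.2.2.1⟩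
  refine ⟨fun k => (g k).1, fun k => (g k).2.1, fun k => (g k).2.2,
    fun k => (hRel k).1, fun k => ?_, fun k => (hInvg k).2.2.2.1,
    fun k => (hInvg k).2.1, fun k => (hInvg k).2.2.2.2.1,
    fun k => (hRel k).2, fun k => (hInvg k).2.2.2.2.2.2⟩
  · intro w hw
    exact (hInvg k).1 ((hInvg k).2.2.2.2.1 hw)

end EQCA

open EQCA

/-- An exponential quasiantichain contains an exponential antichain. -/
theorem exp_quasiantichain_contains_exp_antichain {Sigma : Type*} [Fintype Sigma]
    [PartialOrder Sigma] (L : Set (List Sigma))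
    (hq : IsQuasiantichainLang (· < ·) L) (hexp : ExpGrowth L) :
    ∃ L' ⊆ L, IsAntichainLang (· < ·) L' ∧ ExpGrowth L' := by
  classical
  obtain ⟨ε, hε, hT⟩ := hexp
  rw [ExpGrowthOrder] at hT
  set u0 : ℕ → ℝ≥0∞ := fun n => (countLen L n : ℝ≥0∞) / (2:ℝ≥0∞) ^ (ε * (n:ℝ)) with hu0
  have hb : ∃ b : ℝ≥0∞, b ≠ 0 ∧ b ≠ ⊤ ∧ ∃ᶠ n in atTop, b < u0 n := by
    rcases eq_or_ne (limsup u0 atTop) ⊤ with htop | htop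
    · exact ⟨1, one_ne_zero, ENNReal.one_ne_top,
        frequently_lt_of_lt_limsup (by isBoundedDefault) (htop ▸ ENNReal.one_lt_top)⟩
    · refine ⟨limsup u0 atTop / 2, ?_, (ENNReal.div_lt_top htop two_ne_zero).ne,
        frequently_lt_of_lt_limsup (by isBoundedDefault)
          (ENNReal.half_lt_self hT.ne' htop)⟩
      simp only [ne_eq, ENNReal.div_eq_zero_iff, not_or]
      exact ⟨hT.ne', by norm_num⟩
  obtain ⟨b, hb0, hbt, hbfreq⟩ := hb
  set c := min b 1 with hcdef
  have hc0 : c ≠ 0 := by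
    have : 0 < c := lt_min (pos_iff_ne_zero.mpr hb0) one_pos
    exact this.ne'
  have hct : c ≠ ⊤ := ((min_le_right b 1).trans_lt ENNReal.one_lt_top).ne
  obtain ⟨q, hq2pow⟩ : ∃ q : ℕ, (2:ℝ≥0∞)⁻¹ ^ q ≤ c := by
    obtain ⟨q, hq'⟩ := ENNReal.exists_inv_two_pow_lt hc0
    exact ⟨q, hq'.le⟩
  set N := {n : ℕ | b < u0 n} with hNdef
  have hcN : ∀ n ∈ N, c * (2:ℝ≥0∞) ^ (ε * (n:ℝ)) ≤ (countLen L n : ℝ≥0∞) := by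
    intro n hn
    have hd0 : (2:ℝ≥0∞) ^ (ε * (n:ℝ)) ≠ 0 := (ENNReal.rpow_pos (by norm_num) (by norm_num)).ne'
    have hdt : (2:ℝ≥0∞) ^ (ε * (n:ℝ)) ≠ ⊤ :=
      ENNReal.rpow_ne_top_of_nonneg (by positivity) (by norm_num)
    have hbn : b < (countLen L n : ℝ≥0∞) / (2:ℝ≥0∞) ^ (ε * (n:ℝ)) := hn
    have hmul : b * (2:ℝ≥0∞) ^ (ε * (n:ℝ)) < (countLen L n : ℝ≥0∞) :=
      (ENNReal.lt_div_iff_mul_lt (Or.inl hd0) (Or.inl hdt)).mp hbn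
    exact le_trans (mul_le_mul_left (min_le_left b 1) _) hmul.le
  have hNne : (atTop ⊓ 𝓟 N).NeBot := by
    rw [hNdef]
    exact frequently_iff_neBot.mp hbfreq
  set 𝒰 := Ultrafilter.of (atTop ⊓ 𝓟 N) with h𝒰def
  have h𝒰le : (𝒰 : Filter ℕ) ≤ atTop ⊓ 𝓟 N := Ultrafilter.of_le _
  have hUtop : (𝒰 : Filter ℕ) ≤ atTop := h𝒰le.trans inf_le_left
  have hN𝒰 : N ∈ 𝒰 := (h𝒰le.trans inf_le_right) (mem_principal_self N)
  have htex : ∀ u : List Sigma, ∃ x, Tendsto (aF L u) 𝒰 (𝓝 x) := by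
    intro u
    obtain ⟨x, -, hx⟩ := isCompact_univ.ultrafilter_le_nhds (𝒰.map (aF L u)) (by simp)
    exact ⟨x, hx⟩
  set t : List Sigma → ℝ≥0∞ := fun u => (htex u).choose with htdef
  have ht : ∀ u, Tendsto (aF L u) 𝒰 (𝓝 (t u)) := fun u => (htex u).choose_spec
  obtain ⟨nk, Sk, Uc, hninc, hSL, hSlen, hPFU, hSU, hUmono, hcard⟩ :=
    chain_ex L ε c N 𝒰 t q hε hc0 hct hq2pow hcN hN𝒰 hUtop ht
  have hUmono' : ∀ a b : ℕ, a ≤ b → Uc a ⊆ Uc b := by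
    intro a b hab
    induction b, hab using Nat.le_induction with
    | base => exact Finset.Subset.refl _
    | succ b hab ih => exact ih.trans (hUmono b)
  set L' : Set (List Sigma) := ⋃ k, (Sk k : Set (List Sigma)) with hL'def
  have hL'L : L' ⊆ L := Set.iUnion_subset fun k => hSL k
  refine ⟨L', hL'L, ?_, ε/2, by positivity, ?_⟩
  · -- antichain
    intro u hu v hv huv
    obtain ⟨j, hj⟩ := Set.mem_iUnion.mp hu
    obtain ⟨k, hk⟩ := Set.mem_iUnion.mp hv
    have hu' : u ∈ Uc (max j k) := hUmono' j _ (le_max_left _ _) (hSU j hj)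
    have hv' : v ∈ Uc (max j k) := hUmono' k _ (le_max_right _ _) (hSU k hk)
    have h1 : ¬ u <+: v := hPFU _ u hu' v hv' huv
    have h2 : ¬ v <+: u := hPFU _ v hv' u hu' (Ne.symm huv)
    rcases hq u (hL'L hu) v (hL'L hv) with h | h | h
    · exact absurd h h1
    · exact absurd h h2
    · exact h
  · -- growth
    rw [ExpGrowthOrder]
    have hfreq : ∃ᶠ n in atTop,
        c ≤ (countLen L' n : ℝ≥0∞) / (2:ℝ≥0∞) ^ ((ε/2) * (n:ℝ)) := by
      rw [frequently_atTop]
      intro K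
      have hmono : StrictMono nk := strictMono_nat_of_lt_succ hninc
      refine ⟨nk K, hmono.le_apply, ?_⟩
      have hsub : (Sk K : Set (List Sigma)) ⊆ {w ∈ L' | w.length = nk K} := by
        intro w hw
        exact ⟨Set.mem_iUnion.mpr ⟨K, hw⟩, hSlen K w hw⟩
      have hfin : {w ∈ L' | w.length = nk K}.Finite := lvl_fin L' (nk K)
      have hcount : (((Sk K).card : ℕ) : ℝ≥0∞) ≤ (countLen L' (nk K) : ℝ≥0∞) := by
        have h := Set.ncard_le_ncard hsub hfin
        rw [Set.ncard_coe_finset] at h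
        exact_mod_cast h
      have hd0 : (2:ℝ≥0∞) ^ ((ε/2) * ((nk K):ℝ)) ≠ 0 :=
        (ENNReal.rpow_pos (by norm_num) (by norm_num)).ne'
      have hdt : (2:ℝ≥0∞) ^ ((ε/2) * ((nk K):ℝ)) ≠ ⊤ :=
        ENNReal.rpow_ne_top_of_nonneg (by positivity) (by norm_num)
      rw [ENNReal.le_div_iff_mul_le (Or.inl hd0) (Or.inl hdt)]
      exact le_trans (hcard K) hcount
    have hle : c ≤ limsup
        (fun n : ℕ => (countLen L' n : ℝ≥0∞) / (2:ℝ≥0∞) ^ ((ε/2) * (n:ℝ))) atTop :=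
      le_limsup_of_frequently_le hfreq (by isBoundedDefault)
    exact lt_of_lt_of_le (pos_iff_ne_zero.mpr hc0) hle
end

section
/- Let L1, L2 ⊆ Σ* be languages with polynomial antichain growth. Then the concatenation L1·L2 = {l1·l2 | l1 ∈ L1, l2 ∈ L2} has polynomial antichain growth. -/
open Filter
open scoped ENNReal

section Aux
variable {α : Type*} {r : α → α → Prop}

lemma lexR_append_right (u : List α) {v v' : List α} (h : LexR r v v') :
    LexR r (u ++ v) (u ++ v') := by
  induction u with
  | nil => simpa using h
  | cons x t ih => exact LexR.cons x ih

lemma lexR_append_of_ne {u u' : List α} (h : LexR r u u') :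
    u.length = u'.length → u ≠ u' → ∀ v v' : List α, LexR r (u ++ v) (u' ++ v') := by
  induction h with
  | nil w =>
    intro hlen hne v v'
    cases w with
    | nil => exact absurd rfl hne
    | cons a t => simp at hlen
  | head w w' h => intro _ _ v v'; exact LexR.head _ _ h
  | cons x h ih =>
    intro hlen hne v v'
    refine LexR.cons x (ih (by simpa using hlen) ?_ v v')
    intro e; exact hne (by rw [e])

lemma lexComp_append_right (u : List α) {v v' : List α} (h : LexComp r v v') :
    LexComp r (u ++ v) (u ++ v') :=
  h.imp (lexR_append_right u) (lexR_append_right u)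

lemma lexComp_append_of_ne {u u' : List α} (hlen : u.length = u'.length) (hne : u ≠ u')
    (h : LexComp r u u') (v v' : List α) : LexComp r (u ++ v) (u' ++ v') :=
  h.imp (fun h => lexR_append_of_ne h hlen hne v v')
        (fun h => lexR_append_of_ne h hlen.symm hne.symm v' v)

end Aux

section MaxAnti
variable {Sigma : Type*} [Fintype Sigma] [PartialOrder Sigma]

/-- The set of cardinalities of antichains of words of length `i` in `L`. -/
def antiSizes (L : Set (List Sigma)) (i : ℕ) : Set ℕ :=
  {m | ∃ A : Set (List Sigma), A ⊆ L ∧ (∀ w ∈ A, w.length = i) ∧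
    IsAntichainLang (· < ·) A ∧ m = A.ncard}

noncomputable def maxAnti (L : Set (List Sigma)) (i : ℕ) : ℕ := sSup (antiSizes L i)

lemma antiSizes_bdd (L : Set (List Sigma)) (i : ℕ) : BddAbove (antiSizes L i) := by
  refine ⟨({l : List Sigma | l.length = i}).ncard, ?_⟩
  rintro m ⟨A, -, hlen, -, rfl⟩
  exact Set.ncard_le_ncard (fun w hw => hlen w hw) (List.finite_length_eq _ _)

lemma le_maxAnti {L A : Set (List Sigma)} {i : ℕ}
    (hA : A ⊆ L) (hlen : ∀ w ∈ A, w.length = i) (hanti : IsAntichainLang (· < ·) A) :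
    A.ncard ≤ maxAnti L i :=
  le_csSup (antiSizes_bdd L i) ⟨A, hA, hlen, hanti, rfl⟩

lemma exists_maxAnti (L : Set (List Sigma)) (i : ℕ) :
    ∃ A : Set (List Sigma), A ⊆ L ∧ (∀ w ∈ A, w.length = i) ∧
      IsAntichainLang (· < ·) A ∧ A.ncard = maxAnti L i := by
  have hne : (antiSizes L i).Nonempty :=
    ⟨0, ∅, by simp, by simp, fun u hu => absurd hu (by simp), by simp⟩
  obtain ⟨A, hA, hlen, hanti, hm⟩ := Nat.sSup_mem hne (antiSizes_bdd L i)
  exact ⟨A, hA, hlen, hanti, hm.symm⟩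

lemma maxAnti_poly (L : Set (List Sigma)) (h : PolyAntichainGrowth (· < ·) L) :
    ∃ (k : ℕ) (D : ℝ≥0∞), D ≠ ⊤ ∧
      ∀ i : ℕ, (maxAnti L i : ℝ≥0∞) ≤ D * ((i : ℝ≥0∞) + 1) ^ k := by
  choose A hAL hAlen hAanti hAcard using exists_maxAnti L
  have hslice : ∀ n, {w ∈ (⋃ i, A i) | w.length = n} = A n := by
    intro n; ext w
    simp only [Set.mem_setOf_eq, Set.mem_iUnion]
    constructor
    · rintro ⟨⟨i, hi⟩, hlen⟩
      have h1 : w.length = i := hAlen i w hi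
      rwa [show i = n by rw [← h1, hlen]] at hi
    · intro hw; exact ⟨⟨n, hw⟩, hAlen n w hw⟩
  have hcount : ∀ n, countLen (⋃ i, A i) n = maxAnti L n := by
    intro n; rw [countLen, hslice, hAcard]
  obtain ⟨k, hk⟩ := h (⋃ i, A i) (Set.iUnion_subset hAL)
    (fun n => by rw [hslice]; exact hAanti n)
  simp only [hcount] at hk
  set u : ℕ → ℝ≥0∞ := fun n => (maxAnti L n : ℝ≥0∞) / (n : ℝ≥0∞) ^ k with hu
  set C : ℝ≥0∞ := limsup u atTop + 1 with hC
  have hCtop : C ≠ ⊤ := by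
    simpa [hC] using ENNReal.add_ne_top.2 ⟨hk.ne, ENNReal.one_ne_top⟩
  have hev : ∀ᶠ n in atTop, u n < C :=
    eventually_lt_of_limsup_lt (ENNReal.lt_add_right hk.ne one_ne_zero)
  obtain ⟨N, hN⟩ := eventually_atTop.1 hev
  refine ⟨k, C ⊔ (Finset.range (N + 1)).sup (fun i => (maxAnti L i : ℝ≥0∞)), ?_, ?_⟩
  · rw [← lt_top_iff_ne_top, sup_lt_iff]
    exact ⟨hCtop.lt_top, Finset.sup_lt_iff (by simp) |>.2 fun i _ => ENNReal.natCast_lt_top _⟩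
  · intro i
    set D := C ⊔ (Finset.range (N + 1)).sup (fun i => (maxAnti L i : ℝ≥0∞)) with hD
    have hpow1 : (1 : ℝ≥0∞) ≤ ((i : ℝ≥0∞) + 1) ^ k :=
      one_le_pow_of_one_le' (le_add_self) k
    rcases lt_or_ge i (N + 1) with hi | hi
    · calc (maxAnti L i : ℝ≥0∞)
          ≤ (Finset.range (N + 1)).sup (fun i => (maxAnti L i : ℝ≥0∞)) :=
            Finset.le_sup (f := fun i => ((maxAnti L i : ℝ≥0∞))) (Finset.mem_range.2 hi)
        _ ≤ D := le_sup_right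
        _ ≤ D * ((i : ℝ≥0∞) + 1) ^ k := le_mul_of_one_le_right' hpow1
    · have hi1 : 1 ≤ i := le_trans (Nat.le_add_left 1 N) hi
      have hne0 : ((i : ℝ≥0∞)) ^ k ≠ 0 := by
        simp only [ne_eq, pow_eq_zero_iff', Nat.cast_eq_zero, not_and]
        omega
      have hnetop : ((i : ℝ≥0∞)) ^ k ≠ ⊤ := by
        exact ENNReal.pow_ne_top (ENNReal.natCast_ne_top i)
      have := (hN i (by omega)).le
      rw [hu] at this
      have hle : (maxAnti L i : ℝ≥0∞) ≤ C * (i : ℝ≥0∞) ^ k := by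
        rw [← ENNReal.div_le_iff hne0 hnetop]
        exact this
      calc (maxAnti L i : ℝ≥0∞) ≤ C * (i : ℝ≥0∞) ^ k := hle
        _ ≤ D * ((i : ℝ≥0∞) + 1) ^ k := by
            gcongr
            · exact le_sup_left
            · exact le_self_add

lemma countLen_concat_le (L1 L2 L' : Set (List Sigma))
    (hsub : L' ⊆ {w | ∃ l1 ∈ L1, ∃ l2 ∈ L2, w = l1 ++ l2})
    (hfam : AntichainFamily (· < ·) L') (n : ℕ) :
    countLen L' n ≤ ∑ i ∈ Finset.range (n + 1), maxAnti L1 i * maxAnti L2 (n - i) := by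
  classical
  have hch : ∀ w : List Sigma, ∃ u v : List Sigma, w ∈ L' → u ∈ L1 ∧ v ∈ L2 ∧ w = u ++ v := by
    intro w
    by_cases hw : w ∈ L'
    · obtain ⟨u, hu, v, hv, e⟩ := hsub hw
      exact ⟨u, v, fun _ => ⟨hu, hv, e⟩⟩
    · exact ⟨[], [], fun h => absurd h hw⟩
  choose p q hpq using hch
  have hSfin : {w ∈ L' | w.length = n}.Finite :=
    (List.finite_length_eq Sigma n).subset (fun w hw => hw.2)
  set S : Finset (List Sigma) := hSfin.toFinset with hS
  have hmemS : ∀ w, w ∈ S ↔ w ∈ L' ∧ w.length = n := by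
    intro w; rw [hS, Set.Finite.mem_toFinset]; rfl
  have hcount : countLen L' n = S.card := by
    rw [countLen, Set.ncard_eq_toFinset_card _ hSfin]
  rw [hcount]
  have hmaps : ∀ w ∈ S, (p w).length ∈ Finset.range (n + 1) := by
    intro w hw
    obtain ⟨hwL, hwlen⟩ := (hmemS w).1 hw
    obtain ⟨-, -, e⟩ := hpq w hwL
    simp only [Finset.mem_range]
    have := congrArg List.length e
    rw [hwlen, List.length_append] at this
    omega
  rw [Finset.card_eq_sum_card_fiberwise hmaps]
  refine Finset.sum_le_sum ?_
  intro i hi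
  set T := {w ∈ S | (p w).length = i} with hT
  have hTfact : ∀ w ∈ T, w ∈ L' ∧ w.length = n ∧ p w ∈ L1 ∧ q w ∈ L2 ∧
      w = p w ++ q w ∧ (p w).length = i ∧ (q w).length = n - i := by
    intro w hw
    rw [hT, Finset.mem_filter] at hw
    obtain ⟨hwL, hwlen⟩ := (hmemS w).1 hw.1
    obtain ⟨h1, h2, e⟩ := hpq w hwL
    refine ⟨hwL, hwlen, h1, h2, e, hw.2, ?_⟩
    have := congrArg List.length e
    rw [hwlen, List.length_append, hw.2] at this
    omega
  have himage : (T.image p).card ≤ maxAnti L1 i := by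
    rw [← Set.ncard_coe_finset]
    refine le_maxAnti ?_ ?_ ?_
    · rintro u hu
      simp only [Finset.coe_image, Set.mem_image, Finset.mem_coe] at hu
      obtain ⟨w, hw, rfl⟩ := hu
      exact (hTfact w hw).2.2.1
    · rintro u hu
      simp only [Finset.coe_image, Set.mem_image, Finset.mem_coe] at hu
      obtain ⟨w, hw, rfl⟩ := hu
      exact (hTfact w hw).2.2.2.2.2.1
    · rintro u hu u' hu' hne hcomp
      simp only [Finset.coe_image, Set.mem_image, Finset.mem_coe] at hu hu'
      obtain ⟨w, hw, rfl⟩ := hu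
      obtain ⟨w', hw', rfl⟩ := hu'
      obtain ⟨hwL, hwlen, -, -, ew, hwi, -⟩ := hTfact w hw
      obtain ⟨hw'L, hw'len, -, -, ew', hw'i, -⟩ := hTfact w' hw'
      have hwne : w ≠ w' := fun e => hne (by rw [e])
      have hcomp' : LexComp (· < ·) w w' := by
        rw [ew, ew']
        exact lexComp_append_of_ne (by rw [hwi, hw'i]) hne hcomp _ _
      exact hfam n w ⟨hwL, hwlen⟩ w' ⟨hw'L, hw'len⟩ hwne hcomp'
  have hfiber : ∀ u ∈ T.image p, ({w ∈ T | p w = u} : Finset _).card ≤ maxAnti L2 (n - i) := by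
    intro u hu
    set F := ({w ∈ T | p w = u} : Finset (List Sigma)) with hF
    have hFfact : ∀ w ∈ F, w ∈ L' ∧ w.length = n ∧ q w ∈ L2 ∧
        w = u ++ q w ∧ (q w).length = n - i := by
      intro w hw
      rw [hF, Finset.mem_filter] at hw
      obtain ⟨hwL, hwlen, -, h2, e, -, hql⟩ := hTfact w hw.1
      exact ⟨hwL, hwlen, h2, by rw [← hw.2]; exact e, hql⟩
    have hinj : Set.InjOn q ↑F := by
      intro w hw w' hw' hqe
      rw [(hFfact w hw).2.2.2.1, (hFfact w' hw').2.2.2.1, hqe]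
    rw [← Finset.card_image_of_injOn hinj, ← Set.ncard_coe_finset]
    refine le_maxAnti ?_ ?_ ?_
    · rintro v hv
      simp only [Finset.coe_image, Set.mem_image, Finset.mem_coe] at hv
      obtain ⟨w, hw, rfl⟩ := hv
      exact (hFfact w hw).2.2.1
    · rintro v hv
      simp only [Finset.coe_image, Set.mem_image, Finset.mem_coe] at hv
      obtain ⟨w, hw, rfl⟩ := hv
      exact (hFfact w hw).2.2.2.2
    · rintro v hv v' hv' hne hcomp
      simp only [Finset.coe_image, Set.mem_image, Finset.mem_coe] at hv hv'
      obtain ⟨w, hw, rfl⟩ := hv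
      obtain ⟨w', hw', rfl⟩ := hv'
      obtain ⟨hwL, hwlen, -, ew, -⟩ := hFfact w hw
      obtain ⟨hw'L, hw'len, -, ew', -⟩ := hFfact w' hw'
      have hwne : w ≠ w' := by
        intro e
        apply hne
        have h3 : u ++ q w = u ++ q w' := by rw [← ew, ← ew']; exact e
        exact List.append_cancel_left h3
      have hcomp' : LexComp (· < ·) w w' := by
        rw [ew, ew']
        exact lexComp_append_right u hcomp
      exact hfam n w ⟨hwL, hwlen⟩ w' ⟨hw'L, hw'len⟩ hwne hcomp'
  calc T.card ≤ maxAnti L2 (n - i) * (T.image p).card :=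
        Finset.card_le_mul_card_image T _ hfiber
    _ ≤ maxAnti L2 (n - i) * maxAnti L1 i := Nat.mul_le_mul_left _ himage
    _ = maxAnti L1 i * maxAnti L2 (n - i) := Nat.mul_comm _ _


theorem concat_poly_antichain_growth' (L1 L2 : Set (List Sigma))
    (h1 : PolyAntichainGrowth (· < ·) L1) (h2 : PolyAntichainGrowth (· < ·) L2) :
    PolyAntichainGrowth (· < ·) {w | ∃ l1 ∈ L1, ∃ l2 ∈ L2, w = l1 ++ l2} := by
  intro L' hsub hfam
  obtain ⟨k1, D1, hD1, hb1⟩ := maxAnti_poly L1 h1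
  obtain ⟨k2, D2, hD2, hb2⟩ := maxAnti_poly L2 h2
  set K := k1 + k2 + 1 with hK
  refine ⟨K, ?_⟩
  have key : ∀ n : ℕ, 1 ≤ n →
      (countLen L' n : ℝ≥0∞) / (n : ℝ≥0∞) ^ K ≤ D1 * D2 * 2 ^ K := by
    intro n hn
    have hstep1 : (countLen L' n : ℝ≥0∞) ≤
        ∑ i ∈ Finset.range (n + 1), (maxAnti L1 i : ℝ≥0∞) * (maxAnti L2 (n - i) : ℝ≥0∞) := by
      exact_mod_cast countLen_concat_le L1 L2 L' hsub hfam n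
    have hstep2 : ∀ i ∈ Finset.range (n + 1),
        (maxAnti L1 i : ℝ≥0∞) * (maxAnti L2 (n - i) : ℝ≥0∞) ≤
          D1 * D2 * ((n : ℝ≥0∞) + 1) ^ (k1 + k2) := by
      intro i hi
      have hi' : i ≤ n := by simpa [Nat.lt_succ_iff] using Finset.mem_range.1 hi
      have m1 : ((i : ℝ≥0∞) + 1) ^ k1 ≤ ((n : ℝ≥0∞) + 1) ^ k1 := by
        gcongr
      have m2 : (((n - i : ℕ) : ℝ≥0∞) + 1) ^ k2 ≤ ((n : ℝ≥0∞) + 1) ^ k2 := by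
        gcongr <;> exact_mod_cast Nat.sub_le n i
      calc (maxAnti L1 i : ℝ≥0∞) * (maxAnti L2 (n - i) : ℝ≥0∞)
          ≤ (D1 * ((i : ℝ≥0∞) + 1) ^ k1) * (D2 * (((n - i : ℕ) : ℝ≥0∞) + 1) ^ k2) :=
            mul_le_mul' (hb1 i) (hb2 (n - i))
        _ ≤ (D1 * ((n : ℝ≥0∞) + 1) ^ k1) * (D2 * ((n : ℝ≥0∞) + 1) ^ k2) :=
            mul_le_mul' (mul_le_mul' le_rfl m1) (mul_le_mul' le_rfl m2)
        _ = D1 * D2 * ((n : ℝ≥0∞) + 1) ^ (k1 + k2) := by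
            rw [pow_add]; ring
    have hstep3 : (countLen L' n : ℝ≥0∞) ≤ D1 * D2 * ((n : ℝ≥0∞) + 1) ^ K := by
      calc (countLen L' n : ℝ≥0∞) ≤ _ := hstep1
        _ ≤ ∑ _i ∈ Finset.range (n + 1), D1 * D2 * ((n : ℝ≥0∞) + 1) ^ (k1 + k2) :=
            Finset.sum_le_sum hstep2
        _ = ((n + 1 : ℕ) : ℝ≥0∞) * (D1 * D2 * ((n : ℝ≥0∞) + 1) ^ (k1 + k2)) := by
            rw [Finset.sum_const, Finset.card_range, nsmul_eq_mul]
        _ = D1 * D2 * ((n : ℝ≥0∞) + 1) ^ K := by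
            rw [hK, pow_succ]; push_cast; ring
    have hne0 : ((n : ℝ≥0∞)) ^ K ≠ 0 := by
      simp only [ne_eq, pow_eq_zero_iff', Nat.cast_eq_zero, not_and]; omega
    have hnetop : ((n : ℝ≥0∞)) ^ K ≠ ⊤ := ENNReal.pow_ne_top (ENNReal.natCast_ne_top n)
    rw [ENNReal.div_le_iff hne0 hnetop]
    refine le_trans hstep3 ?_
    have h2n : ((n : ℝ≥0∞) + 1) ≤ 2 * (n : ℝ≥0∞) := by
      have h' : ((n + 1 : ℕ) : ℝ≥0∞) ≤ ((2 * n : ℕ) : ℝ≥0∞) := by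
        exact_mod_cast Nat.cast_le.2 (by omega : n + 1 ≤ 2 * n)
      push_cast at h'
      exact h'
    calc D1 * D2 * ((n : ℝ≥0∞) + 1) ^ K ≤ D1 * D2 * (2 * (n : ℝ≥0∞)) ^ K := by gcongr
      _ = D1 * D2 * 2 ^ K * (n : ℝ≥0∞) ^ K := by rw [mul_pow]; ring
  have hbound : limsup (fun n : ℕ => (countLen L' n : ℝ≥0∞) / (n : ℝ≥0∞) ^ K) atTop ≤
      D1 * D2 * 2 ^ K :=
    limsup_le_of_le (by isBoundedDefault) (eventually_atTop.2 ⟨1, key⟩)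
  refine lt_of_le_of_lt hbound ?_
  exact ENNReal.mul_lt_top (ENNReal.mul_lt_top hD1.lt_top hD2.lt_top)
    (ENNReal.pow_ne_top ENNReal.ofNat_ne_top).lt_top
end MaxAnti

/-- The concatenation of two languages with polynomial antichain growth has
polynomial antichain growth. -/
theorem concat_poly_antichain_growth {Sigma : Type*} [Fintype Sigma] [PartialOrder Sigma]
    (L1 L2 : Set (List Sigma))
    (h1 : PolyAntichainGrowth (· < ·) L1) (h2 : PolyAntichainGrowth (· < ·) L2) :
    PolyAntichainGrowth (· < ·) {w | ∃ l1 ∈ L1, ∃ l2 ∈ L2, w = l1 ++ l2} := by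
  exact concat_poly_antichain_growth' L1 L2 h1 h2
end

section
/- Let A = (Q, Σ, Δ, q0, F) be an NFA over a partially ordered alphabet Σ. Then 𝓛(A) has polynomial antichain growth if and only if 𝓛(A_{q,q}) is a chain for every bireachable state q of A. -/
open Filter
open scoped ENNReal

/-- A state `q` is bireachable if `q` is reachable from the initial state `q0` and some
accepting state is reachable from `q`. -/
def Bireachable {Sigma Q : Type*} (step : Q → Sigma → Set Q) (q0 : Q) (F : Set Q)
    (q : Q) : Prop :=
  (∃ w : List Sigma, q ∈ (NFA.mk step {q0} F).evalFrom {q0} w) ∧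
  (∃ w : List Sigma, ∃ q' ∈ F, q' ∈ (NFA.mk step {q0} F).evalFrom {q} w)

section LexLemmas
variable {α : Type*} {r : α → α → Prop}

lemma lexR_refl (w : List α) : LexR r w w := by
  induction w with
  | nil => exact LexR.nil []
  | cons x w ih => exact LexR.cons x ih

lemma lexComp_refl (w : List α) : LexComp r w w := Or.inl (lexR_refl w)

lemma lexR_of_rel_head {a b : α} (h : r a b) (p s t : List α) :
    LexR r (p ++ a :: s) (p ++ b :: t) := by
  induction p with
  | nil => exact LexR.head s t h
  | cons x p ih => exact LexR.cons x ih

lemma lexR_prefix_extract (hirr : ∀ x : α, ¬ r x x) {a b : α} {s t : List α} (p : List α)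
    (h : LexR r (p ++ a :: s) (p ++ b :: t)) : r a b ∨ a = b := by
  induction p with
  | nil =>
    cases h with
    | head _ _ h => exact Or.inl h
    | cons _ h => exact Or.inr rfl
  | cons x p ih =>
    cases h with
    | head _ _ h' => exact absurd h' (hirr x)
    | cons _ h => exact ih h

lemma not_lexComp_of_heads (hirr : ∀ x : α, ¬ r x x) {a b : α} (hab : ¬ r a b) (hba : ¬ r b a)
    (hne : a ≠ b) (p s t : List α) : ¬ LexComp r (p ++ a :: s) (p ++ b :: t) := by
  rintro (h | h)
  · rcases lexR_prefix_extract hirr p h with h' | h' <;> [exact hab h'; exact hne h']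
  · rcases lexR_prefix_extract hirr p h with h' | h' <;> [exact hba h'; exact hne h'.symm]

lemma exists_first_diff {xs ys : List α} (hlen : xs.length = ys.length) (hne : xs ≠ ys) :
    ∃ p x s y t, xs = p ++ x :: s ∧ ys = p ++ y :: t ∧ x ≠ y := by
  induction xs generalizing ys with
  | nil => cases ys with
    | nil => exact absurd rfl hne
    | cons y ys => simp at hlen
  | cons x xs ih =>
    cases ys with
    | nil => simp at hlen
    | cons y ys =>
      by_cases hxy : x = y
      · subst hxy
        have hne' : xs ≠ ys := fun h => hne (by rw [h])
        obtain ⟨p, x', s, y', t, h1, h2, h3⟩ := ih (by simpa using hlen) hne'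
        exact ⟨x :: p, x', s, y', t, by simp [h1], by simp [h2], h3⟩
      · exact ⟨[], x, xs, y, ys, rfl, rfl, hxy⟩

/-- decomposition of an incomparable pair -/
lemma incomp_decomp (hirr : ∀ x : α, ¬ r x x) {u v : List α} (h : ¬ LexComp r u v) :
    ∃ p a s b t, u = p ++ a :: s ∧ v = p ++ b :: t ∧ a ≠ b ∧ ¬ r a b ∧ ¬ r b a := by
  induction u generalizing v with
  | nil => exact absurd (Or.inl (LexR.nil v)) h
  | cons x u ih =>
    cases v with
    | nil => exact absurd (Or.inr (LexR.nil _)) h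
    | cons y v =>
      by_cases hxy : x = y
      · subst hxy
        have h' : ¬ LexComp r u v := by
          rintro (hc | hc)
          · exact h (Or.inl (LexR.cons x hc))
          · exact h (Or.inr (LexR.cons x hc))
        obtain ⟨p, a, s, b, t, h1, h2, h3, h4, h5⟩ := ih h'
        exact ⟨x :: p, a, s, b, t, by simp [h1], by simp [h2], h3, h4, h5⟩
      · refine ⟨[], x, u, y, v, rfl, rfl, hxy, fun hc => h (Or.inl (LexR.head _ _ hc)),
          fun hc => h (Or.inr (LexR.head _ _ hc))⟩

end LexLemmas

section Runs
variable {Sigma Q : Type*}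

/-- A run of an NFA with step function `step` on word `w`. -/
def IsRun (step : Q → Sigma → Set Q) (w : List Sigma) (ρ : ℕ → Q) : Prop :=
  ∀ (i : ℕ) (h : i < w.length), ρ (i + 1) ∈ step (ρ i) (w.get ⟨i, h⟩)

lemma evalFrom_mono (M : NFA Sigma Q) {S T : Set Q} (h : S ⊆ T) (w : List Sigma) :
    M.evalFrom S w ⊆ M.evalFrom T w := by
  induction w generalizing S T with
  | nil => simpa using h
  | cons a w ih =>
    have : M.stepSet S a ⊆ M.stepSet T a := by
      intro q hq
      rw [NFA.mem_stepSet] at hq ⊢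
      obtain ⟨t, ht, hq⟩ := hq
      exact ⟨t, h ht, hq⟩
    exact ih this

lemma evalFrom_append (M : NFA Sigma Q) (S : Set Q) (u v : List Sigma) :
    M.evalFrom S (u ++ v) = M.evalFrom (M.evalFrom S u) v := by
  simp [NFA.evalFrom, List.foldl_append]

/-- from a run, membership of the corresponding infix in evalFrom. -/
lemma run_infix_mem (step : Q → Sigma → Set Q) {w : List Sigma} {ρ : ℕ → Q}
    (hρ : IsRun step w ρ) {i j : ℕ} (hij : i ≤ j) (hj : j ≤ w.length) :
    ρ j ∈ (NFA.mk step {ρ i} ∅).evalFrom {ρ i} ((w.drop i).take (j - i)) := by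
  obtain ⟨k, rfl⟩ := Nat.exists_eq_add_of_le hij
  clear hij
  induction k with
  | zero => simp
  | succ k ih =>
    have hik : i + k < w.length := by omega
    have hik' : i + k ≤ w.length := by omega
    have htake : (w.drop i).take (i + (k+1) - i) = (w.drop i).take (i + k - i) ++ [w.get ⟨i + k, hik⟩] := by
      have h1 : i + (k+1) - i = (i + k - i) + 1 := by omega
      rw [h1]
      rw [List.take_succ]
      congr 1
      have : i + k - i < (w.drop i).length := by simp; omega
      rw [List.getElem?_eq_getElem this]
      simp only [Option.toList_some, List.get_eq_getElem, List.getElem_drop]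
      congr 2
      omega
    rw [htake, NFA.evalFrom_append, NFA.evalFrom_singleton]
    rw [NFA.mem_stepSet]
    exact ⟨ρ (i + k), ih hik', by simpa [Nat.add_assoc] using hρ (i + k) hik⟩

/-- extract a run from evalFrom membership. -/
lemma run_of_evalFrom (step : Q → Sigma → Set Q) {F0 : Set Q} {S : Set Q} {w : List Sigma} {q' : Q}
    (h : q' ∈ (NFA.mk step S F0).evalFrom S w) :
    ∃ ρ : ℕ → Q, ρ 0 ∈ S ∧ ρ w.length = q' ∧ IsRun step w ρ := by
  induction w generalizing S with
  | nil => exact ⟨fun _ => q', by simpa using h, rfl, fun i hi => by simp at hi⟩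
  | cons a w ih =>
    have h' : q' ∈ (NFA.mk step ((NFA.mk step S F0).stepSet S a) F0).evalFrom
        ((NFA.mk step S F0).stepSet S a) w := h
    obtain ⟨ρ', h0, hlen, hrun⟩ := ih h'
    rw [NFA.mem_stepSet] at h0
    obtain ⟨s, hs, hstep⟩ := h0
    refine ⟨fun i => Nat.rec s (fun i _ => ρ' i) i, hs, hlen, ?_⟩
    intro i hi
    cases i with
    | zero => simpa using hstep
    | succ i =>
      have := hrun i (by simpa using Nat.lt_of_succ_lt_succ hi)
      simpa using this

end Runs

section Signature
variable {Sigma Q : Type*}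

open Classical in
/-- first occurrence of `q` in the run `ρ` within `[0, n]`, or `n+1` if none. -/
noncomputable def foF (n : ℕ) (ρ : ℕ → Q) (q : Q) : ℕ :=
  if ∃ i, i ≤ n ∧ ρ i = q then sInf {i | i ≤ n ∧ ρ i = q} else n + 1

open Classical in
/-- last occurrence of `q` in the run `ρ` within `[0, n]`, or `n+1` if none. -/
noncomputable def loF (n : ℕ) (ρ : ℕ → Q) (q : Q) : ℕ :=
  if ∃ i, i ≤ n ∧ ρ i = q then Nat.findGreatest (fun i => ρ i = q) n else n + 1

lemma foF_le {n : ℕ} {ρ : ℕ → Q} {q : Q} {i : ℕ} (hi : i ≤ n) (hq : ρ i = q) :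
    foF n ρ q ≤ i := by
  rw [foF, if_pos ⟨i, hi, hq⟩]
  exact Nat.sInf_le ⟨hi, hq⟩

open Classical in
lemma le_loF {n : ℕ} {ρ : ℕ → Q} {q : Q} {i : ℕ} (hi : i ≤ n) (hq : ρ i = q) :
    i ≤ loF n ρ q := by
  rw [loF, if_pos ⟨i, hi, hq⟩]
  exact Nat.le_findGreatest hi hq

lemma foF_mem {n : ℕ} {ρ : ℕ → Q} {q : Q} (h : foF n ρ q ≤ n) :
    ρ (foF n ρ q) = q := by
  by_cases hocc : ∃ i, i ≤ n ∧ ρ i = q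
  · rw [foF, if_pos hocc]
    obtain ⟨i, hi, hq⟩ := hocc
    exact (Nat.sInf_mem (⟨i, hi, hq⟩ : Set.Nonempty {i | i ≤ n ∧ ρ i = q})).2
  · rw [foF, if_neg hocc] at h; omega

open Classical in
lemma loF_mem {n : ℕ} {ρ : ℕ → Q} {q : Q} (h : loF n ρ q ≤ n) :
    ρ (loF n ρ q) = q := by
  by_cases hocc : ∃ i, i ≤ n ∧ ρ i = q
  · rw [loF, if_pos hocc]
    obtain ⟨i, hi, hq⟩ := hocc
    exact Nat.findGreatest_spec (P := fun i => ρ i = q) hi hq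
  · rw [loF, if_neg hocc] at h; omega

open Classical in
lemma loF_le {n : ℕ} {ρ : ℕ → Q} {q : Q} (h : ∃ i, i ≤ n ∧ ρ i = q) :
    loF n ρ q ≤ n := by
  rw [loF, if_pos h]
  exact Nat.findGreatest_le n

/-- `d` is straddled by some state loop. -/
def Straddle (fo lo : Q → ℕ) (d : ℕ) : Prop :=
  ∃ q, fo q ≤ d ∧ d < lo q

open Classical in
/-- the letter recorded at a cut position. -/
noncomputable def ksig (n : ℕ) (fo lo : Q → ℕ) (w : List Sigma) (q : Q) :
    Option (ℕ × Sigma) :=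
  if lo q < n ∧ ¬ Straddle fo lo (lo q) then (w[lo q]?).map (fun a => (lo q, a)) else none

/-- An accepting run. -/
def AccRun (step : Q → Sigma → Set Q) (q0 : Q) (F : Set Q) (w : List Sigma) (ρ : ℕ → Q) : Prop :=
  ρ 0 = q0 ∧ ρ w.length ∈ F ∧ IsRun step w ρ

lemma exists_accRun {step : Q → Sigma → Set Q} {q0 : Q} {F : Set Q} {w : List Sigma}
    (h : w ∈ (NFA.mk step {q0} F).accepts) : ∃ ρ, AccRun step q0 F w ρ := by
  obtain ⟨qf, hqf, hmem⟩ := h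
  obtain ⟨ρ, h0, hlen, hrun⟩ := run_of_evalFrom step hmem
  exact ⟨ρ, by simpa using h0, hlen ▸ hqf, hrun⟩

end Signature

section Core
variable {Sigma Q : Type*} [PartialOrder Sigma]

lemma drop_take_decomp (p : List Sigma) (aa : Sigma) (s : List Sigma) {i j d : ℕ}
    (hd : d = p.length) (hi : i ≤ d) (hj : d < j) :
    ((p ++ aa :: s).drop i).take (j - i) = p.drop i ++ aa :: s.take (j - d - 1) := by
  subst hd
  rw [List.drop_append]
  have h0 : i - p.length = 0 := by omega
  rw [h0, List.drop_zero, List.take_append]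
  have hlen : (p.drop i).length = p.length - i := List.length_drop
  have h1 : (p.drop i).take (j - i) = p.drop i := by
    apply List.take_of_length_le; omega
  have h2 : j - i - (p.drop i).length = (j - p.length - 1) + 1 := by omega
  rw [h1, h2, List.take_succ_cons]

lemma get?_first_diff {p : List Sigma} {aa : Sigma} {s : List Sigma} :
    (p ++ aa :: s)[p.length]? = some aa := by
  rw [List.getElem?_append_right (le_refl p.length)]
  simp

/-- Core lemma: two accepted words with accepting runs having the same signature are
equal or comparable. -/
lemma same_sig_comp (step : Q → Sigma → Set Q) (q0 : Q) (F : Set Q)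
    (hchain : ∀ q : Q, Bireachable step q0 F q →
      IsChainLang (· < ·) ((NFA.mk step {q} {q}).accepts : Set (List Sigma)))
    {n : ℕ} {u v : List Sigma} (hu : u.length = n) (hv : v.length = n)
    {ρu ρv : ℕ → Q} (hru : AccRun step q0 F u ρu) (hrv : AccRun step q0 F v ρv)
    (hfo : foF n ρu = foF n ρv) (hlo : loF n ρu = loF n ρv)
    (hk : ksig n (foF n ρu) (loF n ρu) u = ksig n (foF n ρv) (loF n ρv) v) :
    u = v ∨ LexComp (· < ·) u v := by
  by_cases hne : u = v
  · exact Or.inl hne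
  right
  obtain ⟨p, a, s, b, t, hup, hvp, hab⟩ := exists_first_diff (hu.trans hv.symm) hne
  set d := p.length with hd
  have hdn : d < n := by
    have := hu; rw [hup] at this; simp at this; omega
  by_cases hstr : Straddle (foF n ρu) (loF n ρu) d
  · -- straddle case: use the loop at q
    obtain ⟨q, hfoq, hloq⟩ := hstr
    set i := foF n ρu q with hi
    set j := loF n ρu q with hj
    have hin : i ≤ n := le_trans hfoq (le_of_lt hdn)
    have hρui : ρu i = q := foF_mem hin
    have hjn : j ≤ n := loF_le ⟨i, hin, hρui⟩
    have hρuj : ρu j = q := loF_mem hjn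
    have hiv : i = foF n ρv q := by rw [hi, hfo]
    have hjv : j = loF n ρv q := by rw [hj, hlo]
    have hρvi : ρv i = q := by rw [hiv]; exact foF_mem (hiv ▸ hin)
    have hρvj : ρv j = q := by rw [hjv]; exact loF_mem (hjv ▸ hjn)
    -- q is bireachable
    have hbir : Bireachable step q0 F q := by
      constructor
      · refine ⟨u.take i, ?_⟩
        have := run_infix_mem step hru.2.2 (Nat.zero_le i) (by omega : i ≤ u.length)
        rw [List.drop_zero, Nat.sub_zero, hρui, hru.1] at this
        exact this
      · refine ⟨u.drop j, ρu u.length, hru.2.1, ?_⟩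
        have := run_infix_mem step hru.2.2 (by omega : j ≤ u.length) (le_refl u.length)
        rw [hρuj] at this
        have htk : (u.drop j).take (u.length - j) = u.drop j := by
          apply List.take_of_length_le; simp
        rw [htk] at this
        exact this
    -- the two loop words
    have hx : ((u.drop i).take (j - i)) ∈ ((NFA.mk step {q} {q}).accepts : Set (List Sigma)) := by
      refine ⟨q, rfl, ?_⟩
      have := run_infix_mem step hru.2.2 (le_trans hfoq (le_of_lt hloq)) (by omega : j ≤ u.length)
      rw [hρui, hρuj] at this
      exact this
    have hy : ((v.drop i).take (j - i)) ∈ ((NFA.mk step {q} {q}).accepts : Set (List Sigma)) := by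
      refine ⟨q, rfl, ?_⟩
      have := run_infix_mem step hrv.2.2 (le_trans hfoq (le_of_lt hloq)) (by omega : j ≤ v.length)
      rw [hρvi, hρvj] at this
      exact this
    have hcomp := hchain q hbir _ hx _ hy
    have hxeq : (u.drop i).take (j - i) = p.drop i ++ a :: s.take (j - d - 1) := by
      rw [hup]; exact drop_take_decomp p a s hd hfoq hloq
    have hyeq : (v.drop i).take (j - i) = p.drop i ++ b :: t.take (j - d - 1) := by
      rw [hvp]; exact drop_take_decomp p b t hd hfoq hloq
    rw [hxeq, hyeq] at hcomp
    have hirr : ∀ x : Sigma, ¬ x < x := fun x => lt_irrefl x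
    rcases hcomp with h | h
    · rcases lexR_prefix_extract hirr _ h with h' | h'
      · exact Or.inl (hup ▸ hvp ▸ lexR_of_rel_head h' p s t)
      · exact absurd h' hab
    · rcases lexR_prefix_extract hirr _ h with h' | h'
      · exact Or.inr (hup ▸ hvp ▸ lexR_of_rel_head h' p t s)
      · exact absurd h'.symm hab
  · -- cut case: impossible since the recorded letters differ
    exfalso
    have hdle : d ≤ n := le_of_lt hdn
    have hfoq : foF n ρu (ρu d) ≤ d := foF_le hdle rfl
    have hloqd : d ≤ loF n ρu (ρu d) := le_loF hdle rfl
    have hloq : loF n ρu (ρu d) = d := by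
      by_contra hne'
      exact hstr ⟨ρu d, hfoq, by omega⟩
    have hcond : loF n ρu (ρu d) < n ∧ ¬ Straddle (foF n ρu) (loF n ρu) (loF n ρu (ρu d)) := by
      rw [hloq]; exact ⟨hdn, hstr⟩
    have h1 : ksig n (foF n ρu) (loF n ρu) u (ρu d) = some (d, a) := by
      rw [ksig, if_pos hcond, hloq, hup, hd, get?_first_diff]
      rfl
    have h2 : ksig n (foF n ρu) (loF n ρu) v (ρu d) = some (d, b) := by
      rw [ksig, if_pos hcond, hloq, hvp, hd, get?_first_diff]
      rfl
    rw [hk, ← hfo, ← hlo, h2] at h1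
    exact hab (by injection h1 with h1; injection h1 with _ h1; exact h1.symm)

end Core



section Counting
variable {Sigma Q : Type*} [Fintype Sigma] [Fintype Q] [PartialOrder Sigma]

lemma foF_le_succ {n : ℕ} (ρ : ℕ → Q) (q : Q) : foF n ρ q ≤ n + 1 := by
  by_cases h : ∃ i, i ≤ n ∧ ρ i = q
  · obtain ⟨i, hi, hq⟩ := h
    exact le_trans (foF_le hi hq) (by omega)
  · rw [foF, if_neg h]

open Classical in
lemma loF_le_succ {n : ℕ} (ρ : ℕ → Q) (q : Q) : loF n ρ q ≤ n + 1 := by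
  by_cases h : ∃ i, i ≤ n ∧ ρ i = q
  · exact le_trans (loF_le h) (by omega)
  · rw [loF, if_neg h]

open Classical in
lemma ksig_some {n : ℕ} {fo lo : Q → ℕ} {w : List Sigma} {q : Q} {pr : ℕ × Sigma}
    (h : ksig n fo lo w q = some pr) : pr.1 = lo q ∧ lo q < n := by
  rw [ksig] at h
  split at h
  · rename_i hc
    cases hg : w[lo q]? with
    | none => rw [hg] at h; simp at h
    | some a =>
      rw [hg] at h; simp at h
      cases h
      exact ⟨rfl, hc.1⟩
  · simp at h

/-- The signature type. -/
abbrev SigType (Sigma Q : Type*) (n : ℕ) :=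
  Q → Fin (n + 2) × Fin (n + 2) × Option (Fin (n + 2) × Sigma)

/-- The signature of a word given a run. -/
noncomputable def sigOf (n : ℕ) (ρ : ℕ → Q) (w : List Sigma) : SigType Sigma Q n :=
  fun q => (⟨min (foF n ρ q) (n + 1), by omega⟩, ⟨min (loF n ρ q) (n + 1), by omega⟩,
    (ksig n (foF n ρ) (loF n ρ) w q).map
      (fun pr => (⟨min pr.1 (n + 1), by omega⟩, pr.2)))

lemma sigOf_eq_imp {n : ℕ} {ρu ρv : ℕ → Q} {u v : List Sigma}
    (heq : sigOf n ρu u = sigOf n ρv v) :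
    foF n ρu = foF n ρv ∧ loF n ρu = loF n ρv ∧
      ksig n (foF n ρu) (loF n ρu) u = ksig n (foF n ρv) (loF n ρv) v := by
  have hfo : foF n ρu = foF n ρv := by
    funext q
    have h2 := congrArg (fun z => ((z.1 : Fin (n+2)) : ℕ)) (congrFun heq q)
    simp only [sigOf] at h2
    have e1 := foF_le_succ (n := n) ρu q
    have e2 := foF_le_succ (n := n) ρv q
    omega
  have hlo : loF n ρu = loF n ρv := by
    funext q
    have h2 := congrArg (fun z => ((z.2.1 : Fin (n+2)) : ℕ)) (congrFun heq q)
    simp only [sigOf] at h2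
    have e1 := loF_le_succ (n := n) ρu q
    have e2 := loF_le_succ (n := n) ρv q
    omega
  refine ⟨hfo, hlo, funext fun q => ?_⟩
  have h2 := congrArg (fun z => z.2.2) (congrFun heq q)
  simp only [sigOf] at h2
  cases c1 : ksig n (foF n ρu) (loF n ρu) u q with
  | none =>
    cases c2 : ksig n (foF n ρv) (loF n ρv) v q with
    | none => rfl
    | some pr => rw [c1, c2] at h2; simp at h2
  | some pr =>
    cases c2 : ksig n (foF n ρv) (loF n ρv) v q with
    | none => rw [c1, c2] at h2; simp at h2
    | some pr' =>
      rw [c1, c2] at h2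
      simp only [Option.map_some, Option.some.injEq, Prod.ext_iff, Fin.ext_iff] at h2
      obtain ⟨hp1, hp2⟩ := ksig_some c1
      obtain ⟨hp1', hp2'⟩ := ksig_some c2
      obtain ⟨h2a, h2b⟩ := h2
      have : pr.1 = pr'.1 := by omega
      exact congrArg some (Prod.ext this h2b)

open Classical in
/-- The signature map. -/
noncomputable def sigMap (step : Q → Sigma → Set Q) (q0 : Q) (F : Set Q) (n : ℕ)
    (w : List Sigma) : SigType Sigma Q n :=
  if h : w ∈ ((NFA.mk step {q0} F).accepts : Set (List Sigma)) then
    sigOf n (Classical.choose (exists_accRun h)) w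
  else fun _ => (0, 0, none)

lemma sigMap_inj (step : Q → Sigma → Set Q) (q0 : Q) (F : Set Q)
    (hchain : ∀ q : Q, Bireachable step q0 F q →
      IsChainLang (· < ·) ((NFA.mk step {q} {q}).accepts : Set (List Sigma)))
    {n : ℕ} {u v : List Sigma} (hu : u ∈ ((NFA.mk step {q0} F).accepts : Set (List Sigma)))
    (hv : v ∈ ((NFA.mk step {q0} F).accepts : Set (List Sigma)))
    (hul : u.length = n) (hvl : v.length = n)
    (heq : sigMap step q0 F n u = sigMap step q0 F n v) :
    u = v ∨ LexComp (· < ·) u v := by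
  rw [sigMap, dif_pos hu, sigMap, dif_pos hv] at heq
  obtain ⟨hfo, hlo, hk⟩ := sigOf_eq_imp heq
  exact same_sig_comp step q0 F hchain hul hvl
    (Classical.choose_spec (exists_accRun hu)) (Classical.choose_spec (exists_accRun hv))
    hfo hlo hk

lemma card_sigType_le (n : ℕ) (hn : 1 ≤ n) :
    Nat.card (SigType Sigma Q n) ≤
      (27 * (Fintype.card Sigma + 1)) ^ Fintype.card Q * n ^ (3 * Fintype.card Q) := by
  have hcard : Nat.card (SigType Sigma Q n) =
      ((n + 2) * ((n + 2) * ((n + 2) * Fintype.card Sigma + 1))) ^ Fintype.card Q := by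
    rw [SigType, Nat.card_fun, Nat.card_eq_fintype_card, Nat.card_eq_fintype_card]
    simp only [Fintype.card_prod, Fintype.card_option, Fintype.card_fin]
  rw [hcard]
  have h1 : (n + 2) * ((n + 2) * ((n + 2) * Fintype.card Sigma + 1)) ≤
      27 * (Fintype.card Sigma + 1) * n ^ 3 := by
    have h2 : n + 2 ≤ 3 * n := by omega
    have h3 : (n + 2) * Fintype.card Sigma + 1 ≤ 3 * n * (Fintype.card Sigma + 1) := by
      nlinarith
    calc (n + 2) * ((n + 2) * ((n + 2) * Fintype.card Sigma + 1))
        ≤ (3 * n) * ((3 * n) * (3 * n * (Fintype.card Sigma + 1))) :=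
          Nat.mul_le_mul h2 (Nat.mul_le_mul h2 h3)
      _ = 27 * (Fintype.card Sigma + 1) * n ^ 3 := by ring
  calc ((n + 2) * ((n + 2) * ((n + 2) * Fintype.card Sigma + 1))) ^ Fintype.card Q
      ≤ (27 * (Fintype.card Sigma + 1) * n ^ 3) ^ Fintype.card Q :=
        Nat.pow_le_pow_left h1 _
    _ = (27 * (Fintype.card Sigma + 1)) ^ Fintype.card Q * n ^ (3 * Fintype.card Q) := by
        rw [mul_pow, ← pow_mul]

/-- Hard direction: chains at bireachable states imply polynomial antichain growth. -/
lemma chains_imp_poly (step : Q → Sigma → Set Q) (q0 : Q) (F : Set Q)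
    (hchain : ∀ q : Q, Bireachable step q0 F q →
      IsChainLang (· < ·) ((NFA.mk step {q} {q}).accepts : Set (List Sigma))) :
    PolyAntichainGrowth (· < ·) ((NFA.mk step {q0} F).accepts : Set (List Sigma)) := by
  intro L' hL' hA
  set C := (27 * (Fintype.card Sigma + 1)) ^ Fintype.card Q with hC
  set K := 3 * Fintype.card Q with hK
  have hcount : ∀ n : ℕ, 1 ≤ n → countLen L' n ≤ C * n ^ K := by
    intro n hn
    have hinj : Set.InjOn (sigMap step q0 F n) {w ∈ L' | w.length = n} := by
      intro u hu v hv heq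
      have hu' : u ∈ ((NFA.mk step {q0} F).accepts : Set (List Sigma)) := hL' hu.1
      have hv' : v ∈ ((NFA.mk step {q0} F).accepts : Set (List Sigma)) := hL' hv.1
      rcases sigMap_inj step q0 F hchain hu' hv' hu.2 hv.2 heq with h | h
      · exact h
      · by_contra hne
        exact (hA n) u hu v hv hne h
    have hsub : ∀ w ∈ {w ∈ L' | w.length = n},
        sigMap step q0 F n w ∈ (Set.univ : Set (SigType Sigma Q n)) :=
      fun w _ => Set.mem_univ _
    have hle := Set.ncard_le_ncard_of_injOn (sigMap step q0 F n) hsub hinj Set.finite_univ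
    rw [Set.ncard_univ] at hle
    calc countLen L' n ≤ Nat.card (SigType Sigma Q n) := hle
      _ ≤ C * n ^ K := card_sigType_le n hn
  refine ⟨K, ?_⟩
  have hev : ∀ᶠ n in Filter.atTop,
      (countLen L' n : ℝ≥0∞) / (n : ℝ≥0∞) ^ K ≤ (C : ℝ≥0∞) := by
    filter_upwards [Filter.eventually_ge_atTop 1] with n hn
    have h1 : (countLen L' n : ℝ≥0∞) ≤ (C : ℝ≥0∞) * (n : ℝ≥0∞) ^ K := by
      calc (countLen L' n : ℝ≥0∞) ≤ ((C * n ^ K : ℕ) : ℝ≥0∞) := by exact_mod_cast hcount n hn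
        _ = (C : ℝ≥0∞) * (n : ℝ≥0∞) ^ K := by push_cast; ring
    exact ENNReal.div_le_of_le_mul h1
  exact lt_of_le_of_lt (Filter.limsup_le_of_le (by isBoundedDefault) hev)
    (ENNReal.natCast_lt_top C)

end Counting


section Easy
variable {Sigma Q : Type*} [Fintype Sigma] [Fintype Q] [PartialOrder Sigma]

lemma exp_beats_poly (A c m k : ℕ) :
    ∀ᶠ j : ℕ in Filter.atTop, A * (c + m * j) ^ k < 2 ^ j := by
  set B : ℝ := (A : ℝ) * ((c : ℝ) + (m : ℝ)) ^ k with hB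
  have hB0 : 0 ≤ B := by positivity
  have h := isLittleO_pow_const_const_pow_of_one_lt (R := ℝ) k
    (by norm_num : (1 : ℝ) < 2)
  have hδ : (0 : ℝ) < 1 / (B + 1) := by positivity
  filter_upwards [h.def hδ, Filter.eventually_ge_atTop 1] with j hj hj1
  have hj' : (j : ℝ) ^ k ≤ (1 / (B + 1)) * 2 ^ j := by
    have h2 : ‖(j : ℝ) ^ k‖ = (j : ℝ) ^ k := by
      rw [Real.norm_eq_abs, abs_of_nonneg (by positivity)]
    have h3 : ‖(2 : ℝ) ^ j‖ = (2 : ℝ) ^ j := by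
      rw [Real.norm_eq_abs, abs_of_nonneg (by positivity)]
    rwa [h2, h3] at hj
  have hcm : ((c : ℝ) + m * j) ^ k ≤ ((c : ℝ) + m) ^ k * (j : ℝ) ^ k := by
    rw [← mul_pow]
    apply pow_le_pow_left₀ (by positivity)
    have hj1' : (1 : ℝ) ≤ (j : ℝ) := by exact_mod_cast hj1
    nlinarith [Nat.cast_nonneg (α := ℝ) c, Nat.cast_nonneg (α := ℝ) m]
  have key : (A : ℝ) * ((c : ℝ) + m * j) ^ k < 2 ^ j := by
    calc (A : ℝ) * ((c : ℝ) + m * j) ^ k ≤ B * (j : ℝ) ^ k := by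
          rw [hB, mul_assoc]
          exact mul_le_mul_of_nonneg_left hcm (Nat.cast_nonneg A)
      _ ≤ B * ((1 / (B + 1)) * 2 ^ j) := mul_le_mul_of_nonneg_left hj' hB0
      _ = (B / (B + 1)) * 2 ^ j := by ring
      _ < 1 * 2 ^ j := by
          apply mul_lt_mul_of_pos_right _ (by positivity)
          rw [div_lt_one (by positivity)]
          linarith
      _ = 2 ^ j := one_mul _
  have : ((A * (c + m * j) ^ k : ℕ) : ℝ) < ((2 ^ j : ℕ) : ℝ) := by push_cast; exact key
  exact_mod_cast this

lemma not_chain_imp_not_poly (step : Q → Sigma → Set Q) (q0 : Q) (F : Set Q) (q : Q)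
    (hbir : Bireachable step q0 F q)
    (hnc : ¬ IsChainLang (· < ·) ((NFA.mk step {q} {q}).accepts : Set (List Sigma))) :
    ¬ PolyAntichainGrowth (· < ·) ((NFA.mk step {q0} F).accepts : Set (List Sigma)) := by
  intro hpoly
  have hirr : ∀ x : Sigma, ¬ x < x := fun x => lt_irrefl x
  unfold IsChainLang at hnc
  push_neg at hnc
  obtain ⟨u, hu, v, hv, hcomp⟩ := hnc
  obtain ⟨p, a, s, b, t, hup, hvp, hab, hlt1, hlt2⟩ := incomp_decomp hirr hcomp
  obtain ⟨w0, hw0⟩ := hbir.1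
  obtain ⟨w1, qf, hqf, hw1⟩ := hbir.2
  set M : NFA Sigma Q := NFA.mk step {q0} F with hM
  -- membership facts for the loops
  have hqu : q ∈ M.evalFrom {q} u := by
    obtain ⟨q', hq', hmem⟩ := hu
    rw [Set.mem_singleton_iff] at hq'
    subst hq'
    exact hmem
  have hqv : q ∈ M.evalFrom {q} v := by
    obtain ⟨q', hq', hmem⟩ := hv
    rw [Set.mem_singleton_iff] at hq'
    subst hq'
    exact hmem
  set g : Bool → List Sigma := fun c => if c then u ++ v else v ++ u with hg
  have hqg : ∀ c, q ∈ M.evalFrom {q} (g c) := by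
    have haux : ∀ x y : List Sigma, q ∈ M.evalFrom {q} x → q ∈ M.evalFrom {q} y →
        q ∈ M.evalFrom {q} (x ++ y) := by
      intro x y hx hy
      rw [evalFrom_append]
      exact evalFrom_mono M (Set.singleton_subset_iff.2 hx) y hy
    intro c
    cases c
    · simpa only [hg, Bool.false_eq_true, if_false] using haux v u hqv hqu
    · simpa only [hg, if_true] using haux u v hqu hqv
  have hqflat : ∀ bs : List Bool, q ∈ M.evalFrom {q} ((bs.map g).flatten) := by
    intro bs
    induction bs with
    | nil => simp
    | cons c bs ih =>
      rw [List.map_cons, List.flatten_cons, evalFrom_append]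
      exact evalFrom_mono M (Set.singleton_subset_iff.2 (hqg c)) _ ih
  set enc : List Bool → List Sigma := fun bs => w0 ++ ((bs.map g).flatten ++ w1) with henc
  set L' : Set (List Sigma) := Set.range enc with hL'
  -- L' is contained in the language
  have hsub : L' ⊆ (M.accepts : Set (List Sigma)) := by
    rintro w ⟨bs, rfl⟩
    refine ⟨qf, hqf, ?_⟩
    show qf ∈ M.evalFrom {q0} _
    rw [henc]
    simp only
    rw [evalFrom_append, evalFrom_append]
    apply evalFrom_mono M (Set.singleton_subset_iff.2 ?_) w1 hw1
    exact evalFrom_mono M (Set.singleton_subset_iff.2 hw0) _ (hqflat bs)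
  -- lengths
  set m : ℕ := u.length + v.length with hm
  have hm1 : 1 ≤ m := by
    rw [hm, hup]
    simp only [List.length_append, List.length_cons]
    omega
  set c0 : ℕ := w0.length + w1.length with hc0
  have hlen_g : ∀ c, (g c).length = m := by
    intro c
    cases c <;> simp [hg, hm] <;> omega
  have hlen_flat : ∀ bs : List Bool, ((bs.map g).flatten).length = m * bs.length := by
    intro bs
    induction bs with
    | nil => simp
    | cons c bs ih =>
      rw [List.map_cons, List.flatten_cons, List.length_append, ih, hlen_g c, List.length_cons]
      ring
  have hlen : ∀ bs : List Bool, (enc bs).length = c0 + m * bs.length := by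
    intro bs
    simp only [henc, List.length_append, hlen_flat bs, hc0]
    ring
  -- incomparability of distinct encodings of equal length
  have hgtrue : ∀ Z : List Sigma, g true ++ Z = p ++ a :: (s ++ (v ++ Z)) := by
    intro Z
    simp only [hg, if_true, hup, List.append_assoc, List.cons_append]
  have hgfalse : ∀ Z : List Sigma, g false ++ Z = p ++ b :: (t ++ (u ++ Z)) := by
    intro Z
    simp only [hg, Bool.false_eq_true, if_false, hvp, List.append_assoc, List.cons_append]
  have hkey : ∀ (e s' t' : List Bool),
      ¬ LexComp (· < ·) (enc (e ++ true :: s')) (enc (e ++ false :: t')) := by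
    intro e s' t'
    have estr : ∀ (c : Bool) (r : List Bool), enc (e ++ c :: r) =
        (w0 ++ (e.map g).flatten) ++ (g c ++ ((r.map g).flatten ++ w1)) := by
      intro c r
      simp only [henc, List.map_append, List.map_cons, List.flatten_append, List.flatten_cons,
        List.append_assoc]
    have e1 : enc (e ++ true :: s') =
        ((w0 ++ (e.map g).flatten) ++ p) ++ a :: (s ++ (v ++ ((s'.map g).flatten ++ w1))) := by
      rw [estr true s', hgtrue]
      simp only [List.append_assoc, List.cons_append]
    have e2 : enc (e ++ false :: t') =
        ((w0 ++ (e.map g).flatten) ++ p) ++ b :: (t ++ (u ++ ((t'.map g).flatten ++ w1))) := by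
      rw [estr false t', hgfalse]
      simp only [List.append_assoc, List.cons_append]
    rw [e1, e2]
    exact not_lexComp_of_heads hirr hlt1 hlt2 hab _ _ _
  have hinc : ∀ bs bs' : List Bool, bs.length = bs'.length → bs ≠ bs' →
      ¬ LexComp (· < ·) (enc bs) (enc bs') := by
    intro bs bs' hlb hbsne
    obtain ⟨e, x, s', y, t', hbs, hbs', hxy⟩ := exists_first_diff hlb hbsne
    subst hbs hbs'
    cases x <;> cases y
    · exact absurd rfl hxy
    · intro hc
      exact hkey e t' s' (Or.symm hc)
    · exact hkey e s' t'
    · exact absurd rfl hxy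
  have hencinj : ∀ bs bs' : List Bool, bs.length = bs'.length → enc bs = enc bs' → bs = bs' := by
    intro bs bs' hlb hE
    by_contra hbsne
    exact hinc bs bs' hlb hbsne (hE ▸ lexComp_refl (enc bs))
  have hanti : AntichainFamily (· < ·) L' := by
    intro n w hwmem w' hwmem' hne
    obtain ⟨bs, rfl⟩ := hwmem.1
    obtain ⟨bs', rfl⟩ := hwmem'.1
    have hlb : bs.length = bs'.length := by
      have h1 := hwmem.2
      have h2 := hwmem'.2
      rw [hlen bs] at h1
      rw [hlen bs'] at h2
      have : m * bs.length = m * bs'.length := by omega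
      exact Nat.eq_of_mul_eq_mul_left (by omega) this
    exact hinc bs bs' hlb (fun h => hne (by rw [h]))
  -- lower bound on the count
  have hcount : ∀ j : ℕ, (2 : ℕ) ^ j ≤ countLen L' (c0 + m * j) := by
    intro j
    set n := c0 + m * j with hn
    have hfin : ({w ∈ L' | w.length = n}).Finite := by
      apply Set.Finite.subset (List.finite_length_eq Sigma n)
      intro w hw
      exact hw.2
    have hinj : Function.Injective (fun f : Fin j → Bool => enc (List.ofFn f)) := by
      intro f f' hff
      simp only at hff
      exact List.ofFn_injective (hencinj _ _ (by simp) hff)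
    have himg : (fun f : Fin j → Bool => enc (List.ofFn f)) '' Set.univ ⊆
        {w ∈ L' | w.length = n} := by
      rintro w ⟨f, -, rfl⟩
      exact ⟨⟨_, rfl⟩, by rw [hlen]; simp [hn]⟩
    have h1 : ((fun f : Fin j → Bool => enc (List.ofFn f)) '' Set.univ).ncard = 2 ^ j := by
      rw [Set.ncard_image_of_injective _ hinj, Set.ncard_univ, Nat.card_fun,
        Nat.card_eq_fintype_card, Nat.card_eq_fintype_card]
      simp
    calc (2 : ℕ) ^ j = ((fun f : Fin j → Bool => enc (List.ofFn f)) '' Set.univ).ncard := h1.symm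
      _ ≤ countLen L' n := Set.ncard_le_ncard himg hfin
  -- derive the contradiction
  obtain ⟨k, hk⟩ := hpoly L' hsub hanti
  set f : ℕ → ℝ≥0∞ := fun n => (countLen L' n : ℝ≥0∞) / (n : ℝ≥0∞) ^ k with hf
  have hlt : Filter.limsup f Filter.atTop < Filter.limsup f Filter.atTop + 1 :=
    ENNReal.lt_add_right hk.ne one_ne_zero
  obtain ⟨C, hC⟩ := ENNReal.exists_nat_gt (ENNReal.add_ne_top.2 ⟨hk.ne, ENNReal.one_ne_top⟩)
  have hev : ∀ᶠ n in Filter.atTop, f n < (C : ℝ≥0∞) :=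
    (Filter.eventually_lt_of_limsup_lt hlt).mono fun n hn => hn.trans hC
  rw [Filter.eventually_atTop] at hev
  obtain ⟨N, hN⟩ := hev
  obtain ⟨j, hj1, hj2⟩ := ((exp_beats_poly C c0 m k).and
    (Filter.eventually_ge_atTop (max N 1))).exists
  set n := c0 + m * j with hn
  have hjN : N ≤ j := le_trans (le_max_left _ _) hj2
  have hj1' : 1 ≤ j := le_trans (le_max_right _ _) hj2
  have hnN : N ≤ n := by
    have : j ≤ n := by
      calc j = 1 * j := (one_mul j).symm
        _ ≤ m * j := Nat.mul_le_mul_right j hm1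
        _ ≤ n := by omega
    omega
  have hn1 : 1 ≤ n := by
    have : j ≤ n := by
      calc j = 1 * j := (one_mul j).symm
        _ ≤ m * j := Nat.mul_le_mul_right j hm1
        _ ≤ n := by omega
    omega
  have hfn : f n < (C : ℝ≥0∞) := hN n hnN
  have hge : (C : ℝ≥0∞) ≤ f n := by
    have hnk0 : ((n : ℝ≥0∞)) ^ k ≠ 0 := by
      apply pow_ne_zero
      exact Nat.cast_ne_zero.2 (by omega)
    have hnkt : ((n : ℝ≥0∞)) ^ k ≠ ⊤ := by
      apply ENNReal.pow_ne_top
      exact ENNReal.natCast_ne_top n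
    have hnum : (C : ℝ≥0∞) * (n : ℝ≥0∞) ^ k ≤ ((2 : ℝ≥0∞)) ^ j := by
      have : ((C * n ^ k : ℕ) : ℝ≥0∞) ≤ ((2 ^ j : ℕ) : ℝ≥0∞) := by
        exact_mod_cast le_of_lt hj1
      calc (C : ℝ≥0∞) * (n : ℝ≥0∞) ^ k = ((C * n ^ k : ℕ) : ℝ≥0∞) := by push_cast; ring
        _ ≤ ((2 ^ j : ℕ) : ℝ≥0∞) := this
        _ = ((2 : ℝ≥0∞)) ^ j := by push_cast; ring
    have hCle : (C : ℝ≥0∞) ≤ ((2 : ℝ≥0∞)) ^ j / (n : ℝ≥0∞) ^ k :=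
      (ENNReal.le_div_iff_mul_le (Or.inl hnk0) (Or.inl hnkt)).2 hnum
    refine le_trans hCle ?_
    apply ENNReal.div_le_div_right
    have := hcount j
    calc ((2 : ℝ≥0∞)) ^ j = ((2 ^ j : ℕ) : ℝ≥0∞) := by push_cast; ring
      _ ≤ (countLen L' n : ℝ≥0∞) := by exact_mod_cast this
  exact absurd hfn (not_lt.2 hge)

end Easy
/-- The language of an NFA `A` over a partially ordered alphabet has polynomial antichain
growth iff `L(A_{q,q})` is a chain for every bireachable state `q`. -/
theorem nfa_poly_antichain_iff_chains {Sigma Q : Type*} [Fintype Sigma] [Fintype Q]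
    [PartialOrder Sigma] (step : Q → Sigma → Set Q) (q0 : Q) (F : Set Q) :
    PolyAntichainGrowth (· < ·) ((NFA.mk step {q0} F).accepts : Set (List Sigma)) ↔
      ∀ q : Q, Bireachable step q0 F q →
        IsChainLang (· < ·) ((NFA.mk step {q} {q}).accepts : Set (List Sigma)) := by
  constructor
  · intro hpoly q hbir
    by_contra hnc
    exact not_chain_imp_not_poly step q0 F q hbir hnc hpoly
  · exact chains_imp_poly step q0 F
end

section
/- Let A = (Q, Σ, Δ, q0, F) be an NFA over a partially ordered alphabet Σ. If 𝓛(A) does not have polynomial antichain growth, then 𝓛(A) contains an antichain with exponential growth (and hence has exponential antichain growth). -/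
open Filter
open scoped ENNReal

set_option linter.unusedSectionVars false

/-! ### Auxiliary lemmas about `LexR` -/

section LexLemmas
variable {α : Type*} {r : α → α → Prop}

lemma lexComp_cons {a : α} {u v : List α} (h : LexComp r u v) :
    LexComp r (a :: u) (a :: v) := by
  rcases h with h | h
  · exact Or.inl (.cons a h)
  · exact Or.inr (.cons a h)

lemma not_lexComp_diff (hirr : ∀ x : α, ¬ r x x) {a b : α}
    (hab : ¬ r a b) (hba : ¬ r b a) (hne : a ≠ b)
    (p u v : List α) : ¬ LexComp r (p ++ a :: u) (p ++ b :: v) := by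
  induction p with
  | nil =>
    rintro (h | h)
    · cases h with
      | head _ _ h => exact hab h
      | cons _ h => exact hne rfl
    · cases h with
      | head _ _ h => exact hba h
      | cons _ h => exact hne rfl
  | cons c p ih =>
    rintro (h | h)
    · cases h with
      | head _ _ h' => exact hirr c h'
      | cons _ h => exact ih (Or.inl h)
    · cases h with
      | head _ _ h' => exact hirr c h'
      | cons _ h => exact ih (Or.inr h)

lemma exists_diff_of_not_lexComp :
    ∀ u v : List α, ¬ LexComp r u v →
      ∃ (p u' v' : List α) (a b : α), u = p ++ a :: u' ∧ v = p ++ b :: v' ∧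
        ¬ r a b ∧ ¬ r b a ∧ a ≠ b := by
  intro u
  induction u with
  | nil => intro v h; exact absurd (Or.inl (.nil v)) h
  | cons a u' ih =>
    intro v h
    match v with
    | [] => exact absurd (Or.inr (.nil _)) h
    | b :: v' =>
      by_cases hab : a = b
      · subst hab
        have h' : ¬ LexComp r u' v' := fun hc => h (lexComp_cons hc)
        obtain ⟨p, x', y', c, d, h1, h2, h3, h4, h5⟩ := ih v' h'
        exact ⟨a :: p, x', y', c, d, by simp [h1], by simp [h2], h3, h4, h5⟩
      · refine ⟨[], u', v', a, b, rfl, rfl, ?_, ?_, hab⟩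
        · exact fun hr => h (Or.inl (.head _ _ hr))
        · exact fun hr => h (Or.inr (.head _ _ hr))

/-- First difference decomposition for distinct lists of equal length. -/
lemma exists_firstDiff {β : Type*} :
    ∀ (l₁ l₂ : List β), l₁.length = l₂.length → l₁ ≠ l₂ →
      ∃ (p r₁ r₂ : List β) (a b : β), l₁ = p ++ a :: r₁ ∧ l₂ = p ++ b :: r₂ ∧ a ≠ b := by
  intro l₁
  induction l₁ with
  | nil => intro l₂ hl hne; cases l₂ <;> simp_all
  | cons a r ih =>
    intro l₂ hl hne
    match l₂ with
    | [] => simp at hl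
    | b :: r₂ =>
      by_cases hab : a = b
      · subst hab
        have : r ≠ r₂ := fun hh => hne (by rw [hh])
        obtain ⟨p, s₁, s₂, c, d, h1, h2, h3⟩ := ih r₂ (by simpa using hl) this
        exact ⟨a :: p, s₁, s₂, c, d, by simp [h1], by simp [h2], h3⟩
      · exact ⟨[], r, r₂, a, b, rfl, rfl, hab⟩

end LexLemmas

/-! ### NFA auxiliary facts -/

section NfaAux
variable {Sigma Q : Type*} [Fintype Sigma] [Fintype Q] [PartialOrder Sigma]
variable (M : NFA Sigma Q)

lemma nfa_evalFrom_append (S : Set Q) (u v : List Sigma) :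
    M.evalFrom S (u ++ v) = M.evalFrom (M.evalFrom S u) v := by
  simp [NFA.evalFrom, List.foldl_append]

lemma nfa_evalFrom_cons (S : Set Q) (c : Sigma) (w : List Sigma) :
    M.evalFrom S (c :: w) = M.evalFrom (M.stepSet S c) w := rfl

lemma nfa_loop_flatten {P : Set Q} :
    ∀ (ws : List (List Sigma)), (∀ w ∈ ws, M.evalFrom P w = P) →
      M.evalFrom P ws.flatten = P := by
  intro ws
  induction ws with
  | nil => intro _; rfl
  | cons w ws ih =>
    intro h
    have h1 : M.evalFrom P w = P := h w (by simp)
    rw [List.flatten_cons, nfa_evalFrom_append, h1, ih (fun u hu => h u (by simp [hu]))]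

/-- The set of subset-states reachable from `P` in the subset construction. -/
def reachSet (P : Set Q) : Set (Set Q) := {R | ∃ w : List Sigma, M.evalFrom P w = R}

lemma self_mem_reachSet (P : Set Q) : P ∈ reachSet M P := ⟨[], rfl⟩

lemma reachSet_finite (P : Set Q) : (reachSet M P).Finite := Set.toFinite _

lemma reachSet_trans {P R : Set Q} (h : R ∈ reachSet M P) :
    reachSet M R ⊆ reachSet M P := by
  obtain ⟨w, rfl⟩ := h
  rintro T ⟨w', rfl⟩
  exact ⟨w ++ w', (nfa_evalFrom_append M P w w').symm ▸ rfl⟩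

/-- Number of reachable subset-states: the measure for the induction. -/
noncomputable def msr (P : Set Q) : ℕ := (reachSet M P).ncard

lemma msr_pos (P : Set Q) : 1 ≤ msr M P :=
  (Set.ncard_pos (reachSet_finite M P)).2 ⟨P, self_mem_reachSet M P⟩

lemma msr_le {P R : Set Q} (h : R ∈ reachSet M P) : msr M R ≤ msr M P :=
  Set.ncard_le_ncard (reachSet_trans M h) (reachSet_finite M P)

lemma msr_lt {P R : Set Q} (h : R ∈ reachSet M P) (h2 : P ∉ reachSet M R) :
    msr M R < msr M P := by
  apply Set.ncard_lt_ncard _ (reachSet_finite M P)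
  exact ⟨reachSet_trans M h, fun hcc => h2 (hcc (self_mem_reachSet M P))⟩

/-- The key condition: some reachable, co-reachable subset-state has two
incomparable loops. -/
def Cond : Prop := ∃ x u v y : List Sigma,
  ¬ LexComp (· < · : Sigma → Sigma → Prop) u v ∧
  M.evalFrom (M.eval x) u = M.eval x ∧
  M.evalFrom (M.eval x) v = M.eval x ∧
  ∃ q ∈ M.accept, q ∈ M.evalFrom (M.eval x) y

end NfaAux
section Core
variable {Sigma Q : Type*} [Fintype Sigma] [Fintype Q] [PartialOrder Sigma]
variable (M : NFA Sigma Q)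

lemma core_bound (hC : ¬ Cond M) :
    ∀ (n μ : ℕ) (P : Set Q) (x0 : List Sigma), M.eval x0 = P → msr M P ≤ μ →
    ∀ A : Set (List Sigma),
      (∀ w ∈ A, w.length = n) →
      (∀ w ∈ A, ∃ q ∈ M.accept, q ∈ M.evalFrom P w) →
      (∀ u ∈ A, ∀ v ∈ A, u ≠ v → ¬ LexComp (· < · : Sigma → Sigma → Prop) u v) →
      A.ncard ≤ (n * Fintype.card Sigma + 1) ^ μ := by
  intro n
  induction n with
  | zero =>
    intro μ P x0 _ _ A hlen _ _
    have hsub : A ⊆ {([] : List Sigma)} := by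
      intro w hw
      simpa using List.length_eq_zero_iff.mp (hlen w hw)
    calc A.ncard ≤ ({([] : List Sigma)} : Set (List Sigma)).ncard :=
          Set.ncard_le_ncard hsub (Set.finite_singleton _)
      _ = 1 := Set.ncard_singleton _
      _ ≤ (0 * Fintype.card Sigma + 1) ^ μ := by simp
  | succ n ih =>
    intro μ P x0 hx0 hμ A hlen hacc hanti
    classical
    set K := Fintype.card Sigma with hK
    -- finiteness
    have hAfin : A.Finite :=
      Set.Finite.subset (List.finite_length_eq Sigma (n+1)) (fun w hw => hlen w hw)
    -- tails
    set Ac : Sigma → Set (List Sigma) := fun c => {w | c :: w ∈ A} with hAc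
    have hAcfin : ∀ c, (Ac c).Finite := fun c =>
      Set.Finite.subset (List.finite_length_eq Sigma n)
        (fun w hw => by simpa using hlen (c :: w) hw)
    set Pc : Sigma → Set Q := fun c => M.stepSet P c with hPc
    have hPcreach : ∀ c, Pc c ∈ reachSet M P := fun c => ⟨[c], rfl⟩
    have hPceval : ∀ c, M.eval (x0 ++ [c]) = Pc c := fun c => by
      rw [NFA.eval, nfa_evalFrom_append]
      show M.evalFrom (M.eval x0) [c] = Pc c
      rw [hx0]; rfl
    -- facts about the tails
    have hAclen : ∀ c, ∀ w ∈ Ac c, w.length = n := fun c w hw => by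
      simpa using hlen (c :: w) hw
    have hAcacc : ∀ c, ∀ w ∈ Ac c, ∃ q ∈ M.accept, q ∈ M.evalFrom (Pc c) w := fun c w hw => by
      have := hacc (c :: w) hw
      rwa [nfa_evalFrom_cons] at this
    have hAcanti : ∀ c, ∀ u ∈ Ac c, ∀ v ∈ Ac c, u ≠ v →
        ¬ LexComp (· < · : Sigma → Sigma → Prop) u v := by
      intro c u hu v hv huv hcomp
      exact hanti (c :: u) hu (c :: v) hv (by simpa using huv) (lexComp_cons hcomp)
    -- at most one returning letter with nonempty tail set
    have huniq : ∀ c d : Sigma, c ≠ d → (Ac c).Nonempty → (Ac d).Nonempty →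
        P ∈ reachSet M (Pc c) → P ∈ reachSet M (Pc d) → False := by
      rintro c d hcd ⟨wc, hwc⟩ ⟨wd, hwd⟩ ⟨xc, hxc⟩ ⟨xd, hxd⟩
      have hne : (c :: wc) ≠ (d :: wd) := by simp [hcd]
      have hic := hanti _ hwc _ hwd hne
      have h1 : ¬ c < d := fun hlt => hic (Or.inl (.head _ _ hlt))
      have h2 : ¬ d < c := fun hlt => hic (Or.inr (.head _ _ hlt))
      apply hC
      refine ⟨x0, c :: xc, d :: xd, c :: wc, ?_, ?_, ?_, ?_⟩
      · exact not_lexComp_diff (fun a => lt_irrefl a) h1 h2 hcd [] xc xd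
      · rw [hx0, nfa_evalFrom_cons]; exact hxc
      · rw [hx0, nfa_evalFrom_cons]; exact hxd
      · rw [hx0]; exact hacc _ hwc
    -- the partition identity
    have himg : ∀ c : Sigma, (fun w => c :: w) '' (Ac c) = {w ∈ A | w.head? = some c} := by
      intro c
      ext w
      constructor
      · rintro ⟨w', hw', rfl⟩; exact ⟨hw', rfl⟩
      · rintro ⟨hwA, hhead⟩
        match w with
        | [] => simp at hhead
        | e :: w' =>
          simp only [List.head?_cons, Option.some.injEq] at hhead
          subst hhead
          exact ⟨w', hwA, rfl⟩
    have hsum : A.ncard = ∑ c : Sigma, (Ac c).ncard := by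
      rw [Set.ncard_eq_toFinset_card A hAfin]
      rw [Finset.card_eq_sum_card_fiberwise
        (f := fun w : List Sigma => w.head?) (t := Finset.univ) (fun x _ => Finset.mem_univ _)]
      rw [Fintype.sum_option (f := fun o => (hAfin.toFinset.filter
        (fun w : List Sigma => w.head? = o)).card)]
      have hnone : (hAfin.toFinset.filter (fun w : List Sigma => w.head? = none)).card = 0 := by
        rw [Finset.card_eq_zero, Finset.filter_eq_empty_iff]
        intro w hw
        have : w.length = n + 1 := hlen w (hAfin.mem_toFinset.mp hw)
        match w with
        | [] => simp at this
        | e :: w' => simp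
      rw [hnone, zero_add]
      apply Finset.sum_congr rfl
      intro c _
      have : ((hAfin.toFinset.filter (fun w : List Sigma => w.head? = some c)) : Set (List Sigma))
          = (fun w => c :: w) '' (Ac c) := by
        rw [himg c]
        ext w
        simp [Set.mem_setOf_eq, And.comm]
      calc (hAfin.toFinset.filter (fun w : List Sigma => w.head? = some c)).card
          = ((hAfin.toFinset.filter (fun w : List Sigma => w.head? = some c)) :
              Set (List Sigma)).ncard := (Set.ncard_coe_finset _).symm
        _ = ((fun w => c :: w) '' (Ac c)).ncard := by rw [this]
        _ = (Ac c).ncard := Set.ncard_image_of_injective _ (fun a b hab => by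
              simpa using hab)
    -- μ = ν + 1
    have hμ1 : 1 ≤ μ := le_trans (msr_pos M P) hμ
    obtain ⟨ν, rfl⟩ : ∃ ν, μ = ν + 1 := ⟨μ - 1, by omega⟩
    -- bounds for the tails
    have hbound_any : ∀ c, (Ac c).ncard ≤ (n * K + 1) ^ (ν + 1) := by
      intro c
      exact ih (ν + 1) (Pc c) (x0 ++ [c]) (hPceval c)
        (le_trans (msr_le M (hPcreach c)) hμ) (Ac c) (hAclen c) (hAcacc c) (hAcanti c)
    have hbound_drop : ∀ c, P ∉ reachSet M (Pc c) → (Ac c).ncard ≤ (n * K + 1) ^ ν := by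
      intro c hnr
      have : msr M (Pc c) ≤ ν := by
        have := msr_lt M (hPcreach c) hnr
        omega
      exact ih ν (Pc c) (x0 ++ [c]) (hPceval c) this (Ac c) (hAclen c) (hAcacc c) (hAcanti c)
    have hbound_empty : ∀ c, ¬ (Ac c).Nonempty → (Ac c).ncard = 0 := by
      intro c hc
      rw [Set.not_nonempty_iff_eq_empty] at hc
      simp [hc]
    -- final arithmetic
    have hxy : n * K + 1 ≤ (n + 1) * K + 1 := by nlinarith
    have hKy : K ≤ (n + 1) * K + 1 := by nlinarith
    have harith : (n * K + 1) ^ (ν + 1) + K * (n * K + 1) ^ ν ≤ ((n + 1) * K + 1) ^ (ν + 1) := by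
      have h1 : (n * K + 1) ^ (ν + 1) + K * (n * K + 1) ^ ν
          = (n * K + 1) ^ ν * ((n + 1) * K + 1) := by ring
      rw [h1, pow_succ]
      exact Nat.mul_le_mul_right _ (Nat.pow_le_pow_left hxy ν)
    rw [hsum]
    by_cases hex : ∃ c0, (Ac c0).Nonempty ∧ P ∈ reachSet M (Pc c0)
    · obtain ⟨c0, hne0, hret0⟩ := hex
      rw [← Finset.add_sum_erase _ _ (Finset.mem_univ c0)]
      have hrest : ∑ c ∈ Finset.univ.erase c0, (Ac c).ncard ≤ K * (n * K + 1) ^ ν := by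
        calc ∑ c ∈ Finset.univ.erase c0, (Ac c).ncard
            ≤ (Finset.univ.erase c0).card * ((n * K + 1) ^ ν) := by
              apply Finset.sum_le_card_nsmul
              intro c hc
              have hcc0 : c ≠ c0 := (Finset.mem_erase.mp hc).1
              by_cases hcne : (Ac c).Nonempty
              · by_cases hret : P ∈ reachSet M (Pc c)
                · exact absurd (huniq c c0 hcc0 hcne hne0 hret hret0) (fun h => h)
                · exact hbound_drop c hret
              · rw [hbound_empty c hcne]; exact Nat.zero_le _
          _ ≤ K * (n * K + 1) ^ ν := by
              apply Nat.mul_le_mul_right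
              calc (Finset.univ.erase c0).card ≤ Finset.univ.card := Finset.card_le_card
                    (Finset.erase_subset _ _)
                _ = K := rfl
      calc (Ac c0).ncard + ∑ c ∈ Finset.univ.erase c0, (Ac c).ncard
          ≤ (n * K + 1) ^ (ν + 1) + K * (n * K + 1) ^ ν :=
            Nat.add_le_add (hbound_any c0) hrest
        _ ≤ ((n + 1) * K + 1) ^ (ν + 1) := harith
    · push_neg at hex
      have hterm : ∀ c, (Ac c).ncard ≤ (n * K + 1) ^ ν := by
        intro c
        by_cases hcne : (Ac c).Nonempty
        · exact hbound_drop c (hex c hcne)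
        · rw [hbound_empty c hcne]; exact Nat.zero_le _
      calc ∑ c : Sigma, (Ac c).ncard ≤ Finset.univ.card * ((n * K + 1) ^ ν) :=
            Finset.sum_le_card_nsmul _ _ _ (fun c _ => hterm c)
        _ = K * (n * K + 1) ^ ν := rfl
        _ ≤ ((n + 1) * K + 1) ^ (ν + 1) := by
            calc K * (n * K + 1) ^ ν ≤ ((n + 1) * K + 1) * ((n + 1) * K + 1) ^ ν :=
                  Nat.mul_le_mul hKy (Nat.pow_le_pow_left hxy ν)
              _ = ((n + 1) * K + 1) ^ (ν + 1) := (pow_succ' _ _).symm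
  
end Core
section Poly
variable {Sigma Q : Type*} [Fintype Sigma] [Fintype Q] [PartialOrder Sigma]
variable (M : NFA Sigma Q)

lemma poly_of_not_cond (hC : ¬ Cond M) :
    PolyAntichainGrowth (· < · : Sigma → Sigma → Prop) (M.accepts : Set (List Sigma)) := by
  intro L' hsub hfam
  classical
  set K := Fintype.card Sigma with hK
  set μ0 := msr M M.start with hμ0
  refine ⟨μ0, ?_⟩
  have hb : ∀ n : ℕ, countLen L' n ≤ (n * K + 1) ^ μ0 := by
    intro n
    apply core_bound M hC n μ0 M.start [] rfl le_rfl
    · exact fun w hw => hw.2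
    · intro w hw
      exact NFA.mem_accepts.mp (hsub hw.1)
    · exact hfam n
  have hev : ∀ᶠ n : ℕ in atTop,
      (countLen L' n : ℝ≥0∞) / (n : ℝ≥0∞) ^ μ0 ≤ ((K + 1 : ℕ) : ℝ≥0∞) ^ μ0 := by
    filter_upwards [eventually_ge_atTop 1] with n hn
    have h1 : countLen L' n ≤ (n * (K + 1)) ^ μ0 := by
      refine le_trans (hb n) (Nat.pow_le_pow_left ?_ μ0)
      nlinarith
    have h2 : (countLen L' n : ℝ≥0∞) ≤ ((n : ℝ≥0∞) * ((K + 1 : ℕ) : ℝ≥0∞)) ^ μ0 := by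
      calc (countLen L' n : ℝ≥0∞) ≤ (((n * (K + 1)) ^ μ0 : ℕ) : ℝ≥0∞) := by
            exact_mod_cast h1
        _ = ((n : ℝ≥0∞) * ((K + 1 : ℕ) : ℝ≥0∞)) ^ μ0 := by push_cast; ring
    rw [ENNReal.div_le_iff_le_mul]
    · calc (countLen L' n : ℝ≥0∞) ≤ ((n : ℝ≥0∞) * ((K + 1 : ℕ) : ℝ≥0∞)) ^ μ0 := h2
        _ = ((K + 1 : ℕ) : ℝ≥0∞) ^ μ0 * (n : ℝ≥0∞) ^ μ0 := by rw [mul_pow]; ring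
    · left
      apply pow_ne_zero
      simpa using (by omega : n ≠ 0)
    · exact Or.inl (ENNReal.pow_ne_top (ENNReal.natCast_ne_top n))
  have hle := Filter.limsup_le_of_le (by isBoundedDefault) hev
  refine lt_of_le_of_lt hle ?_
  exact ENNReal.pow_lt_top (ENNReal.natCast_lt_top _)

end Poly
section Expo
variable {Sigma Q : Type*} [Fintype Sigma] [Fintype Q] [PartialOrder Sigma]
variable (M : NFA Sigma Q)

lemma exp_of_cond (hc : Cond M) :
    ∃ L' : Set (List Sigma), L' ⊆ (M.accepts : Set (List Sigma)) ∧
      IsAntichainLang (· < · : Sigma → Sigma → Prop) L' ∧ ExpGrowth L' := by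
  classical
  obtain ⟨x, u, v, y, hiuv, hu, hv, q, hqF, hqy⟩ := hc
  set P := M.eval x with hP
  obtain ⟨p, u', v', a0, b0, hudec, hvdec, hab, hba, habne⟩ :=
    exists_diff_of_not_lexComp u v hiuv
  set blk : Bool → List Sigma := fun t => if t then u ++ v else v ++ u with hblk
  set B := u.length + v.length with hB
  have hB1 : 1 ≤ B := by rw [hB, hudec]; simp; omega
  have hblen : ∀ t, (blk t).length = B := by
    intro t; cases t <;> simp [hblk, hB, Nat.add_comm]
  have hloop : ∀ t, M.evalFrom P (blk t) = P := by
    intro t; cases t <;> simp [hblk, nfa_evalFrom_append, hu, hv]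
  -- key incomparability of two words agreeing up to differing blocks
  have key : ∀ (c s t : List Sigma), ¬ LexComp (· < · : Sigma → Sigma → Prop)
      (c ++ (blk true ++ s)) (c ++ (blk false ++ t)) := by
    intro c s t
    have h := not_lexComp_diff (r := (· < · : Sigma → Sigma → Prop))
      (fun a => lt_irrefl a) hab hba habne (c ++ p) (u' ++ (v ++ s)) (v' ++ (u ++ t))
    intro hcomp
    apply h
    have e1 : c ++ (blk true ++ s) = (c ++ p) ++ a0 :: (u' ++ (v ++ s)) := by
      simp [hblk, hudec, List.append_assoc]
    have e2 : c ++ (blk false ++ t) = (c ++ p) ++ b0 :: (v' ++ (u ++ t)) := by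
      simp [hblk, hvdec, List.append_assoc]
    rwa [e1, e2] at hcomp
  have key' : ∀ (c s t : List Sigma) (t1 t2 : Bool), t1 ≠ t2 →
      ¬ LexComp (· < · : Sigma → Sigma → Prop) (c ++ (blk t1 ++ s)) (c ++ (blk t2 ++ t)) := by
    intro c s t t1 t2 h12
    match t1, t2 with
    | true, true => exact absurd rfl h12
    | false, false => exact absurd rfl h12
    | true, false => exact key c s t
    | false, true => exact fun hcomp => key c t s hcomp.symm
  -- the words
  set bl : List Bool → List (List Sigma) :=
    fun ℓ => List.replicate ℓ.length (blk false) ++ blk true :: ℓ.map blk with hbl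
  set z : List Bool → List Sigma := fun ℓ => x ++ ((bl ℓ).flatten ++ y) with hz
  -- membership
  have hzmem : ∀ ℓ, z ℓ ∈ M.accepts := by
    intro ℓ
    rw [NFA.mem_accepts]
    refine ⟨q, hqF, ?_⟩
    have hblmem : ∀ w ∈ bl ℓ, M.evalFrom P w = P := by
      intro w hw
      rw [hbl] at hw
      simp only [List.mem_append, List.mem_cons, List.mem_map, List.mem_replicate] at hw
      rcases hw with ⟨-, rfl⟩ | rfl | ⟨t, -, rfl⟩ <;> exact hloop _
    show q ∈ M.evalFrom M.start (z ℓ)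
    rw [hz]
    show q ∈ M.evalFrom M.start (x ++ ((bl ℓ).flatten ++ y))
    rw [nfa_evalFrom_append, nfa_evalFrom_append]
    show q ∈ M.evalFrom (M.evalFrom (M.eval x) (bl ℓ).flatten) y
    rw [nfa_loop_flatten M (bl ℓ) hblmem]
    exact hqy
  -- lengths
  have hzlen : ∀ ℓ : List Bool, (z ℓ).length
      = (x.length + y.length) + B * (2 * ℓ.length + 1) := by
    intro ℓ
    rw [hz]
    show (x ++ ((bl ℓ).flatten ++ y)).length = _
    rw [hbl]
    simp only [List.length_append, List.length_flatten, List.map_append, List.map_replicate,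
      List.map_cons, List.map_map, List.sum_append, List.sum_replicate, List.sum_cons,
      smul_eq_mul, hblen]
    have hcomp : (List.length ∘ blk) = fun _ => B := funext hblen
    rw [hcomp, List.map_const', List.sum_replicate, smul_eq_mul]
    ring
  -- antichain property
  have hlt : ∀ ℓ ℓ' : List Bool, ℓ.length < ℓ'.length →
      ¬ LexComp (· < · : Sigma → Sigma → Prop) (z ℓ) (z ℓ') := by
    intro ℓ ℓ' hlen
    have hsplit : List.replicate ℓ'.length (blk false)
        = List.replicate ℓ.length (blk false) ++ blk false ::
            List.replicate (ℓ'.length - ℓ.length - 1) (blk false) := by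
      obtain ⟨m, hm, hm2⟩ : ∃ m, ℓ'.length = ℓ.length + (m + 1) ∧
          ℓ'.length - ℓ.length - 1 = m := ⟨ℓ'.length - ℓ.length - 1, by omega, rfl⟩
      rw [hm2, hm, List.replicate_add, List.replicate_succ]
    have e1 : z ℓ = (x ++ (List.replicate ℓ.length (blk false)).flatten) ++
        (blk true ++ ((ℓ.map blk).flatten ++ y)) := by
      rw [hz]
      show x ++ ((bl ℓ).flatten ++ y) = _
      rw [hbl]
      simp [List.flatten_append, List.append_assoc]
    have e2 : z ℓ' = (x ++ (List.replicate ℓ.length (blk false)).flatten) ++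
        (blk false ++ ((List.replicate (ℓ'.length - ℓ.length - 1) (blk false)
          ++ blk true :: ℓ'.map blk).flatten ++ y)) := by
      rw [hz]
      show x ++ ((bl ℓ').flatten ++ y) = _
      rw [hbl]
      show x ++ ((List.replicate ℓ'.length (blk false) ++ blk true :: ℓ'.map blk).flatten ++ y) = _
      rw [hsplit]
      simp [List.flatten_append, List.append_assoc]
    rw [e1, e2]
    exact key' _ _ _ true false (by simp)
  have heqcase : ∀ ℓ ℓ' : List Bool, ℓ.length = ℓ'.length → ℓ ≠ ℓ' →
      ¬ LexComp (· < · : Sigma → Sigma → Prop) (z ℓ) (z ℓ') := by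
    intro ℓ ℓ' hlen hne
    obtain ⟨com, r1, r2, t1, t2, hd1, hd2, h12⟩ := exists_firstDiff ℓ ℓ' hlen hne
    have e1 : z ℓ = (x ++ ((List.replicate ℓ.length (blk false)).flatten ++
        (blk true ++ (com.map blk).flatten))) ++ (blk t1 ++ ((r1.map blk).flatten ++ y)) := by
      rw [hz]
      show x ++ ((bl ℓ).flatten ++ y) = _
      rw [hbl]
      show x ++ ((List.replicate ℓ.length (blk false) ++ blk true :: ℓ.map blk).flatten ++ y) = _
      rw [hd1]
      have : ℓ.length = (com ++ t1 :: r1).length := by rw [← hd1]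
      rw [← this]
      simp [List.flatten_append, List.append_assoc]
    have e2 : z ℓ' = (x ++ ((List.replicate ℓ.length (blk false)).flatten ++
        (blk true ++ (com.map blk).flatten))) ++ (blk t2 ++ ((r2.map blk).flatten ++ y)) := by
      rw [hz]
      show x ++ ((bl ℓ').flatten ++ y) = _
      rw [hbl]
      show x ++ ((List.replicate ℓ'.length (blk false) ++ blk true :: ℓ'.map blk).flatten ++ y) = _
      rw [hd2]
      have : ℓ'.length = (com ++ t2 :: r2).length := by rw [← hd2]
      rw [← this, ← hlen]
      simp [List.flatten_append, List.append_assoc]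
    rw [e1, e2]
    exact key' _ _ _ t1 t2 h12
  have hanti : ∀ ℓ ℓ' : List Bool, ℓ ≠ ℓ' →
      ¬ LexComp (· < · : Sigma → Sigma → Prop) (z ℓ) (z ℓ') := by
    intro ℓ ℓ' hne
    rcases Nat.lt_trichotomy ℓ.length ℓ'.length with hl | hl | hl
    · exact hlt ℓ ℓ' hl
    · exact heqcase ℓ ℓ' hl hne
    · exact fun hcomp => hlt ℓ' ℓ hl hcomp.symm
  have hzinj : Function.Injective z := by
    intro ℓ ℓ' hzz
    by_contra hne
    apply hanti ℓ ℓ' hne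
    rw [hzz]
    exact lexComp_refl _
  -- counting
  set c0 := x.length + y.length with hc0
  have hcount : ∀ j : ℕ, 2 ^ j ≤ countLen (Set.range z) (c0 + B * (2 * j + 1)) := by
    intro j
    have hsubset : z '' {ℓ : List Bool | ℓ.length = j} ⊆
        {w ∈ Set.range z | w.length = c0 + B * (2 * j + 1)} := by
      rintro w ⟨ℓ, hℓ, rfl⟩
      refine ⟨Set.mem_range_self ℓ, ?_⟩
      rw [hzlen ℓ, hℓ]
    have hfin : {w ∈ Set.range z | w.length = c0 + B * (2 * j + 1)}.Finite :=
      Set.Finite.subset (List.finite_length_eq Sigma _) (fun w hw => hw.2)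
    have h1 : (z '' {ℓ : List Bool | ℓ.length = j}).ncard = 2 ^ j := by
      rw [Set.ncard_image_of_injective _ hzinj]
      have hset : {ℓ : List Bool | ℓ.length = j}
          = Set.range (fun f : Fin j → Bool => List.ofFn f) := by
        ext ℓ
        constructor
        · intro hl
          simp only [Set.mem_setOf_eq] at hl
          subst hl
          exact ⟨ℓ.get, List.ofFn_get ℓ⟩
        · rintro ⟨f, rfl⟩
          simp
      rw [hset, ← Set.image_univ, Set.ncard_image_of_injective _ List.ofFn_injective,
        Set.ncard_univ, Nat.card_eq_fintype_card]
      simp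
    calc (2:ℕ) ^ j = (z '' {ℓ : List Bool | ℓ.length = j}).ncard := h1.symm
      _ ≤ _ := Set.ncard_le_ncard hsubset hfin
  -- exponential growth
  have hBR : (0:ℝ) < (B:ℝ) := by exact_mod_cast (by omega : 0 < B)
  have hBpos : (0:ℝ) < 4 * B := mul_pos (by norm_num) hBR
  refine ⟨Set.range z, ?_, ?_, ⟨(4 * (B:ℝ))⁻¹, inv_pos.2 hBpos, ?_⟩⟩
  · rintro w ⟨ℓ, rfl⟩; exact hzmem ℓ
  · rintro w ⟨ℓ, rfl⟩ w' ⟨ℓ', rfl⟩ hne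
    exact hanti ℓ ℓ' (fun hh => hne (by rw [hh]))
  · -- ExpGrowthOrder
    have hfreq : ∃ᶠ n : ℕ in atTop, (1 : ℝ≥0∞) ≤
        (countLen (Set.range z) n : ℝ≥0∞) / (2 : ℝ≥0∞) ^ ((4 * (B:ℝ))⁻¹ * n) := by
      rw [Filter.frequently_atTop]
      intro N
      set j := max N (c0 + 1) with hj
      have hjN : N ≤ j := le_max_left _ _
      have hjc : c0 + 1 ≤ j := le_max_right _ _
      set n := c0 + B * (2 * j + 1) with hn
      have h2j : 2 * j + 1 ≤ B * (2 * j + 1) := Nat.le_mul_of_pos_left _ (by omega)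
      refine ⟨n, ?_, ?_⟩
      · have hjn : j ≤ n := by
          refine le_trans (le_trans (by omega : j ≤ 2 * j + 1) h2j) ?_
          rw [hn]
          exact Nat.le_add_left _ _
        exact le_trans hjN hjn
      · have hnle : n ≤ 4 * B * j := by
          have h4 : c0 + B ≤ 2 * B * (c0 + 1) := by
            have ha : c0 ≤ 2 * B * c0 := Nat.le_mul_of_pos_left _ (by omega)
            have hb2 : B ≤ 2 * B := by omega
            calc c0 + B ≤ 2 * B * c0 + 2 * B := Nat.add_le_add ha hb2
              _ = 2 * B * (c0 + 1) := by ring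
          have h3 : 2 * B * (c0 + 1) ≤ 2 * B * j := Nat.mul_le_mul_left _ hjc
          have h5 : c0 + B ≤ 2 * B * j := le_trans h4 h3
          calc n = (c0 + B) + 2 * B * j := by rw [hn]; ring
            _ ≤ 2 * B * j + 2 * B * j := Nat.add_le_add_right h5 _
            _ = 4 * B * j := by ring
        have hεn : (4 * (B:ℝ))⁻¹ * n ≤ (j : ℝ) := by
          rw [inv_mul_le_iff₀ hBpos]
          exact_mod_cast hnle
        have hpow : (2:ℝ≥0∞) ^ ((4 * (B:ℝ))⁻¹ * n) ≤ ((2 ^ j : ℕ) : ℝ≥0∞) := by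
          calc (2:ℝ≥0∞) ^ ((4 * (B:ℝ))⁻¹ * n) ≤ (2:ℝ≥0∞) ^ ((j:ℕ) : ℝ) :=
              ENNReal.rpow_le_rpow_of_exponent_le one_le_two hεn
            _ = ((2 ^ j : ℕ) : ℝ≥0∞) := by
                rw [ENNReal.rpow_natCast]
                push_cast
                ring
        have hne0 : (2:ℝ≥0∞) ^ ((4 * (B:ℝ))⁻¹ * n) ≠ 0 := by
          simp [ENNReal.rpow_eq_zero_iff]
        have hnetop : (2:ℝ≥0∞) ^ ((4 * (B:ℝ))⁻¹ * n) ≠ ⊤ := by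
          apply ENNReal.rpow_ne_top_of_nonneg
          · positivity
          · simp
        rw [ENNReal.le_div_iff_mul_le (Or.inl hne0) (Or.inl hnetop), one_mul]
        calc (2:ℝ≥0∞) ^ ((4 * (B:ℝ))⁻¹ * n) ≤ ((2 ^ j : ℕ) : ℝ≥0∞) := hpow
          _ ≤ (countLen (Set.range z) n : ℝ≥0∞) := by exact_mod_cast hcount j
    have hlim := Filter.le_limsup_of_frequently_le' hfreq
    exact lt_of_lt_of_le zero_lt_one hlim

end Expo


/-- If the language of an NFA over a partially ordered alphabet does not have polynomial
antichain growth, then it contains an antichain with exponential growth (and hence has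
exponential antichain growth). -/
theorem nfa_exp_antichain {Sigma Q : Type*} [Fintype Sigma] [Fintype Q]
    [PartialOrder Sigma] (step : Q → Sigma → Set Q) (q0 : Q) (F : Set Q)
    (h : ¬ PolyAntichainGrowth (· < ·) ((NFA.mk step {q0} F).accepts : Set (List Sigma))) :
    (∃ L' : Set (List Sigma), L' ⊆ ((NFA.mk step {q0} F).accepts : Set (List Sigma)) ∧
      IsAntichainLang (· < ·) L' ∧ ExpGrowth L') ∧
    ExpAntichainGrowth (· < ·) ((NFA.mk step {q0} F).accepts : Set (List Sigma)) := by
  have hcond : Cond (NFA.mk step {q0} F) := by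
    by_contra hC
    exact h (poly_of_not_cond _ hC)
  obtain ⟨L', hsub, hanti, hexp⟩ := exp_of_cond _ hcond
  refine ⟨⟨L', hsub, hanti, hexp⟩, L', hsub, ?_, hexp⟩
  intro n u hu v hv hne
  exact hanti u hu.1 v hv.1 hne
end

section
/- Let G be a context-free grammar over a partially ordered terminal alphabet Σ and let A be a bireachable nonterminal of G such that L_A(G) is not a chain. Then 𝓛(G) contains an antichain with exponential growth. -/
open Filter
open scoped ENNReal

/-- `L_A(G) = {w | A ⇒* wAu for some u}`. -/
def cfgL {T : Type} (G : ContextFreeGrammar T) (A : G.NT) : Set (List T) :=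
  {w | ∃ u : List T, G.Derives [Symbol.nonterminal A]
    (w.map Symbol.terminal ++ [Symbol.nonterminal A] ++ u.map Symbol.terminal)}

/-- `R_{A,w}(G) = {u | A ⇒* wAu}`. -/
def cfgR {T : Type} (G : ContextFreeGrammar T) (A : G.NT) (w : List T) : Set (List T) :=
  {u | G.Derives [Symbol.nonterminal A]
    (w.map Symbol.terminal ++ [Symbol.nonterminal A] ++ u.map Symbol.terminal)}

/-- A nonterminal `A` is bireachable if `S ⇒* uAu'` for some terminal words `u, u'` and
`A ⇒* v` for some terminal word `v`. -/
def CfgBireachable {T : Type} (G : ContextFreeGrammar T) (A : G.NT) : Prop :=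
  (∃ u u' : List T, G.Derives [Symbol.nonterminal G.initial]
    (u.map Symbol.terminal ++ [Symbol.nonterminal A] ++ u'.map Symbol.terminal)) ∧
  (∃ v : List T, G.Derives [Symbol.nonterminal A] (v.map Symbol.terminal))

namespace CfgAux

variable {α : Type*} {r : α → α → Prop}

lemma lexR_refl (u : List α) : LexR r u u := by
  induction u with
  | nil => exact .nil _
  | cons x t ih => exact .cons x ih

lemma lexComp_refl (u : List α) : LexComp r u u := Or.inl (lexR_refl u)

lemma not_lexComp_cons {x y : α} (hxy : ¬ r x y) (hyx : ¬ r y x) (hne : x ≠ y)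
    (a b : List α) : ¬ LexComp r (x :: a) (y :: b) := by
  rintro (h | h)
  · cases h with
    | head _ _ h' => exact hxy h'
    | cons _ h' => exact hne rfl
  · cases h with
    | head _ _ h' => exact hyx h'
    | cons _ h' => exact hne rfl

lemma not_lexComp_append (hirr : ∀ z : α, ¬ r z z) {u v : List α}
    (h : ¬ LexComp r u v) (d : List α) : ¬ LexComp r (d ++ u) (d ++ v) := by
  induction d with
  | nil => simpa using h
  | cons z d ih =>
    rintro (hc | hc)
    · cases hc with
      | head _ _ h' => exact hirr z h'
      | cons _ h' => exact ih (Or.inl h')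
    · cases hc with
      | head _ _ h' => exact hirr z h'
      | cons _ h' => exact ih (Or.inr h')

lemma exists_decomp {u v : List α} (h : ¬ LexComp r u v) :
    ∃ c x y a b, u = c ++ x :: a ∧ v = c ++ y :: b ∧ ¬ r x y ∧ ¬ r y x ∧ x ≠ y := by
  induction u generalizing v with
  | nil => exact absurd (Or.inl (.nil v)) h
  | cons x u' ih =>
    cases v with
    | nil => exact absurd (Or.inr (.nil _)) h
    | cons y v' =>
      by_cases hxy : x = y
      · subst hxy
        have h' : ¬ LexComp r u' v' := by
          rintro (h' | h')
          · exact h (Or.inl (.cons x h'))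
          · exact h (Or.inr (.cons x h'))
        obtain ⟨c, xx, yy, a, b, rfl, rfl, h1, h2, h3⟩ := ih h'
        exact ⟨x :: c, xx, yy, a, b, rfl, rfl, h1, h2, h3⟩
      · refine ⟨[], x, y, u', v', rfl, rfl, ?_, ?_, hxy⟩
        · exact fun hr => h (Or.inl (.head _ _ hr))
        · exact fun hr => h (Or.inr (.head _ _ hr))

inductive DiffAt : List Bool → List Bool → Prop
  | head {s t : Bool} (hst : s ≠ t) (σ τ : List Bool) : DiffAt (s :: σ) (t :: τ)
  | cons (s : Bool) {σ τ : List Bool} (h : DiffAt σ τ) : DiffAt (s :: σ) (s :: τ)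

lemma diffAt_of_ne : ∀ {σ τ : List Bool}, σ.length = τ.length → σ ≠ τ → DiffAt σ τ := by
  intro σ
  induction σ with
  | nil =>
    intro τ hlen hne
    cases τ with
    | nil => exact absurd rfl hne
    | cons t τ => simp at hlen
  | cons s σ ih =>
    intro τ hlen hne
    cases τ with
    | nil => simp at hlen
    | cons t τ =>
      by_cases hst : s = t
      · subst hst
        refine .cons s (ih (by simpa using hlen) ?_)
        intro hEq; exact hne (by rw [hEq])
      · exact .head hst _ _

lemma diffAt_marker {s t : List Bool} : ∀ {n n' : ℕ}, n < n' →
    DiffAt (List.replicate n true ++ false :: s) (List.replicate n' true ++ false :: t) := by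
  intro n
  induction n with
  | zero =>
    intro n' hn
    obtain ⟨k, rfl⟩ : ∃ k, n' = k + 1 := ⟨n' - 1, by omega⟩
    rw [List.replicate_succ]
    exact .head (by simp) _ _
  | succ n ih =>
    intro n' hn
    obtain ⟨k, rfl⟩ : ∃ k, n' = k + 1 := ⟨n' - 1, by omega⟩
    rw [List.replicate_succ, List.replicate_succ]
    exact .cons true (ih (by omega))

lemma blocks_incomp (hirr : ∀ z : α, ¬ r z z)
    (f : Bool → List α) (c : List α) (x y : α) (a b : List α)
    (hfa : f true = c ++ x :: a) (hfb : f false = c ++ y :: b)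
    (h1 : ¬ r x y) (h2 : ¬ r y x) (h3 : x ≠ y) :
    ∀ {σ τ : List Bool}, DiffAt σ τ → ∀ X Y : List α,
      ¬ LexComp r ((σ.map f).flatten ++ X) ((τ.map f).flatten ++ Y) := by
  intro σ τ hd
  induction hd with
  | @head s t hst σ' τ' =>
    intro X Y
    have hw : ∀ (u : Bool) (σ'' : List Bool) (Z : List α),
        ((u :: σ'').map f).flatten ++ Z = f u ++ (((σ''.map f).flatten) ++ Z) := by
      intro u σ'' Z; simp
    rw [hw, hw]
    cases s <;> cases t <;> try (exact absurd rfl hst)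
    · -- s = false, t = true
      rw [hfa, hfb]
      have := not_lexComp_cons h2 h1 (Ne.symm h3) (b ++ ((σ'.map f).flatten ++ X))
        (a ++ ((τ'.map f).flatten ++ Y))
      have := not_lexComp_append hirr this c
      simpa using this
    · -- s = true, t = false
      rw [hfa, hfb]
      have := not_lexComp_cons h1 h2 h3 (a ++ ((σ'.map f).flatten ++ X))
        (b ++ ((τ'.map f).flatten ++ Y))
      have := not_lexComp_append hirr this c
      simpa using this
  | @cons s σ' τ' hd' ih =>
    intro X Y
    have hw : ∀ (σ'' : List Bool) (Z : List α),
        ((s :: σ'').map f).flatten ++ Z = f s ++ (((σ''.map f).flatten) ++ Z) := by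
      intro σ'' Z; simp
    rw [hw, hw]
    exact not_lexComp_append hirr (ih X Y) (f s)

end CfgAux

namespace CfgAux2

lemma derives_mid {T : Type} {G : ContextFreeGrammar T} {A : G.NT}
    {Z : List (Symbol T G.NT)} (h : G.Derives [Symbol.nonterminal A] Z)
    (P Q : List (Symbol T G.NT)) :
    G.Derives (P ++ [Symbol.nonterminal A] ++ Q) (P ++ Z ++ Q) :=
  (h.append_left P).append_right Q

lemma derives_comp {T : Type} {G : ContextFreeGrammar T} {A : G.NT}
    {x y : List T} {Z : List (Symbol T G.NT)}
    (h1 : G.Derives [Symbol.nonterminal A]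
      (x.map Symbol.terminal ++ [Symbol.nonterminal A] ++ y.map Symbol.terminal))
    (h2 : G.Derives [Symbol.nonterminal A] Z) :
    G.Derives [Symbol.nonterminal A]
      (x.map Symbol.terminal ++ Z ++ y.map Symbol.terminal) :=
  h1.trans (derives_mid h2 _ _)

lemma derives_blocks {T : Type} {G : ContextFreeGrammar T} {A : G.NT}
    (f g : Bool → List T)
    (hfg : ∀ b, G.Derives [Symbol.nonterminal A]
      ((f b).map Symbol.terminal ++ [Symbol.nonterminal A] ++ (g b).map Symbol.terminal)) :
    ∀ σ : List Bool, G.Derives [Symbol.nonterminal A]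
      ((σ.map f).flatten.map Symbol.terminal ++ [Symbol.nonterminal A] ++
        ((σ.map g).reverse.flatten).map Symbol.terminal) := by
  intro σ
  induction σ with
  | nil => simpa using ContextFreeGrammar.Derives.refl ([Symbol.nonterminal A])
  | cons b σ ih =>
    have h := derives_comp (hfg b) ih
    simpa [List.append_assoc] using h

lemma len_flat {T : Type} (f : Bool → List T) (k : ℕ) (hf : ∀ b, (f b).length = k) :
    ∀ σ : List Bool, ((σ.map f).flatten).length = σ.length * k := by
  intro σ
  induction σ with
  | nil => simp
  | cons b σ ih => simp [ih, hf b, Nat.succ_mul, Nat.add_comm]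

lemma len_flat_rev {T : Type} (g : Bool → List T) (k : ℕ) (hg : ∀ b, (g b).length = k) :
    ∀ σ : List Bool, (((σ.map g).reverse).flatten).length = σ.length * k := by
  intro σ
  induction σ with
  | nil => simp
  | cons b σ ih => simp [ih, hg b, Nat.succ_mul]

end CfgAux2

lemma card_length_lists (n : ℕ) : Set.ncard {s : List Bool | s.length = n} = 2 ^ n := by
  rw [← Nat.card_coe_set_eq]
  have e : {s : List Bool | s.length = n} ≃ List.Vector Bool n :=
    ⟨fun l => ⟨l.1, l.2⟩, fun v => ⟨v.1, v.2⟩, fun _ => rfl, fun _ => rfl⟩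
  rw [Nat.card_congr e, Nat.card_eq_fintype_card, card_vector, Fintype.card_bool]

/-- If `L_A(G)` is not a chain for some bireachable nonterminal `A`, then `L(G)` contains
an antichain with exponential growth. -/
theorem cfg_LA_not_chain_exp_antichain {T : Type} [Fintype T] [PartialOrder T]
    (G : ContextFreeGrammar T) (A : G.NT) (hbi : CfgBireachable G A)
    (hnc : ¬ IsChainLang (· < ·) (cfgL G A)) :
    ∃ L' : Set (List T), L' ⊆ (G.language : Set (List T)) ∧
      IsAntichainLang (· < ·) L' ∧ ExpGrowth L' := by
  classical
  simp only [IsChainLang] at hnc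
  push_neg at hnc
  obtain ⟨w₁, hw₁, w₂, hw₂, hcomp⟩ := hnc
  obtain ⟨u₁, hd₁⟩ := hw₁
  obtain ⟨u₂, hd₂⟩ := hw₂
  obtain ⟨⟨p, q, hpq⟩, ⟨v, hv⟩⟩ := hbi
  obtain ⟨c, x, y, a0, b0, hW1, hW2, hxy, hyx, hneq⟩ := CfgAux.exists_decomp hcomp
  have hirr : ∀ z : T, ¬ z < z := fun z => lt_irrefl z
  set f : Bool → List T := fun bl => if bl then w₁ ++ w₂ else w₂ ++ w₁ with hf
  set g : Bool → List T := fun bl => if bl then u₂ ++ u₁ else u₁ ++ u₂ with hg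
  have hfg : ∀ bl, G.Derives [Symbol.nonterminal A]
      ((f bl).map Symbol.terminal ++ [Symbol.nonterminal A] ++ (g bl).map Symbol.terminal) := by
    intro bl
    cases bl
    · have h := CfgAux2.derives_comp hd₂ hd₁
      simp only [hf, hg, if_false, Bool.false_eq_true]
      simpa [List.append_assoc] using h
    · have h := CfgAux2.derives_comp hd₁ hd₂
      simp only [hf, hg, if_true]
      simpa [List.append_assoc] using h
  set word : List Bool → List T := fun σ =>
    p ++ ((σ.map f).flatten ++ (v ++ ((σ.map g).reverse.flatten ++ q))) with hword
  -- every `word σ` is in the language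
  have hmem : ∀ σ : List Bool, G.Derives [Symbol.nonterminal G.initial]
      ((word σ).map Symbol.terminal) := by
    intro σ
    have h1 := CfgAux2.derives_blocks f g hfg σ
    have h2 := hpq.trans (CfgAux2.derives_mid h1 (p.map Symbol.terminal) (q.map Symbol.terminal))
    have hEq1 : (p.map Symbol.terminal ++
        ((σ.map f).flatten.map Symbol.terminal ++ [Symbol.nonterminal A] ++
          ((σ.map g).reverse.flatten).map Symbol.terminal) ++ q.map Symbol.terminal :
          List (Symbol T G.NT)) =
        (p.map Symbol.terminal ++ (σ.map f).flatten.map Symbol.terminal) ++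
          [Symbol.nonterminal A] ++
          (((σ.map g).reverse.flatten).map Symbol.terminal ++ q.map Symbol.terminal) := by
      simp [List.append_assoc]
    rw [hEq1] at h2
    have h3 := h2.trans (CfgAux2.derives_mid hv
      (p.map Symbol.terminal ++ (σ.map f).flatten.map Symbol.terminal)
      (((σ.map g).reverse.flatten).map Symbol.terminal ++ q.map Symbol.terminal))
    have hEq2 : ((word σ).map Symbol.terminal : List (Symbol T G.NT)) =
        (p.map Symbol.terminal ++ (σ.map f).flatten.map Symbol.terminal) ++
          v.map Symbol.terminal ++
          (((σ.map g).reverse.flatten).map Symbol.terminal ++ q.map Symbol.terminal) := by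
      simp [hword, List.append_assoc]
    rw [hEq2]
    exact h3
  -- incomparability
  have hfa : f true = c ++ x :: (a0 ++ w₂) := by simp [hf, hW1]
  have hfb : f false = c ++ y :: (b0 ++ w₁) := by simp [hf, hW2]
  have hanti : ∀ σ τ : List Bool, CfgAux.DiffAt σ τ →
      ¬ LexComp (· < ·) (word σ) (word τ) := by
    intro σ τ hd
    have hblock := CfgAux.blocks_incomp hirr f c x y (a0 ++ w₂) (b0 ++ w₁) hfa hfb
      hxy hyx hneq hd (v ++ ((σ.map g).reverse.flatten ++ q))
      (v ++ ((τ.map g).reverse.flatten ++ q))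
    have h := CfgAux.not_lexComp_append hirr hblock p
    simpa [hword] using h
  -- marker words
  set marker : ℕ → List Bool → List Bool :=
    fun n s => List.replicate n true ++ false :: s with hmarker
  have hmlen : ∀ (n : ℕ) (s : List Bool), s.length = n → (marker n s).length = 2 * n + 1 := by
    intro n s hs
    simp only [hmarker, List.length_append, List.length_replicate, List.length_cons, hs]
    omega
  set K : ℕ := (w₁ ++ w₂).length + (u₂ ++ u₁).length with hK
  have hK1 : 0 < K := by
    simp only [hK, hW1, List.length_append, List.length_cons]
    omega
  have hflen : ∀ b, (f b).length = (w₁ ++ w₂).length := by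
    intro b; cases b <;> simp [hf] <;> omega
  have hglen : ∀ b, (g b).length = (u₂ ++ u₁).length := by
    intro b; cases b <;> simp [hg] <;> omega
  have hwlen : ∀ σ : List Bool,
      (word σ).length = (p.length + v.length + q.length) + σ.length * K := by
    intro σ
    simp only [hword, List.length_append,
      CfgAux2.len_flat f _ hflen σ, CfgAux2.len_flat_rev g _ hglen σ, hK]
    ring
  set c₀ : ℕ := p.length + v.length + q.length with hc₀
  set Nn : ℕ → ℕ := fun n => c₀ + (2 * n + 1) * K with hN
  have hmwlen : ∀ (n : ℕ) (s : List Bool), s.length = n → (word (marker n s)).length = Nn n := by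
    intro n s hs
    rw [hwlen, hmlen n s hs]
  have hNinj : ∀ n n', Nn n = Nn n' → n = n' := by
    intro n n' h
    simp only [hN] at h
    have h2 : (2 * n + 1) * K = (2 * n' + 1) * K := by omega
    have h3 : 2 * n + 1 = 2 * n' + 1 := Nat.eq_of_mul_eq_mul_right hK1 h2
    omega
  -- the antichain language
  refine ⟨{w : List T | ∃ (n : ℕ) (s : List Bool), s.length = n ∧ w = word (marker n s)},
    ?_, ?_, ?_⟩
  · rintro w ⟨n, s, hs, rfl⟩
    exact hmem _
  · rintro u ⟨n, s, hs, rfl⟩ u' ⟨n', t, ht, rfl⟩ hne'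
    rcases lt_trichotomy n n' with h | h | h
    · exact hanti _ _ (CfgAux.diffAt_marker h)
    · subst h
      have hst : s ≠ t := by
        rintro rfl
        exact hne' rfl
      have hd : CfgAux.DiffAt (marker n s) (marker n t) := by
        refine CfgAux.diffAt_of_ne (by simp [hmarker, hs, ht]) ?_
        intro hEq
        apply hst
        simp only [hmarker, List.append_cancel_left_eq, List.cons.injEq, true_and] at hEq
        exact hEq
      exact hanti _ _ hd
    · intro hc
      exact hanti _ _ (CfgAux.diffAt_marker h) (Or.symm hc)
  · -- exponential growth
    have hcount : ∀ n : ℕ, countLen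
        {w : List T | ∃ (n : ℕ) (s : List Bool), s.length = n ∧ w = word (marker n s)}
        (Nn n) = 2 ^ n := by
      intro n
      have hseteq : {w ∈ {w : List T | ∃ (n : ℕ) (s : List Bool),
            s.length = n ∧ w = word (marker n s)} | w.length = Nn n} =
          (fun s => word (marker n s)) '' {s : List Bool | s.length = n} := by
        ext w
        constructor
        · rintro ⟨⟨n', s, hs, rfl⟩, hlen⟩
          have : Nn n' = Nn n := by rw [← hmwlen n' s hs]; exact hlen
          have hnn : n' = n := hNinj _ _ this
          subst hnn
          exact ⟨s, hs, rfl⟩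
        · rintro ⟨s, hs, rfl⟩
          exact ⟨⟨n, s, hs, rfl⟩, hmwlen n s hs⟩
      have hinj : Set.InjOn (fun s => word (marker n s)) {s : List Bool | s.length = n} := by
        intro s hs t ht heq
        by_contra hst
        have hd : CfgAux.DiffAt (marker n s) (marker n t) := by
          refine CfgAux.diffAt_of_ne ?_ ?_
          · simp only [Set.mem_setOf_eq] at hs ht
            simp [hmarker, hs, ht]
          · intro hEq
            apply hst
            simp only [hmarker, List.append_cancel_left_eq, List.cons.injEq, true_and] at hEq
            exact hEq
        have heq' : word (marker n s) = word (marker n t) := heq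
        have hcmp : LexComp (· < ·) (word (marker n s)) (word (marker n t)) := by
          rw [heq']
          exact CfgAux.lexComp_refl _
        exact hanti _ _ hd hcmp
      unfold countLen
      rw [hseteq, Set.ncard_image_of_injOn hinj, card_length_lists]
    -- choose ε
    set ε : ℝ := 1 / (2 * (K : ℝ)) with hε
    have hKR : (0 : ℝ) < (K : ℝ) := by exact_mod_cast hK1
    have hεpos : 0 < ε := by
      rw [hε]; positivity
    refine ⟨ε, hεpos, ?_⟩
    unfold ExpGrowthOrder
    set C : ℝ≥0∞ := (2 : ℝ≥0∞) ^ (-(ε * (c₀ : ℝ) + 1 / 2)) with hC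
    have hexp : ∀ n : ℕ, ε * ((Nn n : ℕ) : ℝ) = (n : ℝ) + (ε * (c₀ : ℝ) + 1 / 2) := by
      intro n
      have hcast : ((Nn n : ℕ) : ℝ) = (c₀ : ℝ) + (2 * (n : ℝ) + 1) * (K : ℝ) := by
        simp only [hN]
        push_cast
        ring
      rw [hcast, hε]
      field_simp
      ring
    have hval : ∀ n : ℕ,
        ((countLen {w : List T | ∃ (n : ℕ) (s : List Bool), s.length = n ∧ w = word (marker n s)}
          (Nn n) : ℝ≥0∞) / (2 : ℝ≥0∞) ^ (ε * (Nn n : ℕ)) : ℝ≥0∞) = C := by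
      intro n
      rw [hcount n]
      have h2 : (((2 : ℕ) ^ n : ℕ) : ℝ≥0∞) = (2 : ℝ≥0∞) ^ ((n : ℕ) : ℝ) := by
        rw [ENNReal.rpow_natCast]
        push_cast
        rfl
      rw [h2, ← ENNReal.rpow_sub _ _ (by norm_num) (by norm_num)]
      rw [hC]
      congr 1
      rw [hexp n]
      ring
    have htend : Filter.Tendsto Nn Filter.atTop Filter.atTop := by
      apply Filter.tendsto_atTop_mono (f := fun n : ℕ => n) ?_ Filter.tendsto_id
      intro n
      have h1 : 2 * n + 1 ≤ (2 * n + 1) * K := Nat.le_mul_of_pos_right _ hK1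
      simp only [hN]
      omega
    have hfreq : ∃ᶠ k in Filter.atTop, C ≤
        ((countLen {w : List T | ∃ (n : ℕ) (s : List Bool), s.length = n ∧ w = word (marker n s)}
          k : ℝ≥0∞) / (2 : ℝ≥0∞) ^ (ε * k) : ℝ≥0∞) := by
      apply htend.frequently
      exact Filter.Frequently.of_forall (fun n => (hval n).ge)
    have hle := Filter.le_limsup_of_frequently_le' hfreq
    refine lt_of_lt_of_le ?_ hle
    rw [hC]
    exact ENNReal.rpow_pos (by norm_num) (by norm_num)
end
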